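/- arXiv:2509.01316 — 5 statements merged into one kernel-verified Lean document; each statement's English description precedes it below -/
import Mathlib

section
/- Suppose the nonnegative measurable kernel 𝒜 satisfies 𝒜(x,y;z)=0 for z>x and the sum-type bound 𝒜(x,y;z) ≤ A φ(z) for x+y<1 and 𝒜(x,y;z) ≤ A(x+y)φ(z) for x+y>1, where A ≥ 0 and φ is a nonnegative function in L¹((0,∞),(1+x)dx). Then every weak solution ζ of the continuous generalized exchange-driven growth equation with initial datum ζ^in ∈ L¹((0,∞),(1+x)dx) conserves mass: for all t > 0, ∫₀^∞ x ζ(t,x) dx = ∫₀^∞ x ζ^in(x) dx. -/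
open MeasureTheory Set Filter Topology

/-- The quantity `𝒜(x,y;z) ζ(s,x) ζ(s,y)` appearing in the weak formulation. -/
noncomputable def kernelB (A : ℝ → ℝ → ℝ → ℝ) (ζ : ℝ → ℝ → ℝ) (s x y z : ℝ) : ℝ :=
  A x y z * ζ s x * ζ s y

/-- Right-hand side of the weak formulation of the continuous generalized
exchange-driven growth (CGEDG) equation, tested against `ω`. -/
noncomputable def weakRHS (A : ℝ → ℝ → ℝ → ℝ) (ζ : ℝ → ℝ → ℝ) (ω : ℝ → ℝ) (t : ℝ) : ℝ :=
  ∫ s in (0:ℝ)..t, ∫ x in Ioi (0:ℝ), ∫ y in Ioi (0:ℝ), ∫ z in Ioc (0:ℝ) x,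
    (ω (y + z) + ω (x - z) - ω x - ω y) * kernelB A ζ s x y z

/-- `ζ` is a weak solution of the CGEDG equation with kernel `A` and initial datum `ζin`:
nonnegative, lying in `L^∞(0,T; L¹((0,∞),(1+x)dx))` for each `T > 0`, weakly continuous
in time with values in `L¹`, and satisfying the weak form of the equation against every
bounded measurable test function. -/
structure IsWeakSolution (A : ℝ → ℝ → ℝ → ℝ) (ζin : ℝ → ℝ) (ζ : ℝ → ℝ → ℝ) : Prop where
  nonneg : ∀ t, 0 ≤ t → ∀ x, 0 ≤ ζ t x
  mem : ∀ t, 0 ≤ t → IntegrableOn (fun x => (1 + x) * ζ t x) (Ioi 0)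
  bdd : ∀ T, 0 < T → ∃ C : ℝ, ∀ t ∈ Icc (0:ℝ) T, ∫ x in Ioi (0:ℝ), (1 + x) * ζ t x ≤ C
  weakCont : ∀ ω : ℝ → ℝ, Measurable ω → (∃ M, ∀ x, |ω x| ≤ M) →
      ContinuousOn (fun t => ∫ x in Ioi (0:ℝ), ω x * ζ t x) (Ici 0)
  weakForm : ∀ ω : ℝ → ℝ, Measurable ω → (∃ M, ∀ x, |ω x| ≤ M) → ∀ t, 0 ≤ t →
      ∫ x in Ioi (0:ℝ), ω x * (ζ t x - ζin x) = weakRHS A ζ ω t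

noncomputable def indK (K y : ℝ) : ℝ := if K < y then 1 else 0

lemma indK_eq (K : ℝ) : indK K = (Ioi K).indicator (fun _ => (1:ℝ)) :=
  funext fun y => by simp [indK, indicator, mem_Ioi]

lemma indK_meas (K : ℝ) : Measurable (indK K) :=
  indK_eq K ▸ measurable_const.indicator measurableSet_Ioi

lemma indK_nonneg (K y : ℝ) : 0 ≤ indK K y := by unfold indK; split_ifs <;> norm_num

lemma indK_le_one (K y : ℝ) : indK K y ≤ 1 := by unfold indK; split_ifs <;> norm_num

lemma cut_id {S u : ℝ} (h0 : 0 ≤ u) (huS : u ≤ S) : max 0 (min u S) = u := by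
  rw [min_eq_left huS, max_eq_right h0]

lemma cut_mono {S u v : ℝ} (huv : u ≤ v) : max 0 (min u S) ≤ max 0 (min v S) :=
  max_le_max le_rfl (min_le_min huv le_rfl)

lemma cut_lip {S u v : ℝ} (h0 : 0 ≤ u) (huv : u ≤ v) (hS : 0 ≤ S) :
    max 0 (min v S) - max 0 (min u S) ≤ v - u := by
  rw [max_eq_right (le_min h0 hS), max_eq_right (le_min (h0.trans huv) hS)]
  rcases le_total u S with h1 | h1 <;> rcases le_total v S with h2 | h2 <;>
    simp [min_eq_left, min_eq_right, h1, h2] <;> linarith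

lemma bracket_abs_le {S x y z : ℝ} (hS : 0 ≤ S) (hz : 0 < z) (hzx : z ≤ x) (hy : 0 ≤ y) :
    |max 0 (min (y + z) S) + max 0 (min (x - z) S) - max 0 (min x S) - max 0 (min y S)|
      ≤ z * (indK (S/2) x + indK (S/2) y) := by
  have hx0 : 0 ≤ x := hz.le.trans hzx
  by_cases hcase : x ≤ S/2 ∧ y ≤ S/2
  · obtain ⟨hx2, hy2⟩ := hcase
    rw [cut_id (by linarith) (by linarith), cut_id (by linarith) (by linarith),
      cut_id hx0 (by linarith), cut_id hy (by linarith)]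
    have h1 : ¬ S/2 < x := not_lt.2 hx2
    have h2 : ¬ S/2 < y := not_lt.2 hy2
    simp only [indK, if_neg h1, if_neg h2]
    have : y + z + (x - z) - x - y = 0 := by ring
    rw [this]
    simp
  · have hind : 1 ≤ indK (S/2) x + indK (S/2) y := by
      unfold indK
      split_ifs with h1 h2 h3
      · norm_num
      · norm_num
      · norm_num
      · exact absurd ⟨not_lt.1 h1, not_lt.1 h3⟩ hcase
    have ha1 : max 0 (min y S) ≤ max 0 (min (y + z) S) := cut_mono (by linarith)
    have ha2 : max 0 (min (y + z) S) - max 0 (min y S) ≤ z := by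
      have := cut_lip hy (by linarith : y ≤ y + z) hS; linarith
    have hb1 : max 0 (min (x - z) S) ≤ max 0 (min x S) := cut_mono (by linarith)
    have hb2 : max 0 (min x S) - max 0 (min (x - z) S) ≤ z := by
      have := cut_lip (by linarith : (0:ℝ) ≤ x - z) (by linarith : x - z ≤ x) hS; linarith
    have habs : |max 0 (min (y + z) S) + max 0 (min (x - z) S) - max 0 (min x S)
        - max 0 (min y S)| ≤ z := by
      rw [abs_le]; constructor <;> linarith
    calc _ ≤ z := habs
      _ ≤ z * (indK (S/2) x + indK (S/2) y) := by nlinarith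


lemma inner_bound {A : ℝ → ℝ → ℝ → ℝ} {φ : ℝ → ℝ} {c : ℝ} (hc : 0 ≤ c)
    (hA_nonneg : ∀ x y z, 0 ≤ A x y z)
    (hφ_nonneg : ∀ x, 0 ≤ φ x)
    (hφ_int : IntegrableOn (fun z => (1 + z) * φ z) (Ioi 0))
    (hsum₁ : ∀ x y z, 0 < x → 0 < y → 0 < z → x + y < 1 → A x y z ≤ c * φ z)
    (hsum₂ : ∀ x y z, 0 < x → 0 < y → 0 < z → 1 < x + y → A x y z ≤ c * (x + y) * φ z)
    {Z : ℝ → ℝ} (hZ0 : ∀ x, 0 ≤ Z x)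
    (hZint : IntegrableOn (fun x => (1 + x) * Z x) (Ioi 0))
    {S : ℝ} (hS : 0 ≤ S) :
    ‖∫ x in Ioi (0:ℝ), ∫ y in Ioi (0:ℝ), ∫ z in Ioc (0:ℝ) x,
        (max 0 (min (y + z) S) + max 0 (min (x - z) S) - max 0 (min x S) - max 0 (min y S))
          * (A x y z * Z x * Z y)‖
      ≤ 2 * c * (∫ z in Ioi (0:ℝ), (1 + z) * φ z) * (∫ x in Ioi (0:ℝ), (1 + x) * Z x)
          * (∫ y in Ioi (0:ℝ), indK (S/2) y * ((1 + y) * Z y)) := by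
  set Cφ : ℝ := ∫ z in Ioi (0:ℝ), (1 + z) * φ z with hCφ
  set P : ℝ := ∫ x in Ioi (0:ℝ), (1 + x) * Z x with hP
  set T : ℝ := ∫ y in Ioi (0:ℝ), indK (S/2) y * ((1 + y) * Z y) with hT
  have hCφ0 : 0 ≤ Cφ := setIntegral_nonneg measurableSet_Ioi fun z hz =>
    mul_nonneg (by simp only [mem_Ioi] at hz; linarith) (hφ_nonneg z)
  have hP0 : 0 ≤ P := setIntegral_nonneg measurableSet_Ioi fun x hx =>
    mul_nonneg (by simp only [mem_Ioi] at hx; linarith) (hZ0 x)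
  have hT_int : IntegrableOn (fun y => indK (S/2) y * ((1 + y) * Z y)) (Ioi 0) := by
    refine Integrable.mono' hZint
      (((indK_meas _).aestronglyMeasurable.restrict).mul hZint.aestronglyMeasurable) ?_
    filter_upwards [ae_restrict_mem measurableSet_Ioi] with y hy
    rw [Real.norm_eq_abs, abs_mul]
    have h0 : 0 ≤ (1 + y) * Z y := mul_nonneg (by simp only [mem_Ioi] at hy; linarith) (hZ0 y)
    rw [abs_of_nonneg (indK_nonneg _ _), abs_of_nonneg h0]
    nlinarith [indK_le_one (S/2) y, indK_nonneg (S/2) y]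
  -- z-level estimate
  have hzlev : ∀ x y : ℝ, 0 < x → 0 < y → x + y ≠ 1 →
      ‖∫ z in Ioc (0:ℝ) x,
          (max 0 (min (y + z) S) + max 0 (min (x - z) S) - max 0 (min x S) - max 0 (min y S))
            * (A x y z * Z x * Z y)‖
        ≤ (c * Cφ * ((1 + x) * Z x)) * ((indK (S/2) x + indK (S/2) y) * ((1 + y) * Z y)) := by
    intro x y hx hy hxy1
    have hAb : ∀ z, 0 < z → A x y z ≤ c * (1 + x + y) * φ z := by
      intro z hz0
      rcases lt_trichotomy (x + y) 1 with h | h | h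
      · have h2 := hsum₁ x y z hx hy hz0 h
        nlinarith [mul_nonneg (mul_nonneg hc (by linarith : (0:ℝ) ≤ x + y)) (hφ_nonneg z)]
      · exact absurd h hxy1
      · have h2 := hsum₂ x y z hx hy hz0 h
        nlinarith [mul_nonneg hc (hφ_nonneg z)]
    have hq0 : 0 ≤ c * ((1 + x) * Z x) * ((1 + y) * Z y) * (indK (S/2) x + indK (S/2) y) :=
      mul_nonneg (mul_nonneg (mul_nonneg hc (mul_nonneg (by linarith) (hZ0 x)))
        (mul_nonneg (by linarith) (hZ0 y)))
        (add_nonneg (indK_nonneg _ _) (indK_nonneg _ _))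
    have key : ∀ z : ℝ, 0 < z → z * (1 + x + y) ≤ (1 + z) * ((1 + x) * (1 + y)) := by
      intro z hz0
      nlinarith [mul_nonneg hx.le hy.le, mul_nonneg (mul_nonneg hz0.le hx.le) hy.le]
    refine le_trans (norm_integral_le_of_norm_le
      (g := fun z => (c * ((1 + x) * Z x) * ((1 + y) * Z y) * (indK (S/2) x + indK (S/2) y))
        * ((1 + z) * φ z)) ((hφ_int.mono_set Ioc_subset_Ioi_self).const_mul _) ?_) ?_
    · filter_upwards [ae_restrict_mem measurableSet_Ioc] with z hz
      obtain ⟨hz0, hzx⟩ := hz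
      rw [Real.norm_eq_abs, abs_mul]
      have hAZZ : 0 ≤ A x y z * Z x * Z y :=
        mul_nonneg (mul_nonneg (hA_nonneg x y z) (hZ0 x)) (hZ0 y)
      rw [abs_of_nonneg hAZZ]
      have h1 := bracket_abs_le hS hz0 hzx hy.le
      have h3 : A x y z * Z x * Z y ≤ (c * (1 + x + y) * φ z) * Z x * Z y :=
        mul_le_mul_of_nonneg_right (mul_le_mul_of_nonneg_right (hAb z hz0) (hZ0 x)) (hZ0 y)
      have e1 : |max 0 (min (y + z) S) + max 0 (min (x - z) S) - max 0 (min x S)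
            - max 0 (min y S)| * (A x y z * Z x * Z y)
          ≤ (z * (indK (S/2) x + indK (S/2) y)) * ((c * (1 + x + y) * φ z) * Z x * Z y) := by
        refine mul_le_mul h1 h3 hAZZ ?_
        exact mul_nonneg hz0.le (add_nonneg (indK_nonneg _ _) (indK_nonneg _ _))
      refine e1.trans ?_
      have e2 : (z * (indK (S/2) x + indK (S/2) y)) * ((c * (1 + x + y) * φ z) * Z x * Z y)
          = (c * (indK (S/2) x + indK (S/2) y) * φ z * (Z x * Z y)) * (z * (1 + x + y)) := by
        ring
      have e3 : (c * ((1 + x) * Z x) * ((1 + y) * Z y) * (indK (S/2) x + indK (S/2) y))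
            * ((1 + z) * φ z)
          = (c * (indK (S/2) x + indK (S/2) y) * φ z * (Z x * Z y))
            * ((1 + z) * ((1 + x) * (1 + y))) := by ring
      rw [e2, e3]
      refine mul_le_mul_of_nonneg_left (key z hz0) ?_
      exact mul_nonneg (mul_nonneg (mul_nonneg hc
        (add_nonneg (indK_nonneg _ _) (indK_nonneg _ _))) (hφ_nonneg z))
        (mul_nonneg (hZ0 x) (hZ0 y))
    · rw [integral_const_mul]
      have hle : ∫ z in Ioc (0:ℝ) x, (1 + z) * φ z ≤ Cφ := by
        refine setIntegral_mono_set hφ_int ?_ (HasSubset.Subset.eventuallyLE Ioc_subset_Ioi_self)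
        filter_upwards [ae_restrict_mem measurableSet_Ioi] with z hz
        exact mul_nonneg (by simp only [mem_Ioi] at hz; linarith) (hφ_nonneg z)
      calc (c * ((1 + x) * Z x) * ((1 + y) * Z y) * (indK (S/2) x + indK (S/2) y))
            * ∫ z in Ioc (0:ℝ) x, (1 + z) * φ z
          ≤ (c * ((1 + x) * Z x) * ((1 + y) * Z y) * (indK (S/2) x + indK (S/2) y)) * Cφ :=
            mul_le_mul_of_nonneg_left hle hq0
        _ = (c * Cφ * ((1 + x) * Z x)) * ((indK (S/2) x + indK (S/2) y) * ((1 + y) * Z y)) := by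
            ring
  -- y-level estimate
  have hsumint : ∀ x : ℝ, IntegrableOn
      (fun y => (indK (S/2) x + indK (S/2) y) * ((1 + y) * Z y)) (Ioi 0) := by
    intro x
    have : (fun y => (indK (S/2) x + indK (S/2) y) * ((1 + y) * Z y))
        = fun y => indK (S/2) x * ((1 + y) * Z y) + indK (S/2) y * ((1 + y) * Z y) := by
      funext y; ring
    rw [this]
    exact (hZint.const_mul _).add hT_int
  have hylev : ∀ x : ℝ, 0 < x →
      ‖∫ y in Ioi (0:ℝ), ∫ z in Ioc (0:ℝ) x,
          (max 0 (min (y + z) S) + max 0 (min (x - z) S) - max 0 (min x S) - max 0 (min y S))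
            * (A x y z * Z x * Z y)‖
        ≤ (c * Cφ * P) * (indK (S/2) x * ((1 + x) * Z x)) + (c * Cφ * T) * ((1 + x) * Z x) := by
    intro x hx
    have hnull : ∀ᵐ y ∂(volume.restrict (Ioi (0:ℝ))), y ≠ 1 - x := by
      refine ae_restrict_of_ae ?_
      refine ae_iff.2 ?_
      have : {y : ℝ | ¬ y ≠ 1 - x} = {1 - x} := by ext y; simp
      rw [this]
      exact measure_singleton _
    refine le_trans (norm_integral_le_of_norm_le
      (g := fun y => (c * Cφ * ((1 + x) * Z x))
        * ((indK (S/2) x + indK (S/2) y) * ((1 + y) * Z y)))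
      ((hsumint x).const_mul _) ?_) ?_
    · filter_upwards [hnull, ae_restrict_mem measurableSet_Ioi] with y hy1 hy2
      refine (hzlev x y hx hy2 ?_).trans (le_of_eq (by ring))
      intro h; exact hy1 (by linarith)
    · rw [integral_const_mul]
      have e : ∫ y in Ioi (0:ℝ), (indK (S/2) x + indK (S/2) y) * ((1 + y) * Z y)
          = indK (S/2) x * P + T := by
        have : (fun y => (indK (S/2) x + indK (S/2) y) * ((1 + y) * Z y))
            = fun y => indK (S/2) x * ((1 + y) * Z y) + indK (S/2) y * ((1 + y) * Z y) := by
          funext y; ring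
        rw [this, integral_add (hZint.const_mul _) hT_int, integral_const_mul]
      rw [e]
      refine le_of_eq (by ring)
  -- x-level
  refine le_trans (norm_integral_le_of_norm_le
    (g := fun x => (c * Cφ * P) * (indK (S/2) x * ((1 + x) * Z x)) + (c * Cφ * T) * ((1 + x) * Z x))
    ((hT_int.const_mul _).add (hZint.const_mul _)) ?_) ?_
  · filter_upwards [ae_restrict_mem measurableSet_Ioi] with x hx
    exact hylev x hx
  · rw [integral_add (hT_int.const_mul _) (hZint.const_mul _), integral_const_mul,
      integral_const_mul]
    refine le_of_eq (by ring)


noncomputable def cutoff (n : ℕ) (x : ℝ) : ℝ := max 0 (min x (n:ℝ))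

lemma cutoff_meas (n : ℕ) : Measurable (cutoff n) :=
  measurable_const.max (measurable_id.min measurable_const)

lemma cutoff_nonneg (n : ℕ) (x : ℝ) : 0 ≤ cutoff n x := le_max_left _ _

lemma cutoff_abs_le (n : ℕ) (x : ℝ) : |cutoff n x| ≤ (n:ℝ) := by
  rw [abs_of_nonneg (cutoff_nonneg n x)]
  exact max_le (n.cast_nonneg) (min_le_right _ _)

lemma cutoff_le_self (n : ℕ) {x : ℝ} (hx : 0 ≤ x) : cutoff n x ≤ x :=
  max_le hx (min_le_left _ _)

lemma aesm_of_weight {g : ℝ → ℝ} (h : IntegrableOn (fun x => (1 + x) * g x) (Ioi 0)) :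
    AEStronglyMeasurable g (volume.restrict (Ioi 0)) := by
  have h1 : AEStronglyMeasurable (fun x => (1 + x)⁻¹ * ((1 + x) * g x))
      (volume.restrict (Ioi 0)) :=
    ((measurable_const.add measurable_id).inv).aestronglyMeasurable.mul h.aestronglyMeasurable
  refine h1.congr ?_
  filter_upwards [ae_restrict_mem measurableSet_Ioi] with x hx
  have hne : (1:ℝ) + x ≠ 0 := by simp only [mem_Ioi] at hx; linarith
  field_simp

/-- **Conservation of mass.** Under the sum-type bound on the kernel, every weak solution
of the CGEDG equation satisfies `∫₀^∞ x ζ(t,x) dx = ∫₀^∞ x ζin(x) dx` for all `t > 0`. -/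
theorem conservation_of_mass
    (A : ℝ → ℝ → ℝ → ℝ) (φ ζin : ℝ → ℝ) (c : ℝ) (hc : 0 ≤ c)
    (hA_meas : Measurable (fun p : ℝ × ℝ × ℝ => A p.1 p.2.1 p.2.2))
    (hA_nonneg : ∀ x y z, 0 ≤ A x y z)
    (hφ_nonneg : ∀ x, 0 ≤ φ x)
    (hφ_int : IntegrableOn (fun x => (1 + x) * φ x) (Ioi 0))
    (hζin_nonneg : ∀ x, 0 ≤ ζin x)
    (hζin_int : IntegrableOn (fun x => (1 + x) * ζin x) (Ioi 0))
    (hphys : ∀ x y z, x < z → A x y z = 0)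
    (hsum₁ : ∀ x y z, 0 < x → 0 < y → 0 < z → x + y < 1 → A x y z ≤ c * φ z)
    (hsum₂ : ∀ x y z, 0 < x → 0 < y → 0 < z → 1 < x + y → A x y z ≤ c * (x + y) * φ z) :
    ∀ ζ : ℝ → ℝ → ℝ, IsWeakSolution A ζin ζ → ∀ t, 0 < t →
      ∫ x in Ioi (0:ℝ), x * ζ t x = ∫ x in Ioi (0:ℝ), x * ζin x := by
  classical
  intro ζ hζ t ht
  have ht0 : (0:ℝ) ≤ t := ht.le
  obtain ⟨C, hC⟩ := hζ.bdd t ht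
  set Cφ : ℝ := ∫ z in Ioi (0:ℝ), (1 + z) * φ z with hCφdef
  have hCφ0 : 0 ≤ Cφ := setIntegral_nonneg measurableSet_Ioi fun z hz =>
    mul_nonneg (by simp only [mem_Ioi] at hz; linarith) (hφ_nonneg z)
  set P : ℝ → ℝ := fun s => ∫ x in Ioi (0:ℝ), (1 + x) * ζ s x with hPdef
  set Ttail : ℝ → ℝ → ℝ := fun K s => ∫ y in Ioi (0:ℝ), indK K y * ((1 + y) * ζ s y) with hTdef
  have hP0 : ∀ s, 0 ≤ s → 0 ≤ P s := fun s hs =>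
    setIntegral_nonneg measurableSet_Ioi fun x hx =>
      mul_nonneg (by simp only [mem_Ioi] at hx; linarith) (hζ.nonneg s hs x)
  have hC0 : 0 ≤ C := (hP0 t ht0).trans (hC t ⟨ht0, le_rfl⟩)
  have hTint : ∀ K s, 0 ≤ s →
      IntegrableOn (fun y => indK K y * ((1 + y) * ζ s y)) (Ioi 0) := by
    intro K s hs
    refine Integrable.mono' (hζ.mem s hs)
      ((indK_meas K).aestronglyMeasurable.mul (hζ.mem s hs).aestronglyMeasurable) ?_
    filter_upwards [ae_restrict_mem measurableSet_Ioi] with y hy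
    have h0 : 0 ≤ (1 + y) * ζ s y :=
      mul_nonneg (by simp only [mem_Ioi] at hy; linarith) (hζ.nonneg s hs y)
    rw [Real.norm_eq_abs, abs_mul, abs_of_nonneg (indK_nonneg _ _), abs_of_nonneg h0]
    nlinarith [indK_le_one K y, indK_nonneg K y]
  have hT0 : ∀ K s, 0 ≤ s → 0 ≤ Ttail K s := fun K s hs =>
    setIntegral_nonneg measurableSet_Ioi fun y hy =>
      mul_nonneg (indK_nonneg _ _)
        (mul_nonneg (by simp only [mem_Ioi] at hy; linarith) (hζ.nonneg s hs y))
  have hTP : ∀ K s, 0 ≤ s → Ttail K s ≤ P s := by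
    intro K s hs
    refine setIntegral_mono_on (hTint K s hs) (hζ.mem s hs) measurableSet_Ioi ?_
    intro y hy
    have h0 : 0 ≤ (1 + y) * ζ s y :=
      mul_nonneg (by simp only [mem_Ioi] at hy; linarith) (hζ.nonneg s hs y)
    nlinarith [indK_le_one K y, indK_nonneg K y]
  -- inner integrand in time
  set inn : ℕ → ℝ → ℝ := fun n s => ∫ x in Ioi (0:ℝ), ∫ y in Ioi (0:ℝ), ∫ z in Ioc (0:ℝ) x,
    (cutoff n (y + z) + cutoff n (x - z) - cutoff n x - cutoff n y) * kernelB A ζ s x y z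
    with hinndef
  have hRHS : ∀ n : ℕ, weakRHS A ζ (cutoff n) t = ∫ s in (0:ℝ)..t, inn n s := fun n => rfl
  have hinn_bd : ∀ (n : ℕ) (s : ℝ), 0 ≤ s →
      ‖inn n s‖ ≤ 2 * c * Cφ * P s * Ttail ((n:ℝ)/2) s := by
    intro n s hs
    have h := inner_bound hc hA_nonneg hφ_nonneg hφ_int hsum₁ hsum₂
      (hζ.nonneg s hs) (hζ.mem s hs) (S := (n:ℝ)) n.cast_nonneg
    simpa only [hinndef, hPdef, hTdef, hCφdef, cutoff, kernelB, mul_assoc] using h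
  -- tail tends to zero pointwise in s
  have hTtend : ∀ s, 0 ≤ s →
      Tendsto (fun n : ℕ => Ttail ((n:ℝ)/2) s) atTop (𝓝 0) := by
    intro s hs
    have h := tendsto_integral_of_dominated_convergence
      (μ := volume.restrict (Ioi (0:ℝ)))
      (F := fun (n : ℕ) y => indK ((n:ℝ)/2) y * ((1 + y) * ζ s y))
      (f := fun _ => (0:ℝ)) (bound := fun y => (1 + y) * ζ s y)
      (fun n => (indK_meas _).aestronglyMeasurable.mul (hζ.mem s hs).aestronglyMeasurable)
      (hζ.mem s hs)
      (by
        intro n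
        filter_upwards [ae_restrict_mem measurableSet_Ioi] with y hy
        have h0 : 0 ≤ (1 + y) * ζ s y :=
          mul_nonneg (by simp only [mem_Ioi] at hy; linarith) (hζ.nonneg s hs y)
        rw [Real.norm_eq_abs, abs_mul, abs_of_nonneg (indK_nonneg _ _), abs_of_nonneg h0]
        nlinarith [indK_le_one ((n:ℝ)/2) y, indK_nonneg ((n:ℝ)/2) y])
      (by
        refine Eventually.of_forall fun y => ?_
        obtain ⟨N, hN⟩ := exists_nat_ge (2 * y)
        refine Tendsto.congr' ?_ tendsto_const_nhds
        filter_upwards [eventually_ge_atTop N] with n hn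
        have : ¬ ((n:ℝ)/2 < y) := by
          push_neg
          have : (N:ℝ) ≤ (n:ℝ) := Nat.cast_le.2 hn
          linarith
        simp [indK, this])
    simpa using h
  -- the tested quantities
  set L : ℕ → ℝ := fun n => ∫ x in Ioi (0:ℝ), cutoff n x * (ζ t x - ζin x) with hLdef
  have hLW : ∀ n : ℕ, L n = weakRHS A ζ (cutoff n) t := fun n =>
    hζ.weakForm (cutoff n) (cutoff_meas n) ⟨n, cutoff_abs_le n⟩ t ht0
  -- dominated-convergence dichotomy bound
  set f : ℕ → ℝ → ℝ := fun n s =>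
    if IntervalIntegrable (inn n) volume 0 t then ‖inn n s‖ else 0 with hfdef
  have hLb : ∀ n : ℕ, ‖L n‖ ≤ ∫ s in Ioc (0:ℝ) t, f n s := by
    intro n
    rw [hLW n, hRHS n]
    by_cases hgood : IntervalIntegrable (inn n) volume 0 t
    · rw [intervalIntegral.integral_of_le ht0]
      simp only [hfdef, if_pos hgood]
      exact norm_integral_le_integral_norm _
    · rw [intervalIntegral.integral_undef hgood]
      simp [hfdef, if_neg hgood]
  have hbtend : Tendsto (fun n : ℕ => ∫ s in Ioc (0:ℝ) t, f n s) atTop (𝓝 0) := by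
    have h := tendsto_integral_of_dominated_convergence
      (μ := volume.restrict (Ioc (0:ℝ) t)) (F := f) (f := fun _ => (0:ℝ))
      (bound := fun _ => 2 * c * Cφ * C * C)
      (by
        intro n
        by_cases hgood : IntervalIntegrable (inn n) volume 0 t
        · simp only [hfdef, if_pos hgood]
          exact (hgood.1.norm).aestronglyMeasurable
        · simp only [hfdef, if_neg hgood]
          exact aestronglyMeasurable_const)
      (integrableOn_const measure_Ioc_lt_top.ne)
      (by
        intro n
        filter_upwards [ae_restrict_mem measurableSet_Ioc] with s hs
        obtain ⟨hs0, hst⟩ := hs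
        have hfn : f n s ≤ ‖inn n s‖ := by
          simp only [hfdef]
          split_ifs
          · exact le_rfl
          · exact norm_nonneg _
        have hfn0 : 0 ≤ f n s := by
          simp only [hfdef]; split_ifs
          · exact norm_nonneg _
          · exact le_rfl
        rw [Real.norm_eq_abs, abs_of_nonneg hfn0]
        have h1 := hinn_bd n s hs0.le
        have hPle : P s ≤ C := hC s ⟨hs0.le, hst⟩
        have hTle : Ttail ((n:ℝ)/2) s ≤ C := (hTP _ s hs0.le).trans hPle
        have h2cCφ : 0 ≤ 2 * c * Cφ := by positivity
        calc f n s ≤ ‖inn n s‖ := hfn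
          _ ≤ 2 * c * Cφ * P s * Ttail ((n:ℝ)/2) s := h1
          _ ≤ 2 * c * Cφ * C * Ttail ((n:ℝ)/2) s :=
              mul_le_mul_of_nonneg_right (mul_le_mul_of_nonneg_left hPle h2cCφ)
                (hT0 _ s hs0.le)
          _ ≤ 2 * c * Cφ * C * C :=
              mul_le_mul_of_nonneg_left hTle (by positivity))
      (by
        filter_upwards [ae_restrict_mem measurableSet_Ioc] with s hs
        obtain ⟨hs0, hst⟩ := hs
        have hPle : P s ≤ C := hC s ⟨hs0.le, hst⟩
        refine squeeze_zero (g := fun n : ℕ => 2 * c * Cφ * C * Ttail ((n:ℝ)/2) s)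
          (fun n => ?_) (fun n => ?_) ?_
        · simp only [hfdef]; split_ifs
          · exact norm_nonneg _
          · exact le_rfl
        · have hfn : f n s ≤ ‖inn n s‖ := by
            simp only [hfdef]; split_ifs
            · exact le_rfl
            · exact norm_nonneg _
          have h2cCφ : 0 ≤ 2 * c * Cφ := by positivity
          calc f n s ≤ ‖inn n s‖ := hfn
            _ ≤ 2 * c * Cφ * P s * Ttail ((n:ℝ)/2) s := hinn_bd n s hs0.le
            _ ≤ 2 * c * Cφ * C * Ttail ((n:ℝ)/2) s :=
                mul_le_mul_of_nonneg_right (mul_le_mul_of_nonneg_left hPle h2cCφ)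
                  (hT0 _ s hs0.le)
        · have := (hTtend s hs0.le).const_mul (2 * c * Cφ * C)
          simpa using this)
    simpa using h
  have hL0 : Tendsto L atTop (𝓝 0) := squeeze_zero_norm hLb hbtend
  -- convergence of the tested quantity to the first-moment difference
  have haesm_t : AEStronglyMeasurable (ζ t) (volume.restrict (Ioi 0)) :=
    aesm_of_weight (hζ.mem t ht0)
  have haesm_in : AEStronglyMeasurable ζin (volume.restrict (Ioi 0)) :=
    aesm_of_weight hζin_int
  have hint_t : IntegrableOn (fun x => x * ζ t x) (Ioi 0) := by
    refine Integrable.mono' (hζ.mem t ht0) (aestronglyMeasurable_id.mul haesm_t) ?_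
    filter_upwards [ae_restrict_mem measurableSet_Ioi] with x hx
    simp only [mem_Ioi] at hx
    rw [Real.norm_eq_abs, abs_mul, abs_of_pos hx, abs_of_nonneg (hζ.nonneg t ht0 x)]
    nlinarith [hζ.nonneg t ht0 x]
  have hint_in : IntegrableOn (fun x => x * ζin x) (Ioi 0) := by
    refine Integrable.mono' hζin_int (aestronglyMeasurable_id.mul haesm_in) ?_
    filter_upwards [ae_restrict_mem measurableSet_Ioi] with x hx
    simp only [mem_Ioi] at hx
    rw [Real.norm_eq_abs, abs_mul, abs_of_pos hx, abs_of_nonneg (hζin_nonneg x)]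
    nlinarith [hζin_nonneg x]
  have hLtend : Tendsto L atTop (𝓝 (∫ x in Ioi (0:ℝ), x * (ζ t x - ζin x))) := by
    have h := tendsto_integral_of_dominated_convergence
      (μ := volume.restrict (Ioi (0:ℝ)))
      (F := fun (n : ℕ) x => cutoff n x * (ζ t x - ζin x))
      (f := fun x => x * (ζ t x - ζin x))
      (bound := fun x => (1 + x) * ζ t x + (1 + x) * ζin x)
      (fun n => (cutoff_meas n).aestronglyMeasurable.mul (haesm_t.sub haesm_in))
      ((hζ.mem t ht0).add hζin_int)
      (by
        intro n
        filter_upwards [ae_restrict_mem measurableSet_Ioi] with x hx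
        simp only [mem_Ioi] at hx
        rw [Real.norm_eq_abs, abs_mul, abs_of_nonneg (cutoff_nonneg n x)]
        have h1 : cutoff n x ≤ x := cutoff_le_self n hx.le
        have h2 : |ζ t x - ζin x| ≤ ζ t x + ζin x := by
          rw [abs_le]
          constructor <;> nlinarith [hζ.nonneg t ht0 x, hζin_nonneg x]
        nlinarith [cutoff_nonneg n x, abs_nonneg (ζ t x - ζin x),
          hζ.nonneg t ht0 x, hζin_nonneg x]
      )
      (by
        filter_upwards [ae_restrict_mem measurableSet_Ioi] with x hx
        simp only [mem_Ioi] at hx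
        refine Tendsto.mul_const _ ?_
        obtain ⟨N, hN⟩ := exists_nat_ge x
        refine Tendsto.congr' ?_ tendsto_const_nhds
        filter_upwards [eventually_ge_atTop N] with n hn
        have hxn : x ≤ (n:ℝ) := hN.trans (Nat.cast_le.2 hn)
        rw [cutoff, cut_id hx.le hxn])
    exact h
  have hdiff : ∫ x in Ioi (0:ℝ), x * (ζ t x - ζin x) = 0 := tendsto_nhds_unique hLtend hL0
  have hsub : ∫ x in Ioi (0:ℝ), x * (ζ t x - ζin x)
      = (∫ x in Ioi (0:ℝ), x * ζ t x) - ∫ x in Ioi (0:ℝ), x * ζin x := by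
    rw [← integral_sub hint_t hint_in]
    congr 1
    funext x
    ring
  rw [hsub] at hdiff
  linarith
end

section
/- Let σ : [0,∞) → [0,∞) be a C² function that is nonnegative, convex and nondecreasing, with σ(0) = σ'(0) = 0, and such that σ' is concave. Then for all x, y > 0: x σ'(y) ≤ σ(x) + σ(y). -/
open Set

/-- For a nonnegative, convex, nondecreasing `C²` function `σ` on `[0,∞)` with
`σ(0) = σ'(0) = 0` and concave derivative `σ'`, one has `x σ'(y) ≤ σ(x) + σ(y)`
for all `x, y > 0`. -/
theorem convex_fn_ineq_two (σ σ' : ℝ → ℝ)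
    (hC2 : ContDiffOn ℝ 2 σ (Ici 0))
    (hderiv : ∀ x ∈ Ici (0:ℝ), HasDerivWithinAt σ (σ' x) (Ici 0) x)
    (hnonneg : ∀ x ∈ Ici (0:ℝ), 0 ≤ σ x)
    (hconv : ConvexOn ℝ (Ici 0) σ)
    (hmono : MonotoneOn σ (Ici 0))
    (h0 : σ 0 = 0) (h0' : σ' 0 = 0)
    (hconc : ConcaveOn ℝ (Ici 0) σ') :
    ∀ x y : ℝ, 0 < x → 0 < y → x * σ' y ≤ σ x + σ y := by
  -- tangent line inequality
  have tangent : ∀ a ∈ Ici (0:ℝ), ∀ b ∈ Ici (0:ℝ), σ a + σ' a * (b - a) ≤ σ b := by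
    intro a ha b hb
    rcases lt_trichotomy a b with h | rfl | h
    · have hs := hconv.le_slope_of_hasDerivWithinAt ha hb h (hderiv a ha)
      rw [slope_def_field] at hs
      have hba : (0:ℝ) < b - a := by linarith
      have := (le_div_iff₀ hba).mp hs
      linarith
    · simp
    · have hs := hconv.slope_le_of_hasDerivWithinAt hb ha h (hderiv a ha)
      rw [slope_def_field] at hs
      have hab : (0:ℝ) < a - b := by linarith
      have := (div_le_iff₀ hab).mp hs
      linarith
  -- σ' is monotone on Ici 0
  have hmono' : MonotoneOn σ' (Ici 0) := by
    intro a ha b hb hab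
    rcases eq_or_lt_of_le hab with rfl | h
    · exact le_rfl
    · have h1 := tangent a ha b hb
      have h2 := tangent b hb a ha
      nlinarith
  intro x y hx hy
  have hxm : x ∈ Ici (0:ℝ) := le_of_lt hx
  have hym : y ∈ Ici (0:ℝ) := le_of_lt hy
  -- interval integrability of σ'
  have hint : IntervalIntegrable σ' MeasureTheory.volume 0 y := by
    apply MonotoneOn.intervalIntegrable
    apply hmono'.mono
    rw [uIcc_of_le hy.le]
    exact Icc_subset_Ici_self
  -- FTC
  have hftc : ∫ t in (0:ℝ)..y, σ' t = σ y - σ 0 := by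
    apply intervalIntegral.integral_eq_sub_of_hasDeriv_right_of_le hy.le
      (hC2.continuousOn.mono Icc_subset_Ici_self)
      (fun t ht => ((hderiv t (le_of_lt ht.1)).hasDerivAt
        (Ici_mem_nhds ht.1)).hasDerivWithinAt) hint
  -- pointwise lower bound from concavity of σ'
  have hlow : ∀ t ∈ Icc (0:ℝ) y, σ' y / y * t ≤ σ' t := by
    intro t ht
    have ha : (0:ℝ) ≤ 1 - t / y := by
      rw [sub_nonneg]
      exact (div_le_one hy).mpr ht.2
    have hb : (0:ℝ) ≤ t / y := div_nonneg ht.1 hy.le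
    have hcomb := hconc.2 (self_mem_Ici (a := (0:ℝ))) hym ha hb (by ring)
    have heq : (1 - t / y) • (0:ℝ) + (t / y) • y = t := by
      simp only [smul_eq_mul, mul_zero, zero_add]
      field_simp
    rw [heq] at hcomb
    simp only [smul_eq_mul, h0', mul_zero, zero_add] at hcomb
    calc σ' y / y * t = t / y * σ' y := by ring
    _ ≤ σ' t := hcomb
  -- integrate the lower bound
  have h2 : σ' y * y / 2 ≤ σ y := by
    have hmonoI : ∫ t in (0:ℝ)..y, σ' y / y * t ≤ ∫ t in (0:ℝ)..y, σ' t :=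
      intervalIntegral.integral_mono_on hy.le
        ((continuous_const.mul continuous_id).intervalIntegrable 0 y) hint hlow
    have hval : ∫ t in (0:ℝ)..y, σ' y / y * t = σ' y * y / 2 := by
      rw [intervalIntegral.integral_const_mul, integral_id]
      field_simp
      ring
    rw [hval, hftc, h0, sub_zero] at hmonoI
    exact hmonoI
  have htan := tangent y hym x hxm
  nlinarith
end

section
/- Let σ : [0,∞) → [0,∞) be a C² function that is nonnegative, convex and nondecreasing, with σ(0) = σ'(0) = 0, and such that σ' is concave. Then for all x, y > 0: 0 ≤ σ(x+y) − σ(x) − σ(y) ≤ 2 (x σ(y) + y σ(x)) / (x + y). -/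
open Set intervalIntegral

/-- A convex function on `[0,∞)` vanishing at `0` is superadditive. -/
lemma aux_superadd (f : ℝ → ℝ) (hf : ConvexOn ℝ (Ici 0) f) (h0 : f 0 = 0)
    {a b : ℝ} (ha : 0 ≤ a) (hb : 0 ≤ b) (hab : 0 < a + b) :
    f a + f b ≤ f (a + b) := by
  have hs : (a + b) ∈ Ici (0:ℝ) := le_of_lt hab
  have hz : (0:ℝ) ∈ Ici (0:ℝ) := mem_Ici.mpr le_rfl
  have h1 := hf.2 hs hz (div_nonneg ha hab.le) (div_nonneg hb hab.le)
    (by field_simp)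
  have h2 := hf.2 hs hz (div_nonneg hb hab.le) (div_nonneg ha hab.le)
    (by field_simp; ring)
  simp only [smul_eq_mul, mul_zero, add_zero, h0] at h1 h2
  rw [div_mul_cancel₀ _ hab.ne'] at h1
  have hb' : b / (a + b) * (a + b) = b := div_mul_cancel₀ _ hab.ne'
  rw [hb'] at h2
  have : f a + f b ≤ (a / (a + b)) * f (a + b) + (b / (a + b)) * f (a + b) := by
    linarith
  have h3 : (a / (a + b)) * f (a + b) + (b / (a + b)) * f (a + b) = f (a + b) := by
    field_simp
  linarith

/-- For a nonnegative, convex, nondecreasing `C²` function `σ` on `[0,∞)` with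
`σ(0) = σ'(0) = 0` and concave derivative `σ'`, one has
`0 ≤ σ(x+y) − σ(x) − σ(y) ≤ 2 (x σ(y) + y σ(x)) / (x+y)` for all `x, y > 0`. -/
theorem convex_fn_ineq_three (σ σ' : ℝ → ℝ)
    (hC2 : ContDiffOn ℝ 2 σ (Ici 0))
    (hderiv : ∀ x ∈ Ici (0:ℝ), HasDerivWithinAt σ (σ' x) (Ici 0) x)
    (hnonneg : ∀ x ∈ Ici (0:ℝ), 0 ≤ σ x)
    (hconv : ConvexOn ℝ (Ici 0) σ)
    (hmono : MonotoneOn σ (Ici 0))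
    (h0 : σ 0 = 0) (h0' : σ' 0 = 0)
    (hconc : ConcaveOn ℝ (Ici 0) σ') :
    ∀ x y : ℝ, 0 < x → 0 < y →
      0 ≤ σ (x + y) - σ x - σ y ∧
      σ (x + y) - σ x - σ y ≤ 2 * (x * σ y + y * σ x) / (x + y) := by
  -- σ' is continuous on Ici 0
  have hσ'eq : ∀ t ∈ Ici (0:ℝ), derivWithin σ (Ici 0) t = σ' t := fun t ht =>
    (hderiv t ht).derivWithin ((uniqueDiffOn_Ici 0) t ht)
  have hσ'cont : ContinuousOn σ' (Ici 0) := by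
    have h1 : ContDiffOn ℝ 1 (derivWithin σ (Ici 0)) (Ici 0) :=
      hC2.derivWithin (uniqueDiffOn_Ici 0) (by norm_num)
    exact (h1.continuousOn).congr fun t ht => (hσ'eq t ht).symm
  -- HasDerivAt at interior points
  have hDA : ∀ t : ℝ, 0 < t → HasDerivAt σ (σ' t) t := fun t ht =>
    (hderiv t ht.le).hasDerivAt (Ici_mem_nhds ht)
  -- subadditivity of σ'
  have hsub : ∀ a b : ℝ, 0 ≤ a → 0 ≤ b → 0 < a + b → σ' (a + b) ≤ σ' a + σ' b := by
    intro a b ha hb hab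
    have := aux_superadd (-σ') hconc.neg (by simp [h0']) ha hb hab
    simp only [Pi.neg_apply] at this
    linarith
  -- concavity pointwise : σ' t ≥ (t/c) σ' c for 0 ≤ t ≤ c
  have hlin : ∀ c t : ℝ, 0 < c → t ∈ Icc (0:ℝ) c → t / c * σ' c ≤ σ' t := by
    intro c t hc ht
    have h1 := hconc.2 (mem_Ici.mpr hc.le) (mem_Ici.mpr le_rfl)
      (show (0:ℝ) ≤ t / c from div_nonneg ht.1 hc.le)
      (show (0:ℝ) ≤ 1 - t / c from sub_nonneg.mpr ((div_le_one hc).mpr ht.2))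
      (by ring)
    simp only [smul_eq_mul, mul_zero, add_zero, h0'] at h1
    rw [div_mul_cancel₀ _ hc.ne'] at h1
    linarith
  -- FTC : σ c = ∫_0^c σ'
  have hFTC : ∀ c : ℝ, 0 < c → ∫ t in (0:ℝ)..c, σ' t = σ c := by
    intro c hc
    rw [show σ c = σ c - σ 0 by rw [h0]; ring]
    exact integral_eq_sub_of_hasDerivAt_of_le hc.le
      (hC2.continuousOn.mono ((Icc_subset_Ici_iff hc.le).mpr le_rfl))
      (fun t ht => hDA t ht.1)
      ((hσ'cont.mono ((Icc_subset_Ici_iff hc.le).mpr le_rfl)).intervalIntegrable_of_Icc hc.le)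
  -- key bound : t σ' t ≤ 2 σ t for t > 0
  have hkey : ∀ c : ℝ, 0 < c → c * σ' c ≤ 2 * σ c := by
    intro c hc
    have hint : IntervalIntegrable σ' MeasureTheory.volume 0 c :=
      (hσ'cont.mono ((Icc_subset_Ici_iff hc.le).mpr le_rfl)).intervalIntegrable_of_Icc hc.le
    have hint2 : IntervalIntegrable (fun t => t / c * σ' c) MeasureTheory.volume 0 c := by
      apply ContinuousOn.intervalIntegrable_of_Icc hc.le
      fun_prop
    have hmono' : ∫ t in (0:ℝ)..c, t / c * σ' c ≤ ∫ t in (0:ℝ)..c, σ' t :=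
      integral_mono_on hc.le hint2 hint (fun t ht => hlin c t hc ht)
    have hval : ∫ t in (0:ℝ)..c, t / c * σ' c = c * σ' c / 2 := by
      have : ∀ t : ℝ, t / c * σ' c = (σ' c / c) * t := fun t => by ring
      simp_rw [this]
      rw [intervalIntegral.integral_const_mul, integral_id]
      field_simp
      ring
    rw [hval, hFTC c hc] at hmono'
    linarith
  -- main proof
  intro x y hx hy
  have hxy : 0 < x + y := by linarith
  constructor
  · have := aux_superadd σ hconv h0 hx.le hy.le hxy
    linarith
  · -- D ≤ a σ' b  for (a,b) ∈ {(x,y),(y,x)}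
    have hD : ∀ a b : ℝ, 0 < a → 0 < b →
        σ (a + b) - σ a - σ b ≤ a * σ' b := by
      intro a b ha hb
      have hab : 0 < a + b := by linarith
      -- shifted FTC : ∫_0^a σ'(t+b) = σ(a+b) - σ(b)
      have hshift : ∫ t in (0:ℝ)..a, σ' (t + b) = σ (a + b) - σ b := by
        have := integral_eq_sub_of_hasDerivAt_of_le (f := fun t => σ (t + b))
          (f' := fun t => σ' (t + b)) ha.le
          (by
            apply hC2.continuousOn.comp (by fun_prop)
            intro t ht
            simp only [mem_Ici]
            have := ht.1
            linarith)
          (fun t ht => HasDerivAt.comp_add_const t b (hDA (t + b) (by linarith [ht.1])))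
          (by
            apply ContinuousOn.intervalIntegrable_of_Icc ha.le
            apply hσ'cont.comp (by fun_prop)
            intro t ht
            simp only [mem_Ici]
            have := ht.1
            linarith)
        simpa using this
      have hptwise : ∀ t ∈ Icc (0:ℝ) a, σ' (t + b) ≤ σ' t + σ' b := by
        intro t ht
        exact hsub t b ht.1 hb.le (by linarith [ht.1])
      have hint1 : IntervalIntegrable (fun t => σ' (t + b)) MeasureTheory.volume 0 a := by
        apply ContinuousOn.intervalIntegrable_of_Icc ha.le
        apply hσ'cont.comp (by fun_prop)
        intro t ht
        simp only [mem_Ici]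
        have := ht.1
        linarith
      have hintσ' : IntervalIntegrable σ' MeasureTheory.volume 0 a :=
        (hσ'cont.mono ((Icc_subset_Ici_iff ha.le).mpr le_rfl)).intervalIntegrable_of_Icc ha.le
      have hint2 : IntervalIntegrable (fun t => σ' t + σ' b) MeasureTheory.volume 0 a :=
        hintσ'.add (intervalIntegrable_const)
      have h1 : ∫ t in (0:ℝ)..a, σ' (t + b) ≤ ∫ t in (0:ℝ)..a, (σ' t + σ' b) :=
        integral_mono_on ha.le hint1 hint2 hptwise
      have h2 : ∫ t in (0:ℝ)..a, (σ' t + σ' b) = σ a + a * σ' b := by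
        rw [intervalIntegral.integral_add hintσ' intervalIntegrable_const,
          intervalIntegral.integral_const, hFTC a ha]
        simp [smul_eq_mul]
      rw [hshift, h2] at h1
      linarith
    have hDx := hD x y hx hy
    have hDy := hD y x hy hx
    rw [show y + x = x + y by ring] at hDy
    have hkx := hkey x hx
    have hky := hkey y hy
    rw [le_div_iff₀ hxy]
    nlinarith [mul_le_mul_of_nonneg_left hDx hy.le, mul_le_mul_of_nonneg_left hDy hx.le]
end

section
/- Let n > 1, let the nonnegative measurable kernel 𝒜 satisfy 𝒜(x,y;z) ≤ A(1+x)(1+y)φ(z) for some A ≥ 0 and nonnegative φ ∈ L¹((0,∞)), and set 𝒜ₙ(x,y;z) := 𝒜(x,y;z) χ_{(0,n)}(x) χ_{(0,n)}(y+z). Define, for ζ ∈ L¹((0,n)), ℬ₁ⁿ(ζ)(x) := ∫₀^{n−x} ∫₀^{n−z} 𝒜ₙ(x+z,y;z) ζ(x+z) ζ(y) dy dz. Then for all ζ, η ∈ L¹((0,n)): ‖ℬ₁ⁿ(ζ) − ℬ₁ⁿ(η)‖_{L¹(0,n)} ≤ 4 A n² ‖φ‖_{L¹(0,n)} (‖ζ‖_{L¹(0,n)}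 + ‖η‖_{L¹(0,n)}) ‖ζ − η‖_{L¹(0,n)}. In particular, ℬ₁ⁿ is locally Lipschitz continuous on L¹((0,n)). -/
open MeasureTheory Set Filter

/-- Truncated kernel `𝒜ₙ(x,y;z) = 𝒜(x,y;z) χ_{(0,n)}(x) χ_{(0,n)}(y+z)`. -/
noncomputable def truncKernel (A : ℝ → ℝ → ℝ → ℝ) (n x y z : ℝ) : ℝ :=
  A x y z * (Ioo (0:ℝ) n).indicator (fun _ => (1:ℝ)) x *
    (Ioo (0:ℝ) n).indicator (fun _ => (1:ℝ)) (y + z)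

/-- `ℬ₁ⁿ(ζ)(x) = ∫₀^{n−x} ∫₀^{n−z} 𝒜ₙ(x+z,y;z) ζ(x+z) ζ(y) dy dz`. -/
noncomputable def trB1 (A : ℝ → ℝ → ℝ → ℝ) (n : ℝ) (f : ℝ → ℝ) (x : ℝ) : ℝ :=
  ∫ z in Ioo (0:ℝ) (n - x), ∫ y in Ioo (0:ℝ) (n - z),
    truncKernel A n (x + z) y z * f (x + z) * f y

/-- `𝒟₁ⁿ(ζ)(x) = −∫₀^{n−x} ∫_z^n 𝒜ₙ(y,x;z) ζ(y) ζ(x) dy dz`. -/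
noncomputable def trD1 (A : ℝ → ℝ → ℝ → ℝ) (n : ℝ) (f : ℝ → ℝ) (x : ℝ) : ℝ :=
  - ∫ z in Ioo (0:ℝ) (n - x), ∫ y in Ioo z n, truncKernel A n y x z * f y * f x

/-- `ℬ₂ⁿ(ζ)(x) = ∫₀^x ∫_z^n 𝒜ₙ(y,x−z;z) ζ(y) ζ(x−z) dy dz`. -/
noncomputable def trB2 (A : ℝ → ℝ → ℝ → ℝ) (n : ℝ) (f : ℝ → ℝ) (x : ℝ) : ℝ :=
  ∫ z in Ioo (0:ℝ) x, ∫ y in Ioo z n, truncKernel A n y (x - z) z * f y * f (x - z)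

/-- `𝒟₂ⁿ(ζ)(x) = −∫₀^x ∫₀^{n−z} 𝒜ₙ(x,y;z) ζ(x) ζ(y) dy dz`. -/
noncomputable def trD2 (A : ℝ → ℝ → ℝ → ℝ) (n : ℝ) (f : ℝ → ℝ) (x : ℝ) : ℝ :=
  - ∫ z in Ioo (0:ℝ) x, ∫ y in Ioo (0:ℝ) (n - z), truncKernel A n x y z * f x * f y

/-- `ζ` is a (classical, `C¹([0,∞); L¹(0,n))`) nonnegative solution of the truncated
CGEDG system on `(0,n)` with initial datum `ζin`. -/
structure IsTruncSol (A : ℝ → ℝ → ℝ → ℝ) (n : ℝ) (ζin : ℝ → ℝ) (ζ : ℝ → ℝ → ℝ) : Prop where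
  init : ∀ x, ζ 0 x = ζin x
  nonneg : ∀ t, 0 ≤ t → ∀ x, 0 ≤ ζ t x
  integrable : ∀ t, 0 ≤ t → IntegrableOn (ζ t) (Ioo 0 n)
  timeDeriv : ∀ t, 0 ≤ t → ∀ x ∈ Ioo (0:ℝ) n,
      HasDerivWithinAt (fun τ => ζ τ x)
        (trB1 A n (ζ t) x + trD1 A n (ζ t) x + trB2 A n (ζ t) x + trD2 A n (ζ t) x)
        (Ici 0) t

section auxiliary

noncomputable def Wfun (A : ℝ → ℝ → ℝ → ℝ) (n : ℝ) (g : ℝ → ℝ) (u z : ℝ) : ℝ :=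
  ∫ y in Ioo (0:ℝ) (n - z), truncKernel A n u y z * g y

section helpers
variable {A : ℝ → ℝ → ℝ → ℝ} {φ : ℝ → ℝ} {c n : ℝ}

lemma ind_nonneg (n t : ℝ) : (0:ℝ) ≤ (Ioo (0:ℝ) n).indicator (fun _ => (1:ℝ)) t :=
  indicator_nonneg (fun _ _ => zero_le_one) _

lemma ind_le_one (n t : ℝ) : (Ioo (0:ℝ) n).indicator (fun _ => (1:ℝ)) t ≤ 1 := by
  by_cases h : t ∈ Ioo (0:ℝ) n <;> simp [h]

lemma truncKernel_nonneg (hA : ∀ x y z, 0 ≤ A x y z) (n x y z : ℝ) :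
    0 ≤ truncKernel A n x y z :=
  mul_nonneg (mul_nonneg (hA x y z) (ind_nonneg n x)) (ind_nonneg n _)

lemma truncKernel_le (hn : 1 < n) (hc : 0 ≤ c) (hA0 : ∀ x y z, 0 ≤ A x y z)
    (hφ0 : ∀ x, 0 ≤ φ x)
    (hbound : ∀ x y z, 0 < x → 0 < y → 0 < z → A x y z ≤ c * (1 + x) * (1 + y) * φ z)
    {u y z : ℝ} (hu : u ∈ Ioo (0:ℝ) n) (hy : y ∈ Ioo (0:ℝ) n) (hz : 0 < z) :
    truncKernel A n u y z ≤ 4 * c * n ^ 2 * φ z := by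
  have h1 : truncKernel A n u y z ≤ A u y z := by
    unfold truncKernel
    nlinarith [hA0 u y z, ind_nonneg n u, ind_le_one n u, ind_nonneg n (y + z),
      ind_le_one n (y + z), mul_nonneg (hA0 u y z) (ind_nonneg n u),
      mul_nonneg (mul_nonneg (hA0 u y z) (ind_nonneg n u)) (ind_nonneg n (y + z))]
  have h2 := hbound u y z hu.1 hy.1 hz
  have key : (1 + u) * (1 + y) ≤ 4 * n ^ 2 := by nlinarith [hu.1, hu.2, hy.1, hy.2]
  calc truncKernel A n u y z ≤ c * (1 + u) * (1 + y) * φ z := h1.trans h2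
    _ = (c * φ z) * ((1 + u) * (1 + y)) := by ring
    _ ≤ (c * φ z) * (4 * n ^ 2) := mul_le_mul_of_nonneg_left key (mul_nonneg hc (hφ0 z))
    _ = 4 * c * n ^ 2 * φ z := by ring

lemma truncKernel_meas (hA : Measurable (fun p : ℝ × ℝ × ℝ => A p.1 p.2.1 p.2.2)) (n : ℝ) :
    Measurable (fun p : ℝ × ℝ × ℝ => truncKernel A n p.1 p.2.1 p.2.2) := by
  unfold truncKernel
  have hind : Measurable ((Ioo (0:ℝ) n).indicator (fun _ => (1:ℝ))) :=
    measurable_const.indicator measurableSet_Ioo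
  exact (hA.mul (hind.comp measurable_fst)).mul
    (hind.comp (measurable_snd.fst.add measurable_snd.snd))

end helpers

section Wlem
variable {A : ℝ → ℝ → ℝ → ℝ} {φ : ℝ → ℝ} {c n : ℝ}

lemma W_integrand_integrable (hn : 1 < n) (hc : 0 ≤ c)
    (hA : Measurable (fun p : ℝ × ℝ × ℝ => A p.1 p.2.1 p.2.2))
    (hA0 : ∀ x y z, 0 ≤ A x y z) (hφ0 : ∀ x, 0 ≤ φ x)
    (hbound : ∀ x y z, 0 < x → 0 < y → 0 < z → A x y z ≤ c * (1 + x) * (1 + y) * φ z)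
    {g : ℝ → ℝ} (hgm : Measurable g) (hgint : IntegrableOn g (Ioo 0 n))
    {u z : ℝ} (hu : u ∈ Ioo (0:ℝ) n) (hz : z ∈ Ioo (0:ℝ) n) :
    IntegrableOn (fun y => truncKernel A n u y z * g y) (Ioo (0:ℝ) (n - z)) := by
  have hmeas : Measurable fun y => truncKernel A n u y z * g y := by
    have : Measurable fun y : ℝ => truncKernel A n u y z :=
      (truncKernel_meas hA n).comp
        (measurable_const.prodMk (measurable_id.prodMk measurable_const))
    exact this.mul hgm
  refine Integrable.mono' (g := fun y => 4 * c * n ^ 2 * φ z * |g y|)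
    ?_ hmeas.aestronglyMeasurable ?_
  · exact ((hgint.mono_set (Ioo_subset_Ioo le_rfl (by linarith [hz.1]))).abs.const_mul _)
  · filter_upwards [ae_restrict_mem measurableSet_Ioo] with y hy
    have hyn : y ∈ Ioo (0:ℝ) n := ⟨hy.1, lt_of_lt_of_le hy.2 (by linarith [hz.1])⟩
    rw [Real.norm_eq_abs, abs_mul, abs_of_nonneg (truncKernel_nonneg hA0 n u y z)]
    exact mul_le_mul_of_nonneg_right
      (truncKernel_le hn hc hA0 hφ0 hbound hu hyn hz.1) (abs_nonneg _)

lemma W_le (hn : 1 < n) (hc : 0 ≤ c)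
    (hA : Measurable (fun p : ℝ × ℝ × ℝ => A p.1 p.2.1 p.2.2))
    (hA0 : ∀ x y z, 0 ≤ A x y z) (hφ0 : ∀ x, 0 ≤ φ x)
    (hbound : ∀ x y z, 0 < x → 0 < y → 0 < z → A x y z ≤ c * (1 + x) * (1 + y) * φ z)
    {g : ℝ → ℝ} (hgm : Measurable g) (hgint : IntegrableOn g (Ioo 0 n))
    {u z : ℝ} (hu : u ∈ Ioo (0:ℝ) n) (hz : z ∈ Ioo (0:ℝ) n) :
    |Wfun A n g u z| ≤ 4 * c * n ^ 2 * φ z * ∫ y in Ioo (0:ℝ) n, |g y| := by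
  have habs : |Wfun A n g u z| ≤ ∫ y in Ioo (0:ℝ) (n - z), |truncKernel A n u y z * g y| := by
    rw [Wfun, ← Real.norm_eq_abs]
    exact (norm_integral_le_integral_norm _).trans_eq (by simp [Real.norm_eq_abs, abs_mul])
  have hint : IntegrableOn (fun y => 4 * c * n ^ 2 * φ z * |g y|) (Ioo (0:ℝ) (n - z)) :=
    ((hgint.mono_set (Ioo_subset_Ioo le_rfl (by linarith [hz.1]))).abs.const_mul _)
  have h2 : ∫ y in Ioo (0:ℝ) (n - z), |truncKernel A n u y z * g y| ≤
      ∫ y in Ioo (0:ℝ) (n - z), 4 * c * n ^ 2 * φ z * |g y| := by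
    refine integral_mono_of_nonneg (Eventually.of_forall fun y => abs_nonneg _) hint ?_
    filter_upwards [ae_restrict_mem measurableSet_Ioo] with y hy
    have hyn : y ∈ Ioo (0:ℝ) n := ⟨hy.1, lt_of_lt_of_le hy.2 (by linarith [hz.1])⟩
    rw [abs_mul, abs_of_nonneg (truncKernel_nonneg hA0 n u y z)]
    exact mul_le_mul_of_nonneg_right
      (truncKernel_le hn hc hA0 hφ0 hbound hu hyn hz.1) (abs_nonneg _)
  have h3 : ∫ y in Ioo (0:ℝ) (n - z), 4 * c * n ^ 2 * φ z * |g y| =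
      4 * c * n ^ 2 * φ z * ∫ y in Ioo (0:ℝ) (n - z), |g y| := integral_const_mul _ _
  have h4 : ∫ y in Ioo (0:ℝ) (n - z), |g y| ≤ ∫ y in Ioo (0:ℝ) n, |g y| := by
    refine setIntegral_mono_set hgint.abs
      (Eventually.of_forall fun y => abs_nonneg _) ?_
    exact HasSubset.Subset.eventuallyLE (Ioo_subset_Ioo le_rfl (by linarith [hz.1]))
  have hcf : (0:ℝ) ≤ 4 * c * n ^ 2 * φ z :=
    mul_nonneg (mul_nonneg (mul_nonneg (by norm_num) hc) (sq_nonneg n)) (hφ0 z)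
  calc |Wfun A n g u z| ≤ _ := habs.trans (h2.trans_eq h3)
    _ ≤ _ := mul_le_mul_of_nonneg_left h4 hcf

lemma W_sub (hn : 1 < n) (hc : 0 ≤ c)
    (hA : Measurable (fun p : ℝ × ℝ × ℝ => A p.1 p.2.1 p.2.2))
    (hA0 : ∀ x y z, 0 ≤ A x y z) (hφ0 : ∀ x, 0 ≤ φ x)
    (hbound : ∀ x y z, 0 < x → 0 < y → 0 < z → A x y z ≤ c * (1 + x) * (1 + y) * φ z)
    {f g : ℝ → ℝ} (hfm : Measurable f) (hfint : IntegrableOn f (Ioo 0 n))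
    (hgm : Measurable g) (hgint : IntegrableOn g (Ioo 0 n))
    {u z : ℝ} (hu : u ∈ Ioo (0:ℝ) n) (hz : z ∈ Ioo (0:ℝ) n) :
    Wfun A n f u z - Wfun A n g u z = Wfun A n (fun w => f w - g w) u z := by
  unfold Wfun
  rw [← integral_sub (W_integrand_integrable hn hc hA hA0 hφ0 hbound hfm hfint hu hz)
    (W_integrand_integrable hn hc hA hA0 hφ0 hbound hgm hgint hu hz)]
  exact setIntegral_congr_fun measurableSet_Ioo (fun y _ => by ring)

lemma W_meas (hA : Measurable (fun p : ℝ × ℝ × ℝ => A p.1 p.2.1 p.2.2)) (n : ℝ)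
    {g : ℝ → ℝ} (hgm : Measurable g) (x : ℝ) :
    StronglyMeasurable (fun z => Wfun A n g (x + z) z) := by
  set J : ℝ × ℝ → ℝ := ({q : ℝ × ℝ | 0 < q.2 ∧ q.2 < n - q.1}).indicator
    (fun q => truncKernel A n (x + q.1) q.2 q.1 * g q.2) with hJ
  have hsm : MeasurableSet {q : ℝ × ℝ | 0 < q.2 ∧ q.2 < n - q.1} := by
    apply MeasurableSet.inter
    · exact measurableSet_lt measurable_const measurable_snd
    · exact measurableSet_lt measurable_snd (measurable_const.sub measurable_fst)
  have hJm : Measurable J := by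
    refine Measurable.indicator ?_ hsm
    refine Measurable.mul ?_ (hgm.comp measurable_snd)
    exact (truncKernel_meas hA n).comp
      ((measurable_const.add measurable_fst).prodMk
        (measurable_snd.prodMk measurable_fst))
  have key := hJm.stronglyMeasurable.integral_prod_right' (ν := volume)
  have : (fun z => Wfun A n g (x + z) z) = fun z => ∫ y, J (z, y) := by
    funext z
    have hfun : (fun y => (Ioo (0:ℝ) (n - z)).indicator
        (fun y => truncKernel A n (x + z) y z * g y) y) = fun y => J (z, y) := by
      funext y
      by_cases hy : y ∈ Ioo (0:ℝ) (n - z)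
      · rw [indicator_of_mem hy, hJ,
          indicator_of_mem (show (z, y) ∈ {q : ℝ × ℝ | 0 < q.2 ∧ q.2 < n - q.1}
            from ⟨hy.1, hy.2⟩)]
      · rw [indicator_of_notMem hy, hJ,
          indicator_of_notMem
            (show (z, y) ∉ {q : ℝ × ℝ | 0 < q.2 ∧ q.2 < n - q.1}
              from fun h => hy ⟨h.1, h.2⟩)]
    rw [Wfun, ← integral_indicator measurableSet_Ioo, hfun]
  rw [this]
  exact key

end Wlem

section fubini
variable {n : ℝ}

lemma preimage_add_Ioo (z a b : ℝ) : (· + z) ⁻¹' Ioo a b = Ioo (a - z) (b - z) := by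
  ext x
  simp only [mem_preimage, mem_Ioo]
  constructor <;> intro h <;> constructor <;> linarith [h.1, h.2]

lemma translate_integrable {g : ℝ → ℝ} (hgint : IntegrableOn g (Ioo 0 n))
    {z : ℝ} (hz : z ∈ Ioo (0:ℝ) n) :
    IntegrableOn (fun x => |g (x + z)|) (Ioo (0:ℝ) (n - z)) := by
  have hmp := measurePreserving_add_right (volume : Measure ℝ) z
  have hme := (MeasurableEquiv.addRight z).measurableEmbedding
  have : IntegrableOn ((fun u => |g u|) ∘ (· + z)) ((· + z) ⁻¹' Ioo z n) volume :=
    (hmp.integrableOn_comp_preimage hme).2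
      ((hgint.mono_set (Ioo_subset_Ioo (le_of_lt hz.1) le_rfl)).abs)
  rw [preimage_add_Ioo] at this
  simpa [sub_self, Function.comp_def] using this

lemma translate_integral_le {g : ℝ → ℝ} (hgint : IntegrableOn g (Ioo 0 n))
    {z : ℝ} (hz : z ∈ Ioo (0:ℝ) n) :
    ∫ x in Ioo (0:ℝ) (n - z), |g (x + z)| ≤ ∫ u in Ioo (0:ℝ) n, |g u| := by
  have hmp := measurePreserving_add_right (volume : Measure ℝ) z
  have hme := (MeasurableEquiv.addRight z).measurableEmbedding
  have heq : ∫ x in Ioo (0:ℝ) (n - z), |g (x + z)| = ∫ u in Ioo z n, |g u| := by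
    have := hmp.setIntegral_preimage_emb hme (fun u => |g u|) (Ioo z n)
    rw [preimage_add_Ioo, sub_self] at this
    exact this
  rw [heq]
  refine setIntegral_mono_set hgint.abs (Eventually.of_forall fun y => abs_nonneg _) ?_
  exact HasSubset.Subset.eventuallyLE (Ioo_subset_Ioo (le_of_lt hz.1) le_rfl)

lemma fubini_aux (hn : 0 < n) {φ g : ℝ → ℝ} (hφm : Measurable φ)
    (hφ0 : ∀ x, 0 ≤ φ x) (hφint : IntegrableOn φ (Ioo 0 n))
    (hgm : Measurable g) (hgint : IntegrableOn g (Ioo 0 n)) :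
    (∀ᵐ x : ℝ, x ∈ Ioo (0:ℝ) n →
        IntegrableOn (fun z => φ z * |g (x + z)|) (Ioo (0:ℝ) (n - x))) ∧
    IntegrableOn (fun x => ∫ z in Ioo (0:ℝ) (n - x), φ z * |g (x + z)|) (Ioo (0:ℝ) n) ∧
    (∫ x in Ioo (0:ℝ) n, ∫ z in Ioo (0:ℝ) (n - x), φ z * |g (x + z)|) ≤
      (∫ z in Ioo (0:ℝ) n, φ z) * ∫ u in Ioo (0:ℝ) n, |g u| := by
  set C : ℝ := ∫ u in Ioo (0:ℝ) n, |g u| with hC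
  have hC0 : 0 ≤ C := setIntegral_nonneg measurableSet_Ioo fun u _ => abs_nonneg _
  set T : Set (ℝ × ℝ) := {p | (0 < p.1 ∧ p.1 < n) ∧ 0 < p.2 ∧ p.2 < n - p.1} with hT
  have hTm : MeasurableSet T := by
    refine MeasurableSet.inter (MeasurableSet.inter ?_ ?_) (MeasurableSet.inter ?_ ?_)
    · exact measurableSet_lt measurable_const measurable_fst
    · exact measurableSet_lt measurable_fst measurable_const
    · exact measurableSet_lt measurable_const measurable_snd
    · exact measurableSet_lt measurable_snd (measurable_const.sub measurable_fst)
  set H : ℝ × ℝ → ℝ := T.indicator (fun p => φ p.2 * |g (p.1 + p.2)|) with hH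
  have hHm : Measurable H :=
    Measurable.indicator ((hφm.comp measurable_snd).mul
      ((hgm.comp (measurable_fst.add measurable_snd)).abs)) hTm
  have hH0 : ∀ p, 0 ≤ H p :=
    fun p => indicator_nonneg (fun q _ => mul_nonneg (hφ0 _) (abs_nonneg _)) p
  -- sections in x (z fixed)
  have hsec1 : ∀ z ∈ Ioo (0:ℝ) n, (fun x => H (x, z)) =
      (Ioo (0:ℝ) (n - z)).indicator (fun x => φ z * |g (x + z)|) := by
    intro z hz
    funext x
    by_cases hx : x ∈ Ioo (0:ℝ) (n - z)
    · rw [indicator_of_mem hx, hH, indicator_of_mem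
        (show (x, z) ∈ T from ⟨⟨hx.1, by linarith [hx.2, hz.1]⟩, hz.1, by linarith [hx.2]⟩)]
    · rw [indicator_of_notMem hx, hH, indicator_of_notMem
        (show (x, z) ∉ T from fun h => hx ⟨h.1.1, by linarith [h.2.2]⟩)]
  have hsec2 : ∀ z : ℝ, z ∉ Ioo (0:ℝ) n → (fun x => H (x, z)) = fun _ => (0:ℝ) := by
    intro z hz
    funext x
    refine indicator_of_notMem (fun h => hz ⟨h.2.1, by linarith [h.2.2, h.1.1]⟩) _
  -- sections in z (x fixed)
  have hsecx : ∀ x ∈ Ioo (0:ℝ) n, (fun z => H (x, z)) =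
      (Ioo (0:ℝ) (n - x)).indicator (fun z => φ z * |g (x + z)|) := by
    intro x hx
    funext z
    by_cases hz : z ∈ Ioo (0:ℝ) (n - x)
    · rw [indicator_of_mem hz, hH,
        indicator_of_mem (show (x, z) ∈ T from ⟨⟨hx.1, hx.2⟩, hz.1, hz.2⟩)]
    · rw [indicator_of_notMem hz, hH,
        indicator_of_notMem (show (x, z) ∉ T from fun h => hz ⟨h.2.1, h.2.2⟩)]
  -- integrability on the product
  have hDint : Integrable ((Ioo (0:ℝ) n).indicator (fun z => φ z * C)) volume := by
    rw [integrable_indicator_iff measurableSet_Ioo]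
    exact hφint.mul_const C
  have hHint : Integrable H (volume.prod volume) := by
    refine (integrable_prod_iff' hHm.aestronglyMeasurable).2 ⟨?_, ?_⟩
    · refine Eventually.of_forall fun z => ?_
      by_cases hz : z ∈ Ioo (0:ℝ) n
      · rw [hsec1 z hz, integrable_indicator_iff measurableSet_Ioo]
        exact (translate_integrable hgint hz).const_mul _
      · rw [hsec2 z hz]
        exact integrable_zero _ _ _
    · refine Integrable.mono' hDint
        (hHm.norm.stronglyMeasurable.integral_prod_left'.aestronglyMeasurable) ?_
      refine Eventually.of_forall fun z => ?_
      rw [Real.norm_eq_abs, abs_of_nonneg (integral_nonneg fun x => norm_nonneg _)]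
      by_cases hz : z ∈ Ioo (0:ℝ) n
      · have : (fun x => ‖H (x, z)‖) = fun x => H (x, z) := by
          funext x; rw [Real.norm_eq_abs, abs_of_nonneg (hH0 _)]
        rw [this, hsec1 z hz, integral_indicator measurableSet_Ioo,
          integral_const_mul, indicator_of_mem hz]
        exact mul_le_mul_of_nonneg_left (translate_integral_le hgint hz) (hφ0 z)
      · have : (fun x => ‖H (x, z)‖) = fun _ => (0:ℝ) := by
          funext x
          rw [Real.norm_eq_abs, show H (x, z) = 0 from congrFun (hsec2 z hz) x, abs_zero]
        rw [this, integral_zero, indicator_of_notMem hz]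
  refine ⟨?_, ?_, ?_⟩
  · -- a.e. integrability of z-sections
    filter_upwards [hHint.prod_right_ae] with x hx hxmem
    rw [hsecx x hxmem, integrable_indicator_iff measurableSet_Ioo] at hx
    exact hx
  · -- integrability of the inner-integral function
    refine (hHint.integral_prod_left.integrableOn (s := Ioo (0:ℝ) n)).congr_fun ?_
      measurableSet_Ioo
    intro x hx
    show (∫ z, H (x, z)) = ∫ z in Ioo (0:ℝ) (n - x), φ z * |g (x + z)|
    rw [hsecx x hx, integral_indicator measurableSet_Ioo]
  · have step1 : (∫ x in Ioo (0:ℝ) n, ∫ z in Ioo (0:ℝ) (n - x), φ z * |g (x + z)|) =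
        ∫ x in Ioo (0:ℝ) n, ∫ z, H (x, z) := by
      refine setIntegral_congr_fun measurableSet_Ioo fun x hx => ?_
      rw [hsecx x hx, integral_indicator measurableSet_Ioo]
    have step2 : (∫ x in Ioo (0:ℝ) n, ∫ z, H (x, z)) ≤ ∫ x, ∫ z, H (x, z) :=
      setIntegral_le_integral hHint.integral_prod_left
        (Eventually.of_forall fun x => integral_nonneg fun z => hH0 _)
    have step3 : (∫ x, ∫ z, H (x, z)) = ∫ z, ∫ x, H (x, z) :=
      integral_integral_swap (f := fun x z => H (x, z)) hHint
    have step4 : (∫ z, ∫ x, H (x, z)) ≤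
        ∫ z, (Ioo (0:ℝ) n).indicator (fun z => φ z * C) z := by
      refine integral_mono_of_nonneg
        (Eventually.of_forall fun z => integral_nonneg fun x => hH0 _) hDint ?_
      refine Eventually.of_forall fun z => ?_
      show (∫ x, H (x, z)) ≤ (Ioo (0:ℝ) n).indicator (fun z => φ z * C) z
      by_cases hz : z ∈ Ioo (0:ℝ) n
      · rw [hsec1 z hz, integral_indicator measurableSet_Ioo, integral_const_mul,
          indicator_of_mem hz]
        exact mul_le_mul_of_nonneg_left (translate_integral_le hgint hz) (hφ0 z)
      · rw [hsec2 z hz, integral_zero, indicator_of_notMem hz]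
    have step5 : (∫ z, (Ioo (0:ℝ) n).indicator (fun z => φ z * C) z) =
        (∫ z in Ioo (0:ℝ) n, φ z) * C := by
      rw [integral_indicator measurableSet_Ioo, integral_mul_const]
    calc (∫ x in Ioo (0:ℝ) n, ∫ z in Ioo (0:ℝ) (n - x), φ z * |g (x + z)|)
        = ∫ x in Ioo (0:ℝ) n, ∫ z, H (x, z) := step1
      _ ≤ ∫ x, ∫ z, H (x, z) := step2
      _ = ∫ z, ∫ x, H (x, z) := step3
      _ ≤ _ := step4
      _ = _ := step5

end fubini

lemma fubini_aux' {n : ℝ} (hn : 0 < n) {φ g : ℝ → ℝ}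
    (hφ0 : ∀ x, 0 ≤ φ x) (hφint : IntegrableOn φ (Ioo 0 n))
    (hgm : Measurable g) (hgint : IntegrableOn g (Ioo 0 n)) :
    (∀ᵐ x : ℝ, x ∈ Ioo (0:ℝ) n →
        IntegrableOn (fun z => φ z * |g (x + z)|) (Ioo (0:ℝ) (n - x))) ∧
    IntegrableOn (fun x => ∫ z in Ioo (0:ℝ) (n - x), φ z * |g (x + z)|) (Ioo (0:ℝ) n) ∧
    (∫ x in Ioo (0:ℝ) n, ∫ z in Ioo (0:ℝ) (n - x), φ z * |g (x + z)|) ≤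
      (∫ z in Ioo (0:ℝ) n, φ z) * ∫ u in Ioo (0:ℝ) n, |g u| := by
  have hae := hφint.aestronglyMeasurable
  set φ' : ℝ → ℝ := (Ioo (0:ℝ) n).indicator (fun z => max (hae.mk φ z) 0) with hφ'
  have hφ'm : Measurable φ' :=
    ((hae.stronglyMeasurable_mk.measurable).max measurable_const).indicator
      measurableSet_Ioo
  have hφ'0 : ∀ z, 0 ≤ φ' z :=
    fun z => indicator_nonneg (fun q _ => le_max_right _ _) z
  have heq : ∀ᵐ z : ℝ, z ∈ Ioo (0:ℝ) n → φ z = φ' z := by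
    filter_upwards [(ae_restrict_iff' measurableSet_Ioo).1 hae.ae_eq_mk] with z hz hmem
    rw [hφ', indicator_of_mem hmem, ← hz hmem, max_eq_left (hφ0 z)]
  have heqres : φ =ᵐ[volume.restrict (Ioo (0:ℝ) n)] φ' :=
    (ae_restrict_iff' measurableSet_Ioo).2 heq
  have hφ'int : IntegrableOn φ' (Ioo 0 n) := hφint.congr heqres
  obtain ⟨h1, h2, h3⟩ := fubini_aux hn hφ'm hφ'0 hφ'int hgm hgint
  -- pointwise (in x ∈ (0,n)) a.e.-z equality of the integrands
  have hzeq : ∀ x ∈ Ioo (0:ℝ) n,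
      (fun z => φ z * |g (x + z)|) =ᵐ[volume.restrict (Ioo (0:ℝ) (n - x))]
      (fun z => φ' z * |g (x + z)|) := by
    intro x hx
    filter_upwards [ae_restrict_mem measurableSet_Ioo, ae_restrict_of_ae heq] with z hz hzeq
    rw [hzeq ⟨hz.1, by linarith [hz.2, hx.1]⟩]
  have hPeq : ∀ x ∈ Ioo (0:ℝ) n,
      (∫ z in Ioo (0:ℝ) (n - x), φ z * |g (x + z)|) =
      ∫ z in Ioo (0:ℝ) (n - x), φ' z * |g (x + z)| :=
    fun x hx => integral_congr_ae (hzeq x hx)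
  refine ⟨?_, ?_, ?_⟩
  · filter_upwards [h1] with x hx hmem
    exact (hx hmem).congr ((hzeq x hmem).symm)
  · exact h2.congr_fun (fun x hx => (hPeq x hx).symm) measurableSet_Ioo
  · calc (∫ x in Ioo (0:ℝ) n, ∫ z in Ioo (0:ℝ) (n - x), φ z * |g (x + z)|)
        = ∫ x in Ioo (0:ℝ) n, ∫ z in Ioo (0:ℝ) (n - x), φ' z * |g (x + z)| :=
          setIntegral_congr_fun measurableSet_Ioo fun x hx => hPeq x hx
      _ ≤ (∫ z in Ioo (0:ℝ) n, φ' z) * ∫ u in Ioo (0:ℝ) n, |g u| := h3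
      _ = (∫ z in Ioo (0:ℝ) n, φ z) * ∫ u in Ioo (0:ℝ) n, |g u| := by
          rw [setIntegral_congr_ae measurableSet_Ioo (heq.mono fun z h hz => h hz)]

lemma trB1_congr {A : ℝ → ℝ → ℝ → ℝ} {n : ℝ} {f f' : ℝ → ℝ}
    (h : ∀ᵐ u : ℝ, u ∈ Ioo (0:ℝ) n → f u = f' u) {x : ℝ} (hx : x ∈ Ioo (0:ℝ) n) :
    trB1 A n f x = trB1 A n f' x := by
  rw [trB1, trB1]
  have hpre : ∀ᵐ z : ℝ, (x + z) ∈ Ioo (0:ℝ) n → f (x + z) = f' (x + z) := by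
    rw [ae_iff] at h ⊢
    have : {z : ℝ | ¬((x + z) ∈ Ioo (0:ℝ) n → f (x + z) = f' (x + z))} =
        (fun z => x + z) ⁻¹' {u : ℝ | ¬(u ∈ Ioo (0:ℝ) n → f u = f' u)} := rfl
    rw [this, measure_preimage_add]
    exact h
  apply integral_congr_ae
  filter_upwards [ae_restrict_mem measurableSet_Ioo, ae_restrict_of_ae hpre] with z hzS hfz
  have hxz : f (x + z) = f' (x + z) :=
    hfz ⟨by linarith [hx.1, hzS.1], by linarith [hzS.2]⟩
  apply integral_congr_ae
  filter_upwards [ae_restrict_mem measurableSet_Ioo, ae_restrict_of_ae h] with y hyS hfy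
  rw [hxz, hfy ⟨hyS.1, by linarith [hyS.2, hzS.1]⟩]

lemma main_meas {A : ℝ → ℝ → ℝ → ℝ} {φ : ℝ → ℝ} {c n : ℝ} (hn : 1 < n) (hc : 0 ≤ c)
    (hA_meas : Measurable (fun p : ℝ × ℝ × ℝ => A p.1 p.2.1 p.2.2))
    (hA_nonneg : ∀ x y z, 0 ≤ A x y z)
    (hφ_nonneg : ∀ x, 0 ≤ φ x)
    (hφ_int : IntegrableOn φ (Ioi 0))
    (hbound : ∀ x y z, 0 < x → 0 < y → 0 < z →
      A x y z ≤ c * (1 + x) * (1 + y) * φ z)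
    (ζ η : ℝ → ℝ) (hζm : Measurable ζ) (hηm : Measurable η)
    (hζ : IntegrableOn ζ (Ioo 0 n)) (hη : IntegrableOn η (Ioo 0 n)) :
    ∫ x in Ioo (0:ℝ) n, |trB1 A n ζ x - trB1 A n η x| ≤
      4 * c * n ^ 2 * (∫ z in Ioo (0:ℝ) n, φ z) *
        ((∫ x in Ioo (0:ℝ) n, |ζ x|) + ∫ x in Ioo (0:ℝ) n, |η x|) *
        ∫ x in Ioo (0:ℝ) n, |ζ x - η x| := by
  have hn0 : (0:ℝ) < n := lt_trans one_pos hn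
  have hφn : IntegrableOn φ (Ioo 0 n) := hφ_int.mono_set fun z hz => hz.1
  set dm : ℝ → ℝ := fun u => ζ u - η u with hdm_def
  have hdm : Measurable dm := hζm.sub hηm
  have hdint : IntegrableOn dm (Ioo 0 n) := hζ.sub hη
  set Nζ : ℝ := ∫ x in Ioo (0:ℝ) n, |ζ x| with hNζ
  set Nη : ℝ := ∫ x in Ioo (0:ℝ) n, |η x| with hNη
  set Nd : ℝ := ∫ x in Ioo (0:ℝ) n, |dm x| with hNd
  set Φ : ℝ := ∫ z in Ioo (0:ℝ) n, φ z with hΦ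
  have hNζ0 : 0 ≤ Nζ := setIntegral_nonneg measurableSet_Ioo fun u _ => abs_nonneg _
  have hNη0 : 0 ≤ Nη := setIntegral_nonneg measurableSet_Ioo fun u _ => abs_nonneg _
  have hNd0 : 0 ≤ Nd := setIntegral_nonneg measurableSet_Ioo fun u _ => abs_nonneg _
  obtain ⟨haeζ, hPζint, hPζle⟩ := fubini_aux' hn0 hφ_nonneg hφn hζm hζ
  obtain ⟨haeη, hPηint, hPηle⟩ := fubini_aux' hn0 hφ_nonneg hφn hηm hη
  obtain ⟨haed, hPdint, hPdle⟩ := fubini_aux' hn0 hφ_nonneg hφn hdm hdint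
  -- pointwise (a.e.) estimate
  have hkey : ∀ᵐ x ∂(volume.restrict (Ioo (0:ℝ) n)),
      |trB1 A n ζ x - trB1 A n η x| ≤
        4 * c * n ^ 2 * Nζ * (∫ z in Ioo (0:ℝ) (n - x), φ z * |dm (x + z)|) +
        4 * c * n ^ 2 * Nd * (∫ z in Ioo (0:ℝ) (n - x), φ z * |η (x + z)|) := by
    filter_upwards [ae_restrict_mem measurableSet_Ioo, ae_restrict_of_ae haeζ,
      ae_restrict_of_ae haeη, ae_restrict_of_ae haed] with x hx hIζ hIη hId
    replace hIζ := hIζ hx; replace hIη := hIη hx; replace hId := hId hx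
    have memz : ∀ z ∈ Ioo (0:ℝ) (n - x),
        (x + z) ∈ Ioo (0:ℝ) n ∧ z ∈ Ioo (0:ℝ) n := fun z hz =>
      ⟨⟨by linarith [hx.1, hz.1], by linarith [hz.2]⟩,
        ⟨hz.1, by linarith [hz.2, hx.1]⟩⟩
    have hrep : ∀ f : ℝ → ℝ,
        trB1 A n f x = ∫ z in Ioo (0:ℝ) (n - x), f (x + z) * Wfun A n f (x + z) z := by
      intro f
      rw [trB1]
      refine setIntegral_congr_fun measurableSet_Ioo fun z _ => ?_
      rw [Wfun, ← integral_const_mul]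
      exact setIntegral_congr_fun measurableSet_Ioo fun y _ => by ring
    have hWint : ∀ f g : ℝ → ℝ, Measurable f → Measurable g →
        IntegrableOn g (Ioo 0 n) →
        IntegrableOn (fun z => φ z * |f (x + z)|) (Ioo (0:ℝ) (n - x)) →
        IntegrableOn (fun z => f (x + z) * Wfun A n g (x + z) z) (Ioo (0:ℝ) (n - x)) := by
      intro f g hfm hgm hgint hfφ
      refine Integrable.mono'
        (hfφ.const_mul (4 * c * n ^ 2 * ∫ y in Ioo (0:ℝ) n, |g y|)) ?_ ?_
      · exact ((hfm.comp (measurable_const.add measurable_id)).mul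
          (W_meas hA_meas n hgm x).measurable).aestronglyMeasurable
      · filter_upwards [ae_restrict_mem measurableSet_Ioo] with z hz
        rw [Real.norm_eq_abs, abs_mul]
        have hb := W_le hn hc hA_meas hA_nonneg hφ_nonneg hbound hgm hgint
          (memz z hz).1 (memz z hz).2
        calc |f (x + z)| * |Wfun A n g (x + z) z|
            ≤ |f (x + z)| * (4 * c * n ^ 2 * φ z * ∫ y in Ioo (0:ℝ) n, |g y|) :=
              mul_le_mul_of_nonneg_left hb (abs_nonneg _)
          _ = 4 * c * n ^ 2 * (∫ y in Ioo (0:ℝ) n, |g y|) * (φ z * |f (x + z)|) := by ring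
    have hIζζ := hWint ζ ζ hζm hζm hζ hIζ
    have hIηη := hWint η η hηm hηm hη hIη
    have heq : trB1 A n ζ x - trB1 A n η x =
        ∫ z in Ioo (0:ℝ) (n - x),
          (dm (x + z) * Wfun A n ζ (x + z) z + η (x + z) * Wfun A n dm (x + z) z) := by
      rw [hrep ζ, hrep η, ← integral_sub hIζζ hIηη]
      refine setIntegral_congr_fun measurableSet_Ioo fun z hz => ?_
      have hWs := W_sub hn hc hA_meas hA_nonneg hφ_nonneg hbound hζm hζ hηm hη
        (memz z hz).1 (memz z hz).2
      have hWd : Wfun A n dm (x + z) z = Wfun A n ζ (x + z) z - Wfun A n η (x + z) z := by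
        rw [hWs]
      rw [hWd]; simp only [hdm_def]
      ring
    have hBint : IntegrableOn (fun z =>
        4 * c * n ^ 2 * Nζ * (φ z * |dm (x + z)|) +
        4 * c * n ^ 2 * Nd * (φ z * |η (x + z)|)) (Ioo (0:ℝ) (n - x)) :=
      (hId.const_mul _).add (hIη.const_mul _)
    calc |trB1 A n ζ x - trB1 A n η x|
        = |∫ z in Ioo (0:ℝ) (n - x),
            (dm (x + z) * Wfun A n ζ (x + z) z + η (x + z) * Wfun A n dm (x + z) z)| := by
          rw [heq]
      _ ≤ ∫ z in Ioo (0:ℝ) (n - x),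
            |dm (x + z) * Wfun A n ζ (x + z) z + η (x + z) * Wfun A n dm (x + z) z| := by
          rw [← Real.norm_eq_abs]
          exact (norm_integral_le_integral_norm _).trans_eq (by simp [Real.norm_eq_abs])
      _ ≤ ∫ z in Ioo (0:ℝ) (n - x),
            (4 * c * n ^ 2 * Nζ * (φ z * |dm (x + z)|) +
             4 * c * n ^ 2 * Nd * (φ z * |η (x + z)|)) := by
          refine integral_mono_of_nonneg (Eventually.of_forall fun z => abs_nonneg _)
            hBint ?_
          filter_upwards [ae_restrict_mem measurableSet_Ioo] with z hz
          have hbζ := W_le hn hc hA_meas hA_nonneg hφ_nonneg hbound hζm hζ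
            (memz z hz).1 (memz z hz).2
          have hbd := W_le hn hc hA_meas hA_nonneg hφ_nonneg hbound hdm hdint
            (memz z hz).1 (memz z hz).2
          calc |dm (x + z) * Wfun A n ζ (x + z) z + η (x + z) * Wfun A n dm (x + z) z|
              ≤ |dm (x + z) * Wfun A n ζ (x + z) z| +
                |η (x + z) * Wfun A n dm (x + z) z| := abs_add_le _ _
            _ = |dm (x + z)| * |Wfun A n ζ (x + z) z| +
                |η (x + z)| * |Wfun A n dm (x + z) z| := by rw [abs_mul, abs_mul]
            _ ≤ |dm (x + z)| * (4 * c * n ^ 2 * φ z * Nζ) +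
                |η (x + z)| * (4 * c * n ^ 2 * φ z * Nd) :=
              add_le_add (mul_le_mul_of_nonneg_left hbζ (abs_nonneg _))
                (mul_le_mul_of_nonneg_left hbd (abs_nonneg _))
            _ = 4 * c * n ^ 2 * Nζ * (φ z * |dm (x + z)|) +
                4 * c * n ^ 2 * Nd * (φ z * |η (x + z)|) := by ring
      _ = 4 * c * n ^ 2 * Nζ * (∫ z in Ioo (0:ℝ) (n - x), φ z * |dm (x + z)|) +
          4 * c * n ^ 2 * Nd * (∫ z in Ioo (0:ℝ) (n - x), φ z * |η (x + z)|) := by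
          rw [integral_add (hId.const_mul _) (hIη.const_mul _),
            integral_const_mul, integral_const_mul]
  -- assemble
  have hGint : IntegrableOn (fun x =>
      4 * c * n ^ 2 * Nζ * (∫ z in Ioo (0:ℝ) (n - x), φ z * |dm (x + z)|) +
      4 * c * n ^ 2 * Nd * (∫ z in Ioo (0:ℝ) (n - x), φ z * |η (x + z)|)) (Ioo (0:ℝ) n) :=
    (hPdint.const_mul _).add (hPηint.const_mul _)
  have hfinal : ∫ x in Ioo (0:ℝ) n, |trB1 A n ζ x - trB1 A n η x| ≤
      4 * c * n ^ 2 * Nζ * (Φ * Nd) + 4 * c * n ^ 2 * Nd * (Φ * Nη) := by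
    calc ∫ x in Ioo (0:ℝ) n, |trB1 A n ζ x - trB1 A n η x|
        ≤ ∫ x in Ioo (0:ℝ) n,
            (4 * c * n ^ 2 * Nζ * (∫ z in Ioo (0:ℝ) (n - x), φ z * |dm (x + z)|) +
             4 * c * n ^ 2 * Nd * (∫ z in Ioo (0:ℝ) (n - x), φ z * |η (x + z)|)) :=
          integral_mono_of_nonneg (Eventually.of_forall fun x => abs_nonneg _)
            hGint hkey
      _ = 4 * c * n ^ 2 * Nζ *
            (∫ x in Ioo (0:ℝ) n, ∫ z in Ioo (0:ℝ) (n - x), φ z * |dm (x + z)|) +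
          4 * c * n ^ 2 * Nd *
            (∫ x in Ioo (0:ℝ) n, ∫ z in Ioo (0:ℝ) (n - x), φ z * |η (x + z)|) := by
          rw [integral_add (hPdint.const_mul _) (hPηint.const_mul _),
            integral_const_mul, integral_const_mul]
      _ ≤ 4 * c * n ^ 2 * Nζ * (Φ * Nd) + 4 * c * n ^ 2 * Nd * (Φ * Nη) := by
          have h1 : (0:ℝ) ≤ 4 * c * n ^ 2 * Nζ :=
            mul_nonneg (mul_nonneg (mul_nonneg (by norm_num) hc) (sq_nonneg n)) hNζ0
          have h2 : (0:ℝ) ≤ 4 * c * n ^ 2 * Nd :=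
            mul_nonneg (mul_nonneg (mul_nonneg (by norm_num) hc) (sq_nonneg n)) hNd0
          exact add_le_add (mul_le_mul_of_nonneg_left hPdle h1)
            (mul_le_mul_of_nonneg_left hPηle h2)
  calc ∫ x in Ioo (0:ℝ) n, |trB1 A n ζ x - trB1 A n η x|
      ≤ 4 * c * n ^ 2 * Nζ * (Φ * Nd) + 4 * c * n ^ 2 * Nd * (Φ * Nη) := hfinal
    _ = 4 * c * n ^ 2 * Φ * (Nζ + Nη) * Nd := by ring

end auxiliary

/-- **Local Lipschitz estimate for the truncated gain operator `ℬ₁ⁿ`.**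
For `ζ, η ∈ L¹(0,n)`,
`‖ℬ₁ⁿ(ζ) − ℬ₁ⁿ(η)‖_{L¹(0,n)} ≤ 4An²‖φ‖_{L¹(0,n)} (‖ζ‖ + ‖η‖) ‖ζ − η‖`;
in particular `ℬ₁ⁿ` is locally Lipschitz on `L¹(0,n)`. -/
theorem truncated_B1_lipschitz
    (A : ℝ → ℝ → ℝ → ℝ) (φ : ℝ → ℝ) (c n : ℝ) (hn : 1 < n) (hc : 0 ≤ c)
    (hA_meas : Measurable (fun p : ℝ × ℝ × ℝ => A p.1 p.2.1 p.2.2))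
    (hA_nonneg : ∀ x y z, 0 ≤ A x y z)
    (hφ_nonneg : ∀ x, 0 ≤ φ x)
    (hφ_int : IntegrableOn φ (Ioi 0))
    (hbound : ∀ x y z, 0 < x → 0 < y → 0 < z →
      A x y z ≤ c * (1 + x) * (1 + y) * φ z) :
    ∀ ζ η : ℝ → ℝ, IntegrableOn ζ (Ioo 0 n) → IntegrableOn η (Ioo 0 n) →
      ∫ x in Ioo (0:ℝ) n, |trB1 A n ζ x - trB1 A n η x| ≤
        4 * c * n ^ 2 * (∫ z in Ioo (0:ℝ) n, φ z) *
          ((∫ x in Ioo (0:ℝ) n, |ζ x|) + ∫ x in Ioo (0:ℝ) n, |η x|) *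
          ∫ x in Ioo (0:ℝ) n, |ζ x - η x| := by
  intro ζ η hζ hη
  have hζae := hζ.aestronglyMeasurable
  have hηae := hη.aestronglyMeasurable
  set ζ' : ℝ → ℝ := (Ioo (0:ℝ) n).indicator (hζae.mk ζ) with hζ'def
  set η' : ℝ → ℝ := (Ioo (0:ℝ) n).indicator (hηae.mk η) with hη'def
  have hζ'm : Measurable ζ' :=
    (hζae.stronglyMeasurable_mk.measurable).indicator measurableSet_Ioo
  have hη'm : Measurable η' :=
    (hηae.stronglyMeasurable_mk.measurable).indicator measurableSet_Ioo
  have heqζ : ∀ᵐ u : ℝ, u ∈ Ioo (0:ℝ) n → ζ u = ζ' u := by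
    filter_upwards [(ae_restrict_iff' measurableSet_Ioo).1 hζae.ae_eq_mk] with u hu hmem
    rw [hζ'def, indicator_of_mem hmem]
    exact hu hmem
  have heqη : ∀ᵐ u : ℝ, u ∈ Ioo (0:ℝ) n → η u = η' u := by
    filter_upwards [(ae_restrict_iff' measurableSet_Ioo).1 hηae.ae_eq_mk] with u hu hmem
    rw [hη'def, indicator_of_mem hmem]
    exact hu hmem
  have hζ'int : IntegrableOn ζ' (Ioo 0 n) :=
    hζ.congr ((ae_restrict_iff' measurableSet_Ioo).2 heqζ)
  have hη'int : IntegrableOn η' (Ioo 0 n) :=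
    hη.congr ((ae_restrict_iff' measurableSet_Ioo).2 heqη)
  have e1 : ∫ x in Ioo (0:ℝ) n, |trB1 A n ζ x - trB1 A n η x| =
      ∫ x in Ioo (0:ℝ) n, |trB1 A n ζ' x - trB1 A n η' x| :=
    setIntegral_congr_fun measurableSet_Ioo fun x hx => by
      rw [trB1_congr heqζ hx, trB1_congr heqη hx]
  have e2 : ∫ x in Ioo (0:ℝ) n, |ζ x| = ∫ x in Ioo (0:ℝ) n, |ζ' x| :=
    setIntegral_congr_ae measurableSet_Ioo (heqζ.mono fun x h hx => by rw [h hx])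
  have e3 : ∫ x in Ioo (0:ℝ) n, |η x| = ∫ x in Ioo (0:ℝ) n, |η' x| :=
    setIntegral_congr_ae measurableSet_Ioo (heqη.mono fun x h hx => by rw [h hx])
  have e4 : ∫ x in Ioo (0:ℝ) n, |ζ x - η x| = ∫ x in Ioo (0:ℝ) n, |ζ' x - η' x| :=
    setIntegral_congr_ae measurableSet_Ioo
      ((heqζ.and heqη).mono fun x h hx => by rw [h.1 hx, h.2 hx])
  rw [e1, e2, e3, e4]
  exact main_meas hn hc hA_meas hA_nonneg hφ_nonneg hφ_int hbound ζ' η' hζ'm hη'm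
    hζ'int hη'int
end

section
/- Let ζ be a weak solution of the continuous generalized exchange-driven growth equation with initial datum ζ^in ∈ L¹((0,∞),(1+x)dx), where the kernel 𝒜 satisfies 𝒜(x,y;z)=0 for z>x and the sum-type bound 𝒜(x,y;z) ≤ A φ(z) for x+y<1 and 𝒜(x,y;z) ≤ A(x+y)φ(z) for x+y>1, with φ a nonnegative function in L¹((0,∞),(1+x)dx). Then, writing ℬ(x,y;z,ζ(s)) := 𝒜(x,y;z) ζ(s,x) ζ(s,y), for every p > 0 and t ≥ 0: ∫_p^∞ [ζ(t,x) − ζ^in(x)] dx = ∫₀^t ( ∫₀^p ∫_{p−z}^p ∫_z^∞ − ∫_p^∞ ∫_p^∞ ∫_z^∞ − ∫₀^p ∫₀^∞ ∫_p^{p+z} + ∫_p^∞ ∫₀^∞ ∫_{p+z}^∞ ) ℬ(x,y;z,ζ(s)) dx dy dz ds; and moreover lim_{p→∞} p ∫_p^∞ [ζ(t,x) − ζ^in(x)] dx = 0. -/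
open MeasureTheory Set Filter

open scoped ENNReal

noncomputable section

namespace CGEDG

/-- characteristic value of a proposition -/
noncomputable def χ (P : Prop) : ℝ≥0∞ := by classical exact if P then 1 else 0

lemma χ_le_one (P : Prop) : χ P ≤ 1 := by
  classical
  by_cases h : P <;> simp [χ, h]

lemma χ_ne_top (P : Prop) : χ P ≠ ∞ := by
  classical by_cases h : P <;> simp [χ, h]

lemma χ_meas {α} [MeasurableSpace α] {P : α → Prop} (h : MeasurableSet {a | P a}) :
    Measurable (fun a => χ (P a)) := by
  classical
  have : (fun a => χ (P a)) = {a | P a}.indicator (fun _ => (1:ℝ≥0∞)) := by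
    funext a; by_cases ha : P a <;> simp [χ, ha, Set.indicator_apply, Set.mem_setOf_eq]
  rw [this]
  exact measurable_const.indicator h

lemma toReal_χ_mul_ofReal (P : Prop) {b : ℝ} (hb : 0 ≤ b) :
    (χ P * ENNReal.ofReal b).toReal = (χ P).toReal * b := by
  classical
  by_cases h : P <;> simp [χ, h, ENNReal.toReal_ofReal hb]

/-- One-level conversion of a Bochner integral of a nonnegative function to a lintegral. -/
lemma integral_toReal_lintegral {μ : Measure ℝ} {f : ℝ → ℝ≥0∞} (hf : AEMeasurable f μ)
    (hfin : ∀ᵐ a ∂μ, f a ≠ ∞) :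
    ∫ a, (f a).toReal ∂μ = (∫⁻ a, f a ∂μ).toReal := by
  rw [integral_eq_lintegral_of_nonneg_ae (Filter.Eventually.of_forall fun a => ENNReal.toReal_nonneg)
    (ENNReal.measurable_toReal.comp_aemeasurable hf).aestronglyMeasurable]
  congr 1
  apply lintegral_congr_ae
  filter_upwards [hfin] with a ha
  exact ENNReal.ofReal_toReal ha

end CGEDG
namespace CGEDG

variable {f : ℝ → ℝ → ℝ → ℝ≥0∞}

lemma meas_slice₁ (hf : Measurable fun q : ℝ×ℝ×ℝ => f q.1 q.2.1 q.2.2) (x y : ℝ) :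
    Measurable fun z => f x y z :=
  hf.comp (measurable_const.prodMk (measurable_const.prodMk measurable_id))

lemma meas_slice₂ (hf : Measurable fun q : ℝ×ℝ×ℝ => f q.1 q.2.1 q.2.2) (x : ℝ)
    (ν : Measure ℝ) [SFinite ν] : Measurable fun y => ∫⁻ z, f x y z ∂ν := by
  apply Measurable.lintegral_prod_right' (f := fun q : ℝ × ℝ => f x q.1 q.2)
  exact hf.comp (measurable_const.prodMk measurable_id)

lemma meas_slice₃ (hf : Measurable fun q : ℝ×ℝ×ℝ => f q.1 q.2.1 q.2.2)
    (ν ρ : Measure ℝ) [SFinite ν] [SFinite ρ] :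
    Measurable fun x => ∫⁻ y, ∫⁻ z, f x y z ∂ρ ∂ν := by
  apply Measurable.lintegral_prod_right' (f := fun q : ℝ × ℝ => ∫⁻ z, f q.1 q.2 z ∂ρ)
  apply Measurable.lintegral_prod_right' (f := fun q : (ℝ × ℝ) × ℝ => f q.1.1 q.1.2 q.2)
  exact hf.comp ((measurable_fst.comp measurable_fst).prodMk
    ((measurable_snd.comp measurable_fst).prodMk measurable_snd))

/-- Reorder a triple iterated lower integral. -/
lemma lintegral3_swap (μ1 μ2 μ3 : Measure ℝ) [SFinite μ1] [SFinite μ2] [SFinite μ3]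
    (hf : Measurable fun q : ℝ×ℝ×ℝ => f q.1 q.2.1 q.2.2) :
    ∫⁻ a, ∫⁻ b, ∫⁻ c, f a b c ∂μ3 ∂μ2 ∂μ1 = ∫⁻ c, ∫⁻ b, ∫⁻ a, f a b c ∂μ1 ∂μ2 ∂μ3 := by
  have h1 : ∀ a : ℝ, ∫⁻ b, ∫⁻ c, f a b c ∂μ3 ∂μ2 = ∫⁻ c, ∫⁻ b, f a b c ∂μ2 ∂μ3 := by
    intro a
    apply lintegral_lintegral_swap
    exact (hf.comp (measurable_const.prodMk (measurable_fst.prodMk measurable_snd))).aemeasurable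
  simp_rw [h1]
  have h2 : ∫⁻ a, ∫⁻ c, (fun a c => ∫⁻ b, f a b c ∂μ2) a c ∂μ3 ∂μ1
      = ∫⁻ c, ∫⁻ a, (fun a c => ∫⁻ b, f a b c ∂μ2) a c ∂μ1 ∂μ3 := by
    apply lintegral_lintegral_swap
    apply Measurable.aemeasurable
    apply Measurable.lintegral_prod_right' (f := fun q : (ℝ × ℝ) × ℝ => f q.1.1 q.2 q.1.2)
    exact hf.comp ((measurable_fst.comp measurable_fst).prodMk
      (measurable_snd.prodMk (measurable_snd.comp measurable_fst)))
  simp only at h2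
  rw [h2]
  congr 1
  funext csupp
  apply lintegral_lintegral_swap
  exact (hf.comp (measurable_fst.prodMk (measurable_snd.prodMk measurable_const))).aemeasurable

/-- Conversion of a nonnegative triple Bochner integral into a triple lower integral. -/
lemma conv3 (μ1 μ2 μ3 : Measure ℝ) [SFinite μ2] [SFinite μ3]
    (hf : Measurable fun q : ℝ×ℝ×ℝ => f q.1 q.2.1 q.2.2)
    (hpt : ∀ a b c, f a b c ≠ ∞)
    (hfin : (∫⁻ a, ∫⁻ b, ∫⁻ c, f a b c ∂μ3 ∂μ2 ∂μ1) ≠ ∞) :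
    ∫ a, ∫ b, ∫ c, (f a b c).toReal ∂μ3 ∂μ2 ∂μ1
      = (∫⁻ a, ∫⁻ b, ∫⁻ c, f a b c ∂μ3 ∂μ2 ∂μ1).toReal := by
  have m2 : ∀ a, Measurable fun b => ∫⁻ c, f a b c ∂μ3 := fun a => meas_slice₂ hf a μ3
  have m3 : Measurable fun a => ∫⁻ b, ∫⁻ c, f a b c ∂μ3 ∂μ2 := meas_slice₃ hf μ2 μ3
  have e1 : ∀ a b, ∫ c, (f a b c).toReal ∂μ3 = ((∫⁻ c, f a b c ∂μ3)).toReal := by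
    intro a b
    exact integral_toReal_lintegral (meas_slice₁ hf a b).aemeasurable
      (Filter.Eventually.of_forall fun c => hpt a b c)
  have hae1 : ∀ᵐ a ∂μ1, (∫⁻ b, ∫⁻ c, f a b c ∂μ3 ∂μ2) ≠ ∞ :=
    (ae_lt_top m3 hfin).mono fun a ha => ha.ne
  have e2 : ∀ᵐ a ∂μ1, ∫ b, ∫ c, (f a b c).toReal ∂μ3 ∂μ2
      = (∫⁻ b, ∫⁻ c, f a b c ∂μ3 ∂μ2).toReal := by
    filter_upwards [hae1] with a ha
    simp_rw [e1 a]
    exact integral_toReal_lintegral (m2 a).aemeasurable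
      ((ae_lt_top (m2 a) ha).mono fun b hb => hb.ne)
  rw [integral_congr_ae e2]
  exact integral_toReal_lintegral m3.aemeasurable hae1

lemma split4 (μ1 μ2 μ3 : Measure ℝ) [SFinite μ2] [SFinite μ3]
    (f1 f2 f3 f4 : ℝ → ℝ → ℝ → ℝ≥0∞)
    (h1 : Measurable fun q : ℝ×ℝ×ℝ => f1 q.1 q.2.1 q.2.2)
    (h2 : Measurable fun q : ℝ×ℝ×ℝ => f2 q.1 q.2.1 q.2.2)
    (h3 : Measurable fun q : ℝ×ℝ×ℝ => f3 q.1 q.2.1 q.2.2)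
    (h4 : Measurable fun q : ℝ×ℝ×ℝ => f4 q.1 q.2.1 q.2.2)
    (hfin1 : (∫⁻ a, ∫⁻ b, ∫⁻ c, f1 a b c ∂μ3 ∂μ2 ∂μ1) ≠ ∞)
    (hfin2 : (∫⁻ a, ∫⁻ b, ∫⁻ c, f2 a b c ∂μ3 ∂μ2 ∂μ1) ≠ ∞)
    (hfin3 : (∫⁻ a, ∫⁻ b, ∫⁻ c, f3 a b c ∂μ3 ∂μ2 ∂μ1) ≠ ∞)
    (hfin4 : (∫⁻ a, ∫⁻ b, ∫⁻ c, f4 a b c ∂μ3 ∂μ2 ∂μ1) ≠ ∞) :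
    ∫ a, ∫ b, ∫ c, ((f1 a b c).toReal + (f2 a b c).toReal
        - (f3 a b c).toReal - (f4 a b c).toReal) ∂μ3 ∂μ2 ∂μ1
      = (∫⁻ a, ∫⁻ b, ∫⁻ c, f1 a b c ∂μ3 ∂μ2 ∂μ1).toReal
        + (∫⁻ a, ∫⁻ b, ∫⁻ c, f2 a b c ∂μ3 ∂μ2 ∂μ1).toReal
        - (∫⁻ a, ∫⁻ b, ∫⁻ c, f3 a b c ∂μ3 ∂μ2 ∂μ1).toReal
        - (∫⁻ a, ∫⁻ b, ∫⁻ c, f4 a b c ∂μ3 ∂μ2 ∂μ1).toReal := by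
  have key : ∀ (f : ℝ → ℝ → ℝ → ℝ≥0∞),
      (Measurable fun q : ℝ×ℝ×ℝ => f q.1 q.2.1 q.2.2) →
      (∫⁻ a, ∫⁻ b, ∫⁻ c, f a b c ∂μ3 ∂μ2 ∂μ1) ≠ ∞ →
      ∀ᵐ a ∂μ1, ((∫⁻ b, ∫⁻ c, f a b c ∂μ3 ∂μ2) ≠ ∞ ∧
        (∀ᵐ b ∂μ2, (∫⁻ c, f a b c ∂μ3) ≠ ∞) ∧
        Integrable (fun b => (∫⁻ c, f a b c ∂μ3).toReal) μ2 ∧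
        ∫ b, (∫⁻ c, f a b c ∂μ3).toReal ∂μ2 = (∫⁻ b, ∫⁻ c, f a b c ∂μ3 ∂μ2).toReal) := by
    intro f hf hfin
    filter_upwards [(ae_lt_top (meas_slice₃ hf μ2 μ3) hfin).mono fun a ha => ha.ne] with a ha
    have hb : ∀ᵐ b ∂μ2, (∫⁻ c, f a b c ∂μ3) ≠ ∞ :=
      (ae_lt_top (meas_slice₂ hf a μ3) ha).mono fun b hb => hb.ne
    refine ⟨ha, hb, ?_, ?_⟩
    · exact integrable_toReal_of_lintegral_ne_top (meas_slice₂ hf a μ3).aemeasurable ha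
    · exact integral_toReal_lintegral (meas_slice₂ hf a μ3).aemeasurable hb
  have outer : ∀ᵐ a ∂μ1, ∫ b, ∫ c, ((f1 a b c).toReal + (f2 a b c).toReal
        - (f3 a b c).toReal - (f4 a b c).toReal) ∂μ3 ∂μ2
      = (∫⁻ b, ∫⁻ c, f1 a b c ∂μ3 ∂μ2).toReal + (∫⁻ b, ∫⁻ c, f2 a b c ∂μ3 ∂μ2).toReal
        - (∫⁻ b, ∫⁻ c, f3 a b c ∂μ3 ∂μ2).toReal - (∫⁻ b, ∫⁻ c, f4 a b c ∂μ3 ∂μ2).toReal := by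
    filter_upwards [key f1 h1 hfin1, key f2 h2 hfin2, key f3 h3 hfin3, key f4 h4 hfin4]
      with a ⟨hA1, hB1, hI1, hE1⟩ ⟨hA2, hB2, hI2, hE2⟩ ⟨hA3, hB3, hI3, hE3⟩ ⟨hA4, hB4, hI4, hE4⟩
    have hinner : ∀ᵐ b ∂μ2, ∫ c, ((f1 a b c).toReal + (f2 a b c).toReal
          - (f3 a b c).toReal - (f4 a b c).toReal) ∂μ3
        = (∫⁻ c, f1 a b c ∂μ3).toReal + (∫⁻ c, f2 a b c ∂μ3).toReal
          - (∫⁻ c, f3 a b c ∂μ3).toReal - (∫⁻ c, f4 a b c ∂μ3).toReal := by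
      filter_upwards [hB1, hB2, hB3, hB4] with b hb1 hb2 hb3 hb4
      have i1 : Integrable (fun c => (f1 a b c).toReal) μ3 :=
        integrable_toReal_of_lintegral_ne_top (meas_slice₁ h1 a b).aemeasurable hb1
      have i2 : Integrable (fun c => (f2 a b c).toReal) μ3 :=
        integrable_toReal_of_lintegral_ne_top (meas_slice₁ h2 a b).aemeasurable hb2
      have i3 : Integrable (fun c => (f3 a b c).toReal) μ3 :=
        integrable_toReal_of_lintegral_ne_top (meas_slice₁ h3 a b).aemeasurable hb3
      have i4 : Integrable (fun c => (f4 a b c).toReal) μ3 :=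
        integrable_toReal_of_lintegral_ne_top (meas_slice₁ h4 a b).aemeasurable hb4
      have e1 := integral_toReal_lintegral (μ := μ3) (meas_slice₁ h1 a b).aemeasurable
        ((ae_lt_top (meas_slice₁ h1 a b) hb1).mono fun c hc => hc.ne)
      have e2 := integral_toReal_lintegral (μ := μ3) (meas_slice₁ h2 a b).aemeasurable
        ((ae_lt_top (meas_slice₁ h2 a b) hb2).mono fun c hc => hc.ne)
      have e3 := integral_toReal_lintegral (μ := μ3) (meas_slice₁ h3 a b).aemeasurable
        ((ae_lt_top (meas_slice₁ h3 a b) hb3).mono fun c hc => hc.ne)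
      have e4 := integral_toReal_lintegral (μ := μ3) (meas_slice₁ h4 a b).aemeasurable
        ((ae_lt_top (meas_slice₁ h4 a b) hb4).mono fun c hc => hc.ne)
      have comb : (fun c => (f1 a b c).toReal + (f2 a b c).toReal
          - (f3 a b c).toReal - (f4 a b c).toReal)
          = fun c => ((f1 a b c).toReal + (f2 a b c).toReal) - ((f3 a b c).toReal + (f4 a b c).toReal) := by
        funext csupp; ring
      have i12 : Integrable (fun c => (f1 a b c).toReal + (f2 a b c).toReal) μ3 := i1.add i2
      have i34 : Integrable (fun c => (f3 a b c).toReal + (f4 a b c).toReal) μ3 := i3.add i4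
      rw [comb, integral_sub i12 i34, integral_add i1 i2, integral_add i3 i4,
        e1, e2, e3, e4]
      ring
    rw [integral_congr_ae hinner]
    have comb : (fun b => (∫⁻ c, f1 a b c ∂μ3).toReal + (∫⁻ c, f2 a b c ∂μ3).toReal
        - (∫⁻ c, f3 a b c ∂μ3).toReal - (∫⁻ c, f4 a b c ∂μ3).toReal)
        = fun b => ((∫⁻ c, f1 a b c ∂μ3).toReal + (∫⁻ c, f2 a b c ∂μ3).toReal)
          - ((∫⁻ c, f3 a b c ∂μ3).toReal + (∫⁻ c, f4 a b c ∂μ3).toReal) := by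
      funext bsupp; ring
    have hI12 : Integrable (fun b => (∫⁻ c, f1 a b c ∂μ3).toReal + (∫⁻ c, f2 a b c ∂μ3).toReal) μ2 := hI1.add hI2
    have hI34 : Integrable (fun b => (∫⁻ c, f3 a b c ∂μ3).toReal + (∫⁻ c, f4 a b c ∂μ3).toReal) μ2 := hI3.add hI4
    rw [comb, integral_sub hI12 hI34, integral_add hI1 hI2,
      integral_add hI3 hI4, hE1, hE2, hE3, hE4]
    ring
  rw [integral_congr_ae outer]
  have J : ∀ (f : ℝ → ℝ → ℝ → ℝ≥0∞),
      (Measurable fun q : ℝ×ℝ×ℝ => f q.1 q.2.1 q.2.2) →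
      (∫⁻ a, ∫⁻ b, ∫⁻ c, f a b c ∂μ3 ∂μ2 ∂μ1) ≠ ∞ →
      Integrable (fun a => (∫⁻ b, ∫⁻ c, f a b c ∂μ3 ∂μ2).toReal) μ1 ∧
      ∫ a, (∫⁻ b, ∫⁻ c, f a b c ∂μ3 ∂μ2).toReal ∂μ1
        = (∫⁻ a, ∫⁻ b, ∫⁻ c, f a b c ∂μ3 ∂μ2 ∂μ1).toReal := by
    intro f hf hfin
    refine ⟨integrable_toReal_of_lintegral_ne_top (meas_slice₃ hf μ2 μ3).aemeasurable hfin,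
      integral_toReal_lintegral (meas_slice₃ hf μ2 μ3).aemeasurable
        ((ae_lt_top (meas_slice₃ hf μ2 μ3) hfin).mono fun a ha => ha.ne)⟩
  obtain ⟨I1, E1⟩ := J f1 h1 hfin1
  obtain ⟨I2, E2⟩ := J f2 h2 hfin2
  obtain ⟨I3, E3⟩ := J f3 h3 hfin3
  obtain ⟨I4, E4⟩ := J f4 h4 hfin4
  have comb : (fun a => (∫⁻ b, ∫⁻ c, f1 a b c ∂μ3 ∂μ2).toReal + (∫⁻ b, ∫⁻ c, f2 a b c ∂μ3 ∂μ2).toReal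
      - (∫⁻ b, ∫⁻ c, f3 a b c ∂μ3 ∂μ2).toReal - (∫⁻ b, ∫⁻ c, f4 a b c ∂μ3 ∂μ2).toReal)
      = fun a => ((∫⁻ b, ∫⁻ c, f1 a b c ∂μ3 ∂μ2).toReal + (∫⁻ b, ∫⁻ c, f2 a b c ∂μ3 ∂μ2).toReal)
        - ((∫⁻ b, ∫⁻ c, f3 a b c ∂μ3 ∂μ2).toReal + (∫⁻ b, ∫⁻ c, f4 a b c ∂μ3 ∂μ2).toReal) := by
    funext asupp; ring
  have I12 : Integrable (fun a => (∫⁻ b, ∫⁻ c, f1 a b c ∂μ3 ∂μ2).toReal + (∫⁻ b, ∫⁻ c, f2 a b c ∂μ3 ∂μ2).toReal) μ1 := I1.add I2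
  have I34 : Integrable (fun a => (∫⁻ b, ∫⁻ c, f3 a b c ∂μ3 ∂μ2).toReal + (∫⁻ b, ∫⁻ c, f4 a b c ∂μ3 ∂μ2).toReal) μ1 := I3.add I4
  rw [comb, integral_sub I12 I34, integral_add I1 I2, integral_add I3 I4,
    E1, E2, E3, E4]
  ring

structure Hyps (A : ℝ → ℝ → ℝ → ℝ) (φ : ℝ → ℝ) (c : ℝ) : Prop where
  hc : 0 ≤ c
  meas : Measurable (fun q : ℝ × ℝ × ℝ => A q.1 q.2.1 q.2.2)
  nonneg : ∀ x y z, 0 ≤ A x y z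
  sum₁ : ∀ x y z, 0 < x → 0 < y → 0 < z → x + y < 1 → A x y z ≤ c * φ z
  sum₂ : ∀ x y z, 0 < x → 0 < y → 0 < z → 1 < x + y → A x y z ≤ c * (x + y) * φ z
  φ0 : ∀ x, 0 ≤ φ x
  φint : IntegrableOn (fun x => (1 + x) * φ x) (Ioi 0)

structure Good (u : ℝ → ℝ) : Prop where
  meas : Measurable u
  nn : ∀ x, 0 ≤ u x
  int : IntegrableOn (fun x => (1 + x) * u x) (Ioi 0)

def Psi (A : ℝ → ℝ → ℝ → ℝ) (u : ℝ → ℝ) (x y z : ℝ) : ℝ≥0∞ :=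
  ENNReal.ofReal (A x y z * u x * u y)

lemma Psi_ne_top (A : ℝ → ℝ → ℝ → ℝ) (u : ℝ → ℝ) (x y z : ℝ) : Psi A u x y z ≠ ∞ :=
  ENNReal.ofReal_ne_top

lemma Psi_meas {A : ℝ → ℝ → ℝ → ℝ} {u : ℝ → ℝ}
    (hA : Measurable (fun q : ℝ × ℝ × ℝ => A q.1 q.2.1 q.2.2)) (hu : Measurable u) :
    Measurable fun q : ℝ×ℝ×ℝ => Psi A u q.1 q.2.1 q.2.2 := by
  apply ENNReal.measurable_ofReal.comp
  exact (hA.mul (hu.comp measurable_fst)).mul (hu.comp (measurable_fst.comp measurable_snd))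

def NN (A : ℝ → ℝ → ℝ → ℝ) (u : ℝ → ℝ) (w : ℝ → ℝ → ℝ → ℝ≥0∞) : ℝ≥0∞ :=
  ∫⁻ x in Ioi (0:ℝ), ∫⁻ y in Ioi (0:ℝ), ∫⁻ z, w x y z * Psi A u x y z

def Cphi (φ : ℝ → ℝ) : ℝ≥0∞ := ∫⁻ z in Ioi (0:ℝ), ENNReal.ofReal (φ z)
def CI (u : ℝ → ℝ) : ℝ≥0∞ := ∫⁻ x in Ioi (0:ℝ), ENNReal.ofReal ((1 + x) * u x)
def master (c : ℝ) (φ u : ℝ → ℝ) : ℝ≥0∞ :=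
  ENNReal.ofReal c * (CI u * Cphi φ) * CI u

lemma asm_of_weight {g : ℝ → ℝ}
    (h : AEStronglyMeasurable (fun x => (1 + x) * g x) (volume.restrict (Ioi 0))) :
    AEStronglyMeasurable g (volume.restrict (Ioi 0)) := by
  have hc : AEStronglyMeasurable (fun x : ℝ => ((1 + x))⁻¹) (volume.restrict (Ioi 0)) :=
    ((measurable_const.add measurable_id).inv).aestronglyMeasurable
  refine (h.mul hc).congr ?_
  filter_upwards [ae_restrict_mem measurableSet_Ioi] with x hx
  have h1 : (1:ℝ) + x ≠ 0 := by simp only [mem_Ioi] at hx; positivity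
  simp only [Pi.mul_apply]
  field_simp

lemma integrableOn_of_weight {g : ℝ → ℝ} (h0 : ∀ x, 0 ≤ g x)
    (hint : IntegrableOn (fun x => (1 + x) * g x) (Ioi 0)) : IntegrableOn g (Ioi 0) := by
  refine hint.mono' (asm_of_weight hint.aestronglyMeasurable) ?_
  filter_upwards [ae_restrict_mem measurableSet_Ioi] with x hx
  simp only [mem_Ioi] at hx
  rw [Real.norm_eq_abs, abs_of_nonneg (h0 x)]
  nlinarith [h0 x]

lemma lint_ofReal_ne_top {g : ℝ → ℝ}
    (h0 : ∀ᵐ x ∂(volume.restrict (Ioi (0:ℝ))), 0 ≤ g x)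
    (h : IntegrableOn g (Ioi 0)) : (∫⁻ x in Ioi (0:ℝ), ENNReal.ofReal (g x)) ≠ ∞ := by
  have := (hasFiniteIntegral_iff_ofReal h0).1 h.hasFiniteIntegral
  exact this.ne

lemma Cphi_ne_top {A : ℝ → ℝ → ℝ → ℝ} {φ : ℝ → ℝ} {c : ℝ} (hA : Hyps A φ c) :
    Cphi φ ≠ ∞ :=
  lint_ofReal_ne_top (Filter.Eventually.of_forall hA.φ0)
    (integrableOn_of_weight hA.φ0 hA.φint)

lemma CI_ne_top {u : ℝ → ℝ} (hu : Good u) : CI u ≠ ∞ := by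
  apply lint_ofReal_ne_top _ hu.int
  filter_upwards [ae_restrict_mem measurableSet_Ioi] with x hx
  simp only [mem_Ioi] at hx
  nlinarith [hu.nn x]

lemma ae_ne_real (a : ℝ) : ∀ᵐ x ∂(volume : Measure ℝ), x ≠ a := by
  have : (volume : Measure ℝ) {x | ¬ x ≠ a} = 0 := by
    simp only [ne_eq, not_not, setOf_eq_eq_singleton]
    exact measure_singleton a
  exact (ae_iff).2 this

lemma A_le {A : ℝ → ℝ → ℝ → ℝ} {φ : ℝ → ℝ} {c : ℝ} (hA : Hyps A φ c)
    {x y z : ℝ} (hx : 0 < x) (hy : 0 < y) (hz : 0 < z) (hxy : x + y ≠ 1) :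
    A x y z ≤ c * φ z * ((1 + x) * (1 + y)) := by
  have hcφ : 0 ≤ c * φ z := mul_nonneg hA.hc (hA.φ0 z)
  rcases lt_or_gt_of_ne hxy with h | h
  · have h1 := hA.sum₁ x y z hx hy hz h
    have h2 : (1:ℝ) ≤ (1 + x) * (1 + y) := by nlinarith
    nlinarith [mul_le_mul_of_nonneg_left h2 hcφ]
  · have h1 := hA.sum₂ x y z hx hy hz h
    have h2 : x + y ≤ (1 + x) * (1 + y) := by nlinarith
    nlinarith [mul_le_mul_of_nonneg_left h2 hcφ]

lemma zlint_le {A : ℝ → ℝ → ℝ → ℝ} {φ : ℝ → ℝ} {c : ℝ} (hA : Hyps A φ c)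
    {u : ℝ → ℝ} (hu : Good u) {x y : ℝ} (hx : 0 < x) (hy : 0 < y) (hxy : x + y ≠ 1) :
    (∫⁻ z, χ (0 < z) * Psi A u x y z)
      ≤ ENNReal.ofReal (c * ((1 + x) * u x)) * (ENNReal.ofReal ((1 + y) * u y) * Cphi φ) := by
  classical
  have hbd : ∀ z, χ (0 < z) * Psi A u x y z
      ≤ (Ioi (0:ℝ)).indicator
          (fun z => ENNReal.ofReal (c * ((1 + x) * u x) * ((1 + y) * u y)) * ENNReal.ofReal (φ z)) z := by
    intro z
    by_cases hz : 0 < z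
    · rw [Set.indicator_of_mem (by exact hz : z ∈ Ioi (0:ℝ))]
      simp only [χ, if_pos hz, one_mul]
      rw [← ENNReal.ofReal_mul (mul_nonneg (mul_nonneg hA.hc
        (mul_nonneg (by linarith : (0:ℝ) ≤ 1 + x) (hu.nn x)))
        (mul_nonneg (by linarith : (0:ℝ) ≤ 1 + y) (hu.nn y)))]
      apply ENNReal.ofReal_le_ofReal
      have h2 := mul_le_mul_of_nonneg_right (A_le hA hx hy hz hxy)
        (mul_nonneg (hu.nn x) (hu.nn y))
      calc A x y z * u x * u y = A x y z * (u x * u y) := by ring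
        _ ≤ c * φ z * ((1 + x) * (1 + y)) * (u x * u y) := h2
        _ = c * ((1 + x) * u x) * ((1 + y) * u y) * φ z := by ring
    · simp [χ, if_neg hz]
  calc (∫⁻ z, χ (0 < z) * Psi A u x y z)
      ≤ ∫⁻ z, (Ioi (0:ℝ)).indicator
          (fun z => ENNReal.ofReal (c * ((1 + x) * u x) * ((1 + y) * u y)) * ENNReal.ofReal (φ z)) z :=
        lintegral_mono hbd
    _ = ∫⁻ z in Ioi (0:ℝ), ENNReal.ofReal (c * ((1 + x) * u x) * ((1 + y) * u y)) * ENNReal.ofReal (φ z) := by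
        rw [lintegral_indicator measurableSet_Ioi]
    _ = ENNReal.ofReal (c * ((1 + x) * u x) * ((1 + y) * u y)) * Cphi φ :=
        lintegral_const_mul' _ _ ENNReal.ofReal_ne_top
    _ = ENNReal.ofReal (c * ((1 + x) * u x)) * (ENNReal.ofReal ((1 + y) * u y) * Cphi φ) := by
        rw [ENNReal.ofReal_mul (mul_nonneg hA.hc
          (mul_nonneg (by linarith : (0:ℝ) ≤ 1 + x) (hu.nn x)))]
        ring

lemma NN_le_master {A : ℝ → ℝ → ℝ → ℝ} {φ : ℝ → ℝ} {c : ℝ} (hA : Hyps A φ c)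
    {u : ℝ → ℝ} (hu : Good u) :
    NN A u (fun _ _ z => χ (0 < z)) ≤ master c φ u := by
  unfold NN
  have hmid : ∀ x : ℝ, 0 < x →
      (∫⁻ y in Ioi (0:ℝ), ∫⁻ z, χ (0 < z) * Psi A u x y z)
        ≤ ENNReal.ofReal (c * ((1 + x) * u x)) * (CI u * Cphi φ) := by
    intro x hx
    have h1 : (∫⁻ y in Ioi (0:ℝ), ∫⁻ z, χ (0 < z) * Psi A u x y z)
        ≤ ∫⁻ y in Ioi (0:ℝ),
            ENNReal.ofReal (c * ((1 + x) * u x)) * (ENNReal.ofReal ((1 + y) * u y) * Cphi φ) := by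
      apply lintegral_mono_ae
      filter_upwards [ae_restrict_mem measurableSet_Ioi,
        ae_restrict_of_ae (ae_ne_real (1 - x))] with y hy hne
      exact zlint_le hA hu hx hy (by intro h; apply hne; linarith)
    refine h1.trans ?_
    rw [lintegral_const_mul' _ _ ENNReal.ofReal_ne_top]
    apply mul_le_mul_right
    rw [lintegral_mul_const' _ _ (Cphi_ne_top hA)]
    exact le_rfl
  calc (∫⁻ x in Ioi (0:ℝ), ∫⁻ y in Ioi (0:ℝ), ∫⁻ z, χ (0 < z) * Psi A u x y z)
      ≤ ∫⁻ x in Ioi (0:ℝ), ENNReal.ofReal (c * ((1 + x) * u x)) * (CI u * Cphi φ) := by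
        apply lintegral_mono_ae
        filter_upwards [ae_restrict_mem measurableSet_Ioi] with x hx
        exact hmid x hx
    _ = ∫⁻ x in Ioi (0:ℝ),
          (ENNReal.ofReal c * (CI u * Cphi φ)) * ENNReal.ofReal ((1 + x) * u x) := by
        apply lintegral_congr
        intro x
        rw [ENNReal.ofReal_mul hA.hc]
        ring
    _ = (ENNReal.ofReal c * (CI u * Cphi φ)) * CI u := by
        apply lintegral_const_mul'
        exact ENNReal.mul_ne_top ENNReal.ofReal_ne_top
          (ENNReal.mul_ne_top (CI_ne_top hu) (Cphi_ne_top hA))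
    _ = master c φ u := by unfold master; ring

lemma master_ne_top {A : ℝ → ℝ → ℝ → ℝ} {φ : ℝ → ℝ} {c : ℝ} (hA : Hyps A φ c)
    {u : ℝ → ℝ} (hu : Good u) : master c φ u ≠ ∞ := by
  unfold master
  exact ENNReal.mul_ne_top (ENNReal.mul_ne_top ENNReal.ofReal_ne_top
    (ENNReal.mul_ne_top (CI_ne_top hu) (Cphi_ne_top hA))) (CI_ne_top hu)

lemma NN_mono {A : ℝ → ℝ → ℝ → ℝ} {u : ℝ → ℝ} {w w' : ℝ → ℝ → ℝ → ℝ≥0∞}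
    (h : ∀ x y z, w x y z ≤ w' x y z) : NN A u w ≤ NN A u w' := by
  unfold NN
  refine lintegral_mono fun x => lintegral_mono fun y => lintegral_mono fun z => ?_
  exact mul_le_mul_left (h x y z) _

lemma NN_fin {A : ℝ → ℝ → ℝ → ℝ} {φ : ℝ → ℝ} {c : ℝ} (hA : Hyps A φ c)
    {u : ℝ → ℝ} (hu : Good u) {w : ℝ → ℝ → ℝ → ℝ≥0∞}
    (hw : ∀ x y z, w x y z ≤ χ (0 < z)) : NN A u w ≠ ∞ :=
  (lt_of_le_of_lt (le_trans (NN_mono hw) (NN_le_master hA hu))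
    (lt_top_iff_ne_top.2 (master_ne_top hA hu))).ne

def wq1 (p x y z : ℝ) : ℝ≥0∞ := χ (0 < z ∧ z ≤ x ∧ p < y + z)
def wq2 (p x y z : ℝ) : ℝ≥0∞ := χ (0 < z ∧ z ≤ x ∧ p < x - z)
def wq3 (p x y z : ℝ) : ℝ≥0∞ := χ (0 < z ∧ z ≤ x ∧ p < x)
def wq4 (p x y z : ℝ) : ℝ≥0∞ := χ (0 < z ∧ z ≤ x ∧ p < y)
def wm1 (p x y z : ℝ) : ℝ≥0∞ := χ ((0 < z ∧ z < p) ∧ (p - z < y ∧ y < p) ∧ z < x)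
def wm2 (p x y z : ℝ) : ℝ≥0∞ := χ (p < z ∧ p < y ∧ z < x)
def wm3 (p x y z : ℝ) : ℝ≥0∞ := χ ((0 < z ∧ z < p) ∧ p < x ∧ x < p + z)
def wm4 (p x y z : ℝ) : ℝ≥0∞ := χ (p < z ∧ p + z < x)
def wu1 (p x y z : ℝ) : ℝ≥0∞ := χ (0 < z ∧ z ≤ x ∧ p - z < y ∧ y ≤ p)
def wu3 (p x y z : ℝ) : ℝ≥0∞ := χ (0 < z ∧ z ≤ x ∧ p < x ∧ x ≤ p + z)
def wv1 (p x y z : ℝ) : ℝ≥0∞ := χ (p < z ∧ z < x ∧ y < p)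
def wv3 (p x y z : ℝ) : ℝ≥0∞ := χ (p < z ∧ z < x ∧ x < p + z)
def wt (p x y z : ℝ) : ℝ≥0∞ := χ (p < z ∧ z < x)

section WeightMeas

private abbrev mX : Measurable fun q : ℝ×ℝ×ℝ => q.1 := measurable_fst
private abbrev mY : Measurable fun q : ℝ×ℝ×ℝ => q.2.1 := measurable_fst.comp measurable_snd
private abbrev mZ : Measurable fun q : ℝ×ℝ×ℝ => q.2.2 := measurable_snd.comp measurable_snd

lemma wq1_meas (p : ℝ) : Measurable fun q : ℝ×ℝ×ℝ => wq1 p q.1 q.2.1 q.2.2 := by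
  apply χ_meas; simp only [setOf_and]
  exact (measurableSet_lt measurable_const mZ).inter ((measurableSet_le mZ mX).inter
    (measurableSet_lt measurable_const (mY.add mZ)))

lemma wq2_meas (p : ℝ) : Measurable fun q : ℝ×ℝ×ℝ => wq2 p q.1 q.2.1 q.2.2 := by
  apply χ_meas; simp only [setOf_and]
  exact (measurableSet_lt measurable_const mZ).inter ((measurableSet_le mZ mX).inter
    (measurableSet_lt measurable_const (mX.sub mZ)))

lemma wq3_meas (p : ℝ) : Measurable fun q : ℝ×ℝ×ℝ => wq3 p q.1 q.2.1 q.2.2 := by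
  apply χ_meas; simp only [setOf_and]
  exact (measurableSet_lt measurable_const mZ).inter ((measurableSet_le mZ mX).inter
    (measurableSet_lt measurable_const mX))

lemma wq4_meas (p : ℝ) : Measurable fun q : ℝ×ℝ×ℝ => wq4 p q.1 q.2.1 q.2.2 := by
  apply χ_meas; simp only [setOf_and]
  exact (measurableSet_lt measurable_const mZ).inter ((measurableSet_le mZ mX).inter
    (measurableSet_lt measurable_const mY))

lemma wm1_meas (p : ℝ) : Measurable fun q : ℝ×ℝ×ℝ => wm1 p q.1 q.2.1 q.2.2 := by
  apply χ_meas; simp only [setOf_and]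
  exact ((measurableSet_lt measurable_const mZ).inter (measurableSet_lt mZ measurable_const)).inter
    (((measurableSet_lt (measurable_const.sub mZ) mY).inter
      (measurableSet_lt mY measurable_const)).inter (measurableSet_lt mZ mX))

lemma wm2_meas (p : ℝ) : Measurable fun q : ℝ×ℝ×ℝ => wm2 p q.1 q.2.1 q.2.2 := by
  apply χ_meas; simp only [setOf_and]
  exact (measurableSet_lt measurable_const mZ).inter
    ((measurableSet_lt measurable_const mY).inter (measurableSet_lt mZ mX))

lemma wm3_meas (p : ℝ) : Measurable fun q : ℝ×ℝ×ℝ => wm3 p q.1 q.2.1 q.2.2 := by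
  apply χ_meas; simp only [setOf_and]
  exact ((measurableSet_lt measurable_const mZ).inter (measurableSet_lt mZ measurable_const)).inter
    ((measurableSet_lt measurable_const mX).inter (measurableSet_lt mX (measurable_const.add mZ)))

lemma wm4_meas (p : ℝ) : Measurable fun q : ℝ×ℝ×ℝ => wm4 p q.1 q.2.1 q.2.2 := by
  apply χ_meas; simp only [setOf_and]
  exact (measurableSet_lt measurable_const mZ).inter
    (measurableSet_lt (measurable_const.add mZ) mX)

lemma wu1_meas (p : ℝ) : Measurable fun q : ℝ×ℝ×ℝ => wu1 p q.1 q.2.1 q.2.2 := by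
  apply χ_meas; simp only [setOf_and]
  exact (measurableSet_lt measurable_const mZ).inter ((measurableSet_le mZ mX).inter
    ((measurableSet_lt (measurable_const.sub mZ) mY).inter (measurableSet_le mY measurable_const)))

lemma wu3_meas (p : ℝ) : Measurable fun q : ℝ×ℝ×ℝ => wu3 p q.1 q.2.1 q.2.2 := by
  apply χ_meas; simp only [setOf_and]
  exact (measurableSet_lt measurable_const mZ).inter ((measurableSet_le mZ mX).inter
    ((measurableSet_lt measurable_const mX).inter (measurableSet_le mX (measurable_const.add mZ))))

lemma wv1_meas (p : ℝ) : Measurable fun q : ℝ×ℝ×ℝ => wv1 p q.1 q.2.1 q.2.2 := by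
  apply χ_meas; simp only [setOf_and]
  exact (measurableSet_lt measurable_const mZ).inter ((measurableSet_lt mZ mX).inter
    (measurableSet_lt mY measurable_const))

lemma wv3_meas (p : ℝ) : Measurable fun q : ℝ×ℝ×ℝ => wv3 p q.1 q.2.1 q.2.2 := by
  apply χ_meas; simp only [setOf_and]
  exact (measurableSet_lt measurable_const mZ).inter ((measurableSet_lt mZ mX).inter
    (measurableSet_lt mX (measurable_const.add mZ)))

lemma wt_meas (p : ℝ) : Measurable fun q : ℝ×ℝ×ℝ => wt p q.1 q.2.1 q.2.2 := by
  apply χ_meas; simp only [setOf_and]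
  exact (measurableSet_lt measurable_const mZ).inter (measurableSet_lt mZ mX)

end WeightMeas

section WeightBounds

lemma χ_le_χ {P Q : Prop} (h : P → Q) : χ P ≤ χ Q := by
  classical
  by_cases hP : P
  · simp [χ, hP, h hP]
  · simp [χ, hP]

lemma wq1_le (p : ℝ) : ∀ x y z, wq1 p x y z ≤ χ (0 < z) := fun _ _ _ => χ_le_χ fun h => h.1
lemma wq2_le (p : ℝ) : ∀ x y z, wq2 p x y z ≤ χ (0 < z) := fun _ _ _ => χ_le_χ fun h => h.1
lemma wq3_le (p : ℝ) : ∀ x y z, wq3 p x y z ≤ χ (0 < z) := fun _ _ _ => χ_le_χ fun h => h.1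
lemma wq4_le (p : ℝ) : ∀ x y z, wq4 p x y z ≤ χ (0 < z) := fun _ _ _ => χ_le_χ fun h => h.1
lemma wm1_le (p : ℝ) : ∀ x y z, wm1 p x y z ≤ χ (0 < z) := fun _ _ _ => χ_le_χ fun h => h.1.1
lemma wm2_le {p : ℝ} (hp : 0 < p) : ∀ x y z, wm2 p x y z ≤ χ (0 < z) :=
  fun _ _ _ => χ_le_χ fun h => lt_trans hp h.1
lemma wm3_le (p : ℝ) : ∀ x y z, wm3 p x y z ≤ χ (0 < z) := fun _ _ _ => χ_le_χ fun h => h.1.1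
lemma wm4_le {p : ℝ} (hp : 0 < p) : ∀ x y z, wm4 p x y z ≤ χ (0 < z) :=
  fun _ _ _ => χ_le_χ fun h => lt_trans hp h.1
lemma wu1_le (p : ℝ) : ∀ x y z, wu1 p x y z ≤ χ (0 < z) := fun _ _ _ => χ_le_χ fun h => h.1
lemma wu3_le (p : ℝ) : ∀ x y z, wu3 p x y z ≤ χ (0 < z) := fun _ _ _ => χ_le_χ fun h => h.1
lemma wv1_le {p : ℝ} (hp : 0 < p) : ∀ x y z, wv1 p x y z ≤ χ (0 < z) :=
  fun _ _ _ => χ_le_χ fun h => lt_trans hp h.1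
lemma wv3_le {p : ℝ} (hp : 0 < p) : ∀ x y z, wv3 p x y z ≤ χ (0 < z) :=
  fun _ _ _ => χ_le_χ fun h => lt_trans hp h.1
lemma wt_le {p : ℝ} (hp : 0 < p) : ∀ x y z, wt p x y z ≤ χ (0 < z) :=
  fun _ _ _ => χ_le_χ fun h => lt_trans hp h.1

end WeightBounds

lemma NN_split {A : ℝ → ℝ → ℝ → ℝ} {u : ℝ → ℝ}
    (hA : Measurable (fun q : ℝ × ℝ × ℝ => A q.1 q.2.1 q.2.2)) (hu : Measurable u)
    {w w1 w2 : ℝ → ℝ → ℝ → ℝ≥0∞}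
    (m1 : Measurable fun q : ℝ×ℝ×ℝ => w1 q.1 q.2.1 q.2.2)
    (m2 : Measurable fun q : ℝ×ℝ×ℝ => w2 q.1 q.2.1 q.2.2)
    (h : ∀ x, 0 < x → ∀ᵐ y ∂(volume : Measure ℝ), ∀ᵐ z ∂(volume : Measure ℝ),
      0 < y → w x y z = w1 x y z + w2 x y z) :
    NN A u w = NN A u w1 + NN A u w2 := by
  have hΨ := Psi_meas hA hu
  have mw1Ψ : Measurable fun q : ℝ×ℝ×ℝ => w1 q.1 q.2.1 q.2.2 * Psi A u q.1 q.2.1 q.2.2 :=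
    m1.mul hΨ
  have mw2Ψ : Measurable fun q : ℝ×ℝ×ℝ => w2 q.1 q.2.1 q.2.2 * Psi A u q.1 q.2.1 q.2.2 :=
    m2.mul hΨ
  unfold NN
  have hx : ∀ᵐ x ∂(volume.restrict (Ioi (0:ℝ))),
      (∫⁻ y in Ioi (0:ℝ), ∫⁻ z, w x y z * Psi A u x y z)
      = (∫⁻ y in Ioi (0:ℝ), ∫⁻ z, w1 x y z * Psi A u x y z)
        + (∫⁻ y in Ioi (0:ℝ), ∫⁻ z, w2 x y z * Psi A u x y z) := by
    filter_upwards [ae_restrict_mem measurableSet_Ioi] with x hx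
    simp only [mem_Ioi] at hx
    have hy : ∀ᵐ y ∂(volume.restrict (Ioi (0:ℝ))),
        (∫⁻ z, w x y z * Psi A u x y z)
        = (∫⁻ z, w1 x y z * Psi A u x y z) + (∫⁻ z, w2 x y z * Psi A u x y z) := by
      filter_upwards [ae_restrict_mem measurableSet_Ioi, ae_restrict_of_ae (h x hx)] with y hy hz
      simp only [mem_Ioi] at hy
      have : (∫⁻ z, w x y z * Psi A u x y z)
          = ∫⁻ z, (w1 x y z * Psi A u x y z + w2 x y z * Psi A u x y z) := by
        apply lintegral_congr_ae
        filter_upwards [hz] with z hz'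
        rw [hz' hy, add_mul]
      rw [this]
      exact lintegral_add_left (meas_slice₁ (f := fun x y z => w1 x y z * Psi A u x y z) mw1Ψ x y) _
    rw [lintegral_congr_ae hy]
    exact lintegral_add_left (meas_slice₂ (f := fun x y z => w1 x y z * Psi A u x y z) mw1Ψ x volume) _
  rw [lintegral_congr_ae hx]
  exact lintegral_add_left (meas_slice₃ (f := fun x y z => w1 x y z * Psi A u x y z) mw1Ψ (volume.restrict (Ioi 0)) volume) _

section ChainSteps
variable {A : ℝ → ℝ → ℝ → ℝ} {u : ℝ → ℝ}

lemma χ_true {P : Prop} (h : P) : χ P = 1 := by classical simp [χ, h]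
lemma χ_false {P : Prop} (h : ¬ P) : χ P = 0 := by classical simp [χ, h]
lemma χ_congr {P Q : Prop} (h : P ↔ Q) : χ P = χ Q := by
  classical
  by_cases hP : P
  · rw [χ_true hP, χ_true (h.1 hP)]
  · rw [χ_false hP, χ_false (fun hq => hP (h.2 hq))]

lemma step_a (hA : Measurable (fun q : ℝ × ℝ × ℝ => A q.1 q.2.1 q.2.2))
    (hu : Measurable u) {p : ℝ} (hp : 0 < p) :
    NN A u (wq1 p) = NN A u (wq4 p) + NN A u (wu1 p) := by
  apply NN_split hA hu (wq4_meas p) (wu1_meas p)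
  intro x hx
  refine Filter.Eventually.of_forall fun y => Filter.Eventually.of_forall fun z => fun hy => ?_
  unfold wq1 wq4 wu1
  by_cases h1 : 0 < z
  · by_cases h2 : z ≤ x
    · by_cases h3 : p < y
      · rw [χ_true ⟨h1, h2, by linarith⟩, χ_true ⟨h1, h2, h3⟩,
          χ_false (fun hc => absurd hc.2.2.2 (not_le.2 h3))]
        norm_num
      · have h6 : y ≤ p := le_of_not_gt h3
        by_cases h7 : p - z < y
        · rw [χ_true ⟨h1, h2, by linarith⟩, χ_false (fun hc => h3 hc.2.2),
            χ_true ⟨h1, h2, h7, h6⟩]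
          norm_num
        · rw [χ_false (fun hc => h7 (by linarith [hc.2.2])),
            χ_false (fun hc => h3 hc.2.2), χ_false (fun hc => h7 hc.2.2.1)]
          norm_num
    · rw [χ_false (fun hc => h2 hc.2.1), χ_false (fun hc => h2 hc.2.1),
        χ_false (fun hc => h2 hc.2.1)]
      norm_num
  · rw [χ_false (fun hc => h1 hc.1), χ_false (fun hc => h1 hc.1),
      χ_false (fun hc => h1 hc.1)]
    norm_num

lemma step_c (hA : Measurable (fun q : ℝ × ℝ × ℝ => A q.1 q.2.1 q.2.2))
    (hu : Measurable u) {p : ℝ} (hp : 0 < p) :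
    NN A u (wq3 p) = NN A u (wq2 p) + NN A u (wu3 p) := by
  apply NN_split hA hu (wq2_meas p) (wu3_meas p)
  intro x hx
  refine Filter.Eventually.of_forall fun y => Filter.Eventually.of_forall fun z => fun hy => ?_
  unfold wq3 wq2 wu3
  by_cases h1 : 0 < z
  · by_cases h2 : z ≤ x
    · by_cases h3 : p < x - z
      · rw [χ_true ⟨h1, h2, by linarith⟩, χ_true ⟨h1, h2, h3⟩,
          χ_false (fun hc => absurd hc.2.2.2 (not_le.2 (by linarith)))]
        norm_num
      · by_cases h5 : p < x
        · rw [χ_true ⟨h1, h2, h5⟩, χ_false (fun hc => h3 hc.2.2),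
            χ_true ⟨h1, h2, h5, by linarith [le_of_not_gt h3]⟩]
          norm_num
        · rw [χ_false (fun hc => h5 hc.2.2), χ_false (fun hc => h5 (by linarith [hc.2.2])),
            χ_false (fun hc => h5 hc.2.2.1)]
          norm_num
    · rw [χ_false (fun hc => h2 hc.2.1), χ_false (fun hc => h2 hc.2.1),
        χ_false (fun hc => h2 hc.2.1)]
      norm_num
  · rw [χ_false (fun hc => h1 hc.1), χ_false (fun hc => h1 hc.1),
      χ_false (fun hc => h1 hc.1)]
    norm_num

lemma step_b (hA : Measurable (fun q : ℝ × ℝ × ℝ => A q.1 q.2.1 q.2.2))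
    (hu : Measurable u) {p : ℝ} (hp : 0 < p) :
    NN A u (wu1 p) = NN A u (wm1 p) + NN A u (wv1 p) := by
  apply NN_split hA hu (wm1_meas p) (wv1_meas p)
  intro x hx
  filter_upwards [ae_ne_real p] with y hyp
  filter_upwards [ae_ne_real p, ae_ne_real x] with z hzp hzx
  intro hy
  unfold wu1 wm1 wv1
  rcases lt_trichotomy z p with h | h | h
  · rw [χ_false (P := p < z ∧ z < x ∧ y < p) (fun hc => absurd h (not_lt.2 hc.1.le)), add_zero]
    apply χ_congr
    constructor
    · rintro ⟨c1, c2, c3, c4⟩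
      exact ⟨⟨c1, h⟩, ⟨c3, lt_of_le_of_ne c4 hyp⟩, lt_of_le_of_ne c2 hzx⟩
    · rintro ⟨⟨d1, _⟩, ⟨d3, d4⟩, d5⟩
      exact ⟨d1, d5.le, d3, d4.le⟩
  · exact absurd h hzp
  · rw [χ_false (P := (0 < z ∧ z < p) ∧ (p - z < y ∧ y < p) ∧ z < x)
      (fun hc => absurd hc.1.2 (not_lt.2 h.le)), zero_add]
    apply χ_congr
    constructor
    · rintro ⟨c1, c2, c3, c4⟩
      exact ⟨h, lt_of_le_of_ne c2 hzx, lt_of_le_of_ne c4 hyp⟩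
    · rintro ⟨d1, d2, d3⟩
      exact ⟨lt_trans hp h, d2.le, by linarith, d3.le⟩

lemma step_d (hA : Measurable (fun q : ℝ × ℝ × ℝ => A q.1 q.2.1 q.2.2))
    (hu : Measurable u) {p : ℝ} (hp : 0 < p) :
    NN A u (wu3 p) = NN A u (wm3 p) + NN A u (wv3 p) := by
  apply NN_split hA hu (wm3_meas p) (wv3_meas p)
  intro x hx
  refine Filter.Eventually.of_forall fun y => ?_
  filter_upwards [ae_ne_real p, ae_ne_real x, ae_ne_real (x - p)] with z hzp hzx hzxp
  intro hy
  unfold wu3 wm3 wv3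
  rcases lt_trichotomy z p with h | h | h
  · rw [χ_false (P := p < z ∧ z < x ∧ x < p + z) (fun hc => absurd h (not_lt.2 hc.1.le)),
      add_zero]
    apply χ_congr
    constructor
    · rintro ⟨c1, c2, c3, c4⟩
      exact ⟨⟨c1, h⟩, c3, lt_of_le_of_ne c4 (fun e => hzxp (by linarith))⟩
    · rintro ⟨⟨d1, d2⟩, d3, d4⟩
      exact ⟨d1, by linarith, d3, d4.le⟩
  · exact absurd h hzp
  · rw [χ_false (P := (0 < z ∧ z < p) ∧ p < x ∧ x < p + z)
      (fun hc => absurd hc.1.2 (not_lt.2 h.le)), zero_add]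
    apply χ_congr
    constructor
    · rintro ⟨c1, c2, c3, c4⟩
      exact ⟨h, lt_of_le_of_ne c2 hzx, lt_of_le_of_ne c4 (fun e => hzxp (by linarith))⟩
    · rintro ⟨d1, d2, d3⟩
      exact ⟨lt_trans hp d1, d2.le, by linarith, d3.le⟩

lemma step_e (hA : Measurable (fun q : ℝ × ℝ × ℝ => A q.1 q.2.1 q.2.2))
    (hu : Measurable u) {p : ℝ} (hp : 0 < p) :
    NN A u (wt p) = NN A u (wv1 p) + NN A u (wm2 p) := by
  apply NN_split hA hu (wv1_meas p) (wm2_meas p)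
  intro x hx
  filter_upwards [ae_ne_real p] with y hyp
  refine Filter.Eventually.of_forall fun z => fun hy => ?_
  unfold wt wv1 wm2
  by_cases h1 : p < z
  · by_cases h2 : z < x
    · by_cases h3 : y < p
      · rw [χ_true ⟨h1, h2⟩, χ_true ⟨h1, h2, h3⟩, χ_false (fun hc => absurd hc.2.1 (by linarith))]
        norm_num
      · rw [χ_true ⟨h1, h2⟩, χ_false (fun hc => h3 hc.2.2),
          χ_true ⟨h1, lt_of_le_of_ne (le_of_not_gt h3) (Ne.symm hyp), h2⟩]
        norm_num
    · rw [χ_false (fun hc => h2 hc.2), χ_false (fun hc => h2 hc.2.1),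
        χ_false (fun hc => h2 hc.2.2)]
      norm_num
  · rw [χ_false (fun hc => h1 hc.1), χ_false (fun hc => h1 hc.1),
      χ_false (fun hc => h1 hc.1)]
    norm_num

lemma step_f (hA : Measurable (fun q : ℝ × ℝ × ℝ => A q.1 q.2.1 q.2.2))
    (hu : Measurable u) {p : ℝ} (hp : 0 < p) :
    NN A u (wt p) = NN A u (wv3 p) + NN A u (wm4 p) := by
  apply NN_split hA hu (wv3_meas p) (wm4_meas p)
  intro x hx
  refine Filter.Eventually.of_forall fun y => ?_
  filter_upwards [ae_ne_real (x - p)] with z hzxp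
  intro hy
  unfold wt wv3 wm4
  by_cases h1 : p < z
  · by_cases h2 : z < x
    · by_cases h3 : x < p + z
      · rw [χ_true ⟨h1, h2⟩, χ_true ⟨h1, h2, h3⟩, χ_false (fun hc => by linarith [hc.2])]
        norm_num
      · have h4 : p + z < x :=
          lt_of_le_of_ne (le_of_not_gt h3) (fun e => hzxp (by linarith))
        rw [χ_true ⟨h1, h2⟩, χ_false (fun hc => h3 hc.2.2), χ_true ⟨h1, h4⟩]
        norm_num
    · rw [χ_false (fun hc => h2 hc.2), χ_false (fun hc => h2 hc.2.1),
        χ_false (fun hc => h2 (by linarith [hc.2]))]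
      norm_num
  · rw [χ_false (fun hc => h1 hc.1), χ_false (fun hc => h1 hc.1),
      χ_false (fun hc => h1 hc.1)]
    norm_num

end ChainSteps

open Classical in
lemma toReal_χ (P : Prop) : (χ P).toReal = if P then 1 else 0 := by
  by_cases h : P <;> simp [χ, h]

lemma core_nn {A : ℝ → ℝ → ℝ → ℝ} {φ : ℝ → ℝ} {c : ℝ} (hA : Hyps A φ c)
    {u : ℝ → ℝ} (hu : Good u) {p : ℝ} (hp : 0 < p) :
    (NN A u (wq1 p)).toReal + (NN A u (wq2 p)).toReal
      - (NN A u (wq3 p)).toReal - (NN A u (wq4 p)).toReal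
    = (NN A u (wm1 p)).toReal - (NN A u (wm2 p)).toReal
      - (NN A u (wm3 p)).toReal + (NN A u (wm4 p)).toReal := by
  have fq4 := NN_fin hA hu (wq4_le p)
  have fu1 := NN_fin hA hu (wu1_le p)
  have fq2 := NN_fin hA hu (wq2_le p)
  have fu3 := NN_fin hA hu (wu3_le p)
  have fm1 := NN_fin hA hu (wm1_le p)
  have fv1 := NN_fin hA hu (wv1_le hp)
  have fm2 := NN_fin hA hu (wm2_le hp)
  have fm3 := NN_fin hA hu (wm3_le p)
  have fv3 := NN_fin hA hu (wv3_le hp)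
  have fm4 := NN_fin hA hu (wm4_le hp)
  have r1 := step_a hA.meas hu.meas hp
  have r2 := step_b hA.meas hu.meas hp
  have r3 := step_c hA.meas hu.meas hp
  have r4 := step_d hA.meas hu.meas hp
  have r5 := step_e hA.meas hu.meas hp
  have r6 := step_f hA.meas hu.meas hp
  have t1 : (NN A u (wq1 p)).toReal = (NN A u (wq4 p)).toReal + (NN A u (wu1 p)).toReal := by
    rw [r1]; exact ENNReal.toReal_add fq4 fu1
  have t2 : (NN A u (wu1 p)).toReal = (NN A u (wm1 p)).toReal + (NN A u (wv1 p)).toReal := by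
    rw [r2]; exact ENNReal.toReal_add fm1 fv1
  have t3 : (NN A u (wq3 p)).toReal = (NN A u (wq2 p)).toReal + (NN A u (wu3 p)).toReal := by
    rw [r3]; exact ENNReal.toReal_add fq2 fu3
  have t4 : (NN A u (wu3 p)).toReal = (NN A u (wm3 p)).toReal + (NN A u (wv3 p)).toReal := by
    rw [r4]; exact ENNReal.toReal_add fm3 fv3
  have t5 : (NN A u (wt p)).toReal = (NN A u (wv1 p)).toReal + (NN A u (wm2 p)).toReal := by
    rw [r5]; exact ENNReal.toReal_add fv1 fm2
  have t6 : (NN A u (wt p)).toReal = (NN A u (wv3 p)).toReal + (NN A u (wm4 p)).toReal := by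
    rw [r6]; exact ENNReal.toReal_add fv3 fm4
  linarith

def omg (p : ℝ) : ℝ → ℝ := (Ioi p).indicator (fun _ => 1)

lemma omg_meas (p : ℝ) : Measurable (omg p) := measurable_const.indicator measurableSet_Ioi

lemma omg_bdd (p : ℝ) : ∃ M, ∀ x, |omg p x| ≤ M := by
  refine ⟨1, fun x => ?_⟩
  unfold omg
  by_cases h : x ∈ Ioi p <;> simp [h]

lemma Q_repr {A : ℝ → ℝ → ℝ → ℝ} {φ : ℝ → ℝ} {c : ℝ} (hA : Hyps A φ c)
    {u : ℝ → ℝ} (hu : Good u) {p : ℝ} (hp : 0 < p) :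
    (∫ x in Ioi (0:ℝ), ∫ y in Ioi (0:ℝ), ∫ z in Ioc (0:ℝ) x,
        (omg p (y + z) + omg p (x - z) - omg p x - omg p y) * (A x y z * u x * u y))
    = (NN A u (wq1 p)).toReal + (NN A u (wq2 p)).toReal
      - (NN A u (wq3 p)).toReal - (NN A u (wq4 p)).toReal := by
  classical
  have hB : ∀ x y z : ℝ, 0 ≤ A x y z * u x * u y :=
    fun x y z => mul_nonneg (mul_nonneg (hA.nonneg x y z) (hu.nn x)) (hu.nn y)
  have hinner : ∀ x y : ℝ,
      (∫ z in Ioc (0:ℝ) x, (omg p (y + z) + omg p (x - z) - omg p x - omg p y)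
          * (A x y z * u x * u y))
      = ∫ z, ((wq1 p x y z * Psi A u x y z).toReal + (wq2 p x y z * Psi A u x y z).toReal
          - (wq3 p x y z * Psi A u x y z).toReal - (wq4 p x y z * Psi A u x y z).toReal) := by
    intro x y
    rw [← integral_indicator measurableSet_Ioc]
    apply integral_congr_ae
    apply Filter.Eventually.of_forall
    intro z
    beta_reduce
    unfold wq1 wq2 wq3 wq4 Psi
    rw [toReal_χ_mul_ofReal _ (hB x y z), toReal_χ_mul_ofReal _ (hB x y z),
      toReal_χ_mul_ofReal _ (hB x y z), toReal_χ_mul_ofReal _ (hB x y z),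
      toReal_χ, toReal_χ, toReal_χ, toReal_χ]
    by_cases hz : z ∈ Ioc (0:ℝ) x
    · rw [Set.indicator_of_mem hz]
      obtain ⟨hz1, hz2⟩ := hz
      unfold omg
      simp only [Set.indicator_apply, mem_Ioi]
      by_cases c1 : p < y + z <;> by_cases c2 : p < x - z <;> by_cases c3 : p < x <;>
        by_cases c4 : p < y <;> simp [c1, c2, c3, c4, hz1, hz2] <;> ring
    · rw [Set.indicator_of_notMem hz]
      rw [mem_Ioc] at hz
      push_neg at hz
      by_cases hz1 : 0 < z
      · have hz2 : ¬ z ≤ x := by intro hc; exact absurd (hz hz1) (not_lt.2 hc)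
        simp [hz1, hz2]
      · simp [hz1]
  have houter : (∫ x in Ioi (0:ℝ), ∫ y in Ioi (0:ℝ), ∫ z in Ioc (0:ℝ) x,
      (omg p (y + z) + omg p (x - z) - omg p x - omg p y) * (A x y z * u x * u y))
      = ∫ x in Ioi (0:ℝ), ∫ y in Ioi (0:ℝ), ∫ z,
          ((wq1 p x y z * Psi A u x y z).toReal + (wq2 p x y z * Psi A u x y z).toReal
          - (wq3 p x y z * Psi A u x y z).toReal - (wq4 p x y z * Psi A u x y z).toReal) := by
    apply integral_congr_ae
    apply Filter.Eventually.of_forall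
    intro x
    apply integral_congr_ae
    apply Filter.Eventually.of_forall
    intro y
    exact hinner x y
  rw [houter]
  have hfin : ∀ w : ℝ → ℝ → ℝ → ℝ≥0∞, (∀ x y z, w x y z ≤ χ (0 < z)) →
      (∫⁻ x in Ioi (0:ℝ), ∫⁻ y in Ioi (0:ℝ), ∫⁻ z, w x y z * Psi A u x y z) ≠ ∞ :=
    fun w hw => NN_fin hA hu hw
  have := split4 (volume.restrict (Ioi 0)) (volume.restrict (Ioi 0)) volume
    (fun x y z => wq1 p x y z * Psi A u x y z) (fun x y z => wq2 p x y z * Psi A u x y z)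
    (fun x y z => wq3 p x y z * Psi A u x y z) (fun x y z => wq4 p x y z * Psi A u x y z)
    ((wq1_meas p).mul (Psi_meas hA.meas hu.meas)) ((wq2_meas p).mul (Psi_meas hA.meas hu.meas))
    ((wq3_meas p).mul (Psi_meas hA.meas hu.meas)) ((wq4_meas p).mul (Psi_meas hA.meas hu.meas))
    (hfin _ (wq1_le p)) (hfin _ (wq2_le p)) (hfin _ (wq3_le p)) (hfin _ (wq4_le p))
  exact this

lemma meas_perm {g : ℝ → ℝ → ℝ → ℝ≥0∞}
    (hg : Measurable fun q : ℝ×ℝ×ℝ => g q.1 q.2.1 q.2.2) :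
    Measurable fun q : ℝ×ℝ×ℝ => g q.2.2 q.2.1 q.1 :=
  hg.comp ((measurable_snd.comp measurable_snd).prodMk
    ((measurable_fst.comp measurable_snd).prodMk measurable_fst))

lemma T1_repr {A : ℝ → ℝ → ℝ → ℝ} {φ : ℝ → ℝ} {c : ℝ} (hA : Hyps A φ c)
    {u : ℝ → ℝ} (hu : Good u) {p : ℝ} (hp : 0 < p) :
    (∫ z in Ioo (0:ℝ) p, ∫ y in Ioo (p - z) p, ∫ x in Ioi z, A x y z * u x * u y)
    = (NN A u (wm1 p)).toReal := by
  classical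
  have hB : ∀ x y z : ℝ, 0 ≤ A x y z * u x * u y :=
    fun x y z => mul_nonneg (mul_nonneg (hA.nonneg x y z) (hu.nn x)) (hu.nn y)
  have hWm : Measurable fun q : ℝ×ℝ×ℝ => wm1 p q.1 q.2.1 q.2.2 * Psi A u q.1 q.2.1 q.2.2 :=
    (wm1_meas p).mul (Psi_meas hA.meas hu.meas)
  have hswap := lintegral3_swap (volume.restrict (Ioi 0)) (volume.restrict (Ioi 0)) volume
    (f := fun x y z => wm1 p x y z * Psi A u x y z) hWm
  have key : ∀ z : ℝ, (Ioo (0:ℝ) p).indicator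
      (fun z => ∫ y in Ioo (p - z) p, ∫ x in Ioi z, A x y z * u x * u y) z
      = ∫ y in Ioi (0:ℝ), ∫ x in Ioi (0:ℝ), (wm1 p x y z * Psi A u x y z).toReal := by
    intro z
    by_cases hz : z ∈ Ioo (0:ℝ) p
    · rw [Set.indicator_of_mem hz]
      rw [mem_Ioo] at hz
      obtain ⟨hz1, hz2⟩ := hz
      have ey : ∀ y : ℝ, (∫ x in Ioi (0:ℝ), (wm1 p x y z * Psi A u x y z).toReal)
          = (Ioo (p - z) p).indicator (fun y => ∫ x in Ioi z, A x y z * u x * u y) y := by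
        intro y
        by_cases hy : y ∈ Ioo (p - z) p
        · rw [Set.indicator_of_mem hy]
          rw [mem_Ioo] at hy
          obtain ⟨hy1, hy2⟩ := hy
          have ex : ∀ x : ℝ, (wm1 p x y z * Psi A u x y z).toReal
              = (Ioi z).indicator (fun x => A x y z * u x * u y) x := by
            intro x
            unfold wm1 Psi
            rw [toReal_χ_mul_ofReal _ (hB x y z), toReal_χ]
            by_cases hx : z < x
            · rw [if_pos ⟨⟨hz1, hz2⟩, ⟨hy1, hy2⟩, hx⟩,
                Set.indicator_of_mem (by exact hx : x ∈ Ioi z)]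
              ring
            · rw [if_neg (fun hc => hx hc.2.2),
                Set.indicator_of_notMem (by simpa using hx)]
              ring
          rw [integral_congr_ae (Filter.Eventually.of_forall ex),
            setIntegral_indicator measurableSet_Ioi]
          congr 1
          rw [Ioi_inter_Ioi, sup_eq_right.2 hz1.le]
        · rw [Set.indicator_of_notMem hy]
          rw [mem_Ioo] at hy
          push_neg at hy
          have ex : ∀ x : ℝ, (wm1 p x y z * Psi A u x y z).toReal = 0 := by
            intro x
            unfold wm1 Psi
            rw [toReal_χ_mul_ofReal _ (hB x y z), toReal_χ,
              if_neg (fun hc => absurd (hy hc.2.1.1) (not_le.2 hc.2.1.2))]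
            ring
          rw [integral_congr_ae (Filter.Eventually.of_forall ex)]
          exact integral_zero _ _
      rw [integral_congr_ae (Filter.Eventually.of_forall ey),
        setIntegral_indicator measurableSet_Ioo]
      congr 1
      rw [inter_eq_self_of_subset_right]
      intro y hy
      rw [mem_Ioo] at hy
      exact lt_trans (by linarith : (0:ℝ) < p - z) hy.1
    · rw [Set.indicator_of_notMem hz]
      rw [mem_Ioo] at hz
      push_neg at hz
      symm
      have ey : ∀ y : ℝ, (∫ x in Ioi (0:ℝ), (wm1 p x y z * Psi A u x y z).toReal) = 0 := by
        intro y
        have ex : ∀ x : ℝ, (wm1 p x y z * Psi A u x y z).toReal = 0 := by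
          intro x
          unfold wm1 Psi
          rw [toReal_χ_mul_ofReal _ (hB x y z), toReal_χ,
            if_neg (fun hc => absurd (hz hc.1.1) (not_le.2 hc.1.2))]
          ring
        rw [integral_congr_ae (Filter.Eventually.of_forall ex)]
        exact integral_zero _ _
      rw [integral_congr_ae (Filter.Eventually.of_forall ey)]
      exact integral_zero _ _
  have hfin : (∫⁻ z, ∫⁻ y in Ioi (0:ℝ), ∫⁻ x in Ioi (0:ℝ),
      wm1 p x y z * Psi A u x y z) ≠ ∞ := by
    rw [← hswap]
    exact NN_fin hA hu (wm1_le p)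
  calc (∫ z in Ioo (0:ℝ) p, ∫ y in Ioo (p - z) p, ∫ x in Ioi z, A x y z * u x * u y)
      = ∫ z, (Ioo (0:ℝ) p).indicator
          (fun z => ∫ y in Ioo (p - z) p, ∫ x in Ioi z, A x y z * u x * u y) z :=
        (integral_indicator measurableSet_Ioo).symm
    _ = ∫ z, ∫ y in Ioi (0:ℝ), ∫ x in Ioi (0:ℝ), (wm1 p x y z * Psi A u x y z).toReal :=
        integral_congr_ae (Filter.Eventually.of_forall key)
    _ = (∫⁻ z, ∫⁻ y in Ioi (0:ℝ), ∫⁻ x in Ioi (0:ℝ), wm1 p x y z * Psi A u x y z).toReal := by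
        exact conv3 volume (volume.restrict (Ioi 0)) (volume.restrict (Ioi 0))
          (f := fun z y x => wm1 p x y z * Psi A u x y z)
          (meas_perm (g := fun x y z => wm1 p x y z * Psi A u x y z) hWm)
          (fun z y x => ENNReal.mul_ne_top (χ_ne_top _) (Psi_ne_top A u x y z)) hfin
    _ = (NN A u (wm1 p)).toReal := by rw [← hswap]; rfl

lemma T2_repr {A : ℝ → ℝ → ℝ → ℝ} {φ : ℝ → ℝ} {c : ℝ} (hA : Hyps A φ c)
    {u : ℝ → ℝ} (hu : Good u) {p : ℝ} (hp : 0 < p) :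
    (∫ z in Ioi p, ∫ y in Ioi p, ∫ x in Ioi z, A x y z * u x * u y)
    = (NN A u (wm2 p)).toReal := by
  classical
  have hB : ∀ x y z : ℝ, 0 ≤ A x y z * u x * u y :=
    fun x y z => mul_nonneg (mul_nonneg (hA.nonneg x y z) (hu.nn x)) (hu.nn y)
  have hWm : Measurable fun q : ℝ×ℝ×ℝ => wm2 p q.1 q.2.1 q.2.2 * Psi A u q.1 q.2.1 q.2.2 :=
    (wm2_meas p).mul (Psi_meas hA.meas hu.meas)
  have hswap := lintegral3_swap (volume.restrict (Ioi 0)) (volume.restrict (Ioi 0)) volume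
    (f := fun x y z => wm2 p x y z * Psi A u x y z) hWm
  have key : ∀ z : ℝ, (Ioi p).indicator
      (fun z => ∫ y in Ioi p, ∫ x in Ioi z, A x y z * u x * u y) z
      = ∫ y in Ioi (0:ℝ), ∫ x in Ioi (0:ℝ), (wm2 p x y z * Psi A u x y z).toReal := by
    intro z
    by_cases hz : z ∈ Ioi p
    · rw [Set.indicator_of_mem hz]
      rw [mem_Ioi] at hz
      have ey : ∀ y : ℝ, (∫ x in Ioi (0:ℝ), (wm2 p x y z * Psi A u x y z).toReal)
          = (Ioi p).indicator (fun y => ∫ x in Ioi z, A x y z * u x * u y) y := by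
        intro y
        by_cases hy : y ∈ Ioi p
        · rw [Set.indicator_of_mem hy]
          rw [mem_Ioi] at hy
          have ex : ∀ x : ℝ, (wm2 p x y z * Psi A u x y z).toReal
              = (Ioi z).indicator (fun x => A x y z * u x * u y) x := by
            intro x
            unfold wm2 Psi
            rw [toReal_χ_mul_ofReal _ (hB x y z), toReal_χ]
            by_cases hx : z < x
            · rw [if_pos ⟨hz, hy, hx⟩, Set.indicator_of_mem (by exact hx : x ∈ Ioi z)]
              ring
            · rw [if_neg (fun hc => hx hc.2.2), Set.indicator_of_notMem (by simpa using hx)]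
              ring
          rw [integral_congr_ae (Filter.Eventually.of_forall ex),
            setIntegral_indicator measurableSet_Ioi]
          congr 1
          rw [Ioi_inter_Ioi, sup_eq_right.2 (le_of_lt (lt_trans hp hz))]
        · rw [Set.indicator_of_notMem hy]
          rw [mem_Ioi] at hy
          have ex : ∀ x : ℝ, (wm2 p x y z * Psi A u x y z).toReal = 0 := by
            intro x
            unfold wm2 Psi
            rw [toReal_χ_mul_ofReal _ (hB x y z), toReal_χ, if_neg (fun hc => hy hc.2.1)]
            ring
          rw [integral_congr_ae (Filter.Eventually.of_forall ex)]
          exact integral_zero _ _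
      rw [integral_congr_ae (Filter.Eventually.of_forall ey),
        setIntegral_indicator measurableSet_Ioi]
      congr 1
      rw [Ioi_inter_Ioi, sup_eq_right.2 hp.le]
    · rw [Set.indicator_of_notMem hz]
      rw [mem_Ioi] at hz
      symm
      have ey : ∀ y : ℝ, (∫ x in Ioi (0:ℝ), (wm2 p x y z * Psi A u x y z).toReal) = 0 := by
        intro y
        have ex : ∀ x : ℝ, (wm2 p x y z * Psi A u x y z).toReal = 0 := by
          intro x
          unfold wm2 Psi
          rw [toReal_χ_mul_ofReal _ (hB x y z), toReal_χ, if_neg (fun hc => hz hc.1)]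
          ring
        rw [integral_congr_ae (Filter.Eventually.of_forall ex)]
        exact integral_zero _ _
      rw [integral_congr_ae (Filter.Eventually.of_forall ey)]
      exact integral_zero _ _
  have hfin : (∫⁻ z, ∫⁻ y in Ioi (0:ℝ), ∫⁻ x in Ioi (0:ℝ),
      wm2 p x y z * Psi A u x y z) ≠ ∞ := by
    rw [← hswap]
    exact NN_fin hA hu (wm2_le hp)
  calc (∫ z in Ioi p, ∫ y in Ioi p, ∫ x in Ioi z, A x y z * u x * u y)
      = ∫ z, (Ioi p).indicator
          (fun z => ∫ y in Ioi p, ∫ x in Ioi z, A x y z * u x * u y) z :=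
        (integral_indicator measurableSet_Ioi).symm
    _ = ∫ z, ∫ y in Ioi (0:ℝ), ∫ x in Ioi (0:ℝ), (wm2 p x y z * Psi A u x y z).toReal :=
        integral_congr_ae (Filter.Eventually.of_forall key)
    _ = (∫⁻ z, ∫⁻ y in Ioi (0:ℝ), ∫⁻ x in Ioi (0:ℝ), wm2 p x y z * Psi A u x y z).toReal := by
        exact conv3 volume (volume.restrict (Ioi 0)) (volume.restrict (Ioi 0))
          (f := fun z y x => wm2 p x y z * Psi A u x y z)
          (meas_perm (g := fun x y z => wm2 p x y z * Psi A u x y z) hWm)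
          (fun z y x => ENNReal.mul_ne_top (χ_ne_top _) (Psi_ne_top A u x y z)) hfin
    _ = (NN A u (wm2 p)).toReal := by rw [← hswap]; rfl

lemma T3_repr {A : ℝ → ℝ → ℝ → ℝ} {φ : ℝ → ℝ} {c : ℝ} (hA : Hyps A φ c)
    {u : ℝ → ℝ} (hu : Good u) {p : ℝ} (hp : 0 < p) :
    (∫ z in Ioo (0:ℝ) p, ∫ y in Ioi (0:ℝ), ∫ x in Ioo p (p + z), A x y z * u x * u y)
    = (NN A u (wm3 p)).toReal := by
  classical
  have hB : ∀ x y z : ℝ, 0 ≤ A x y z * u x * u y :=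
    fun x y z => mul_nonneg (mul_nonneg (hA.nonneg x y z) (hu.nn x)) (hu.nn y)
  have hWm : Measurable fun q : ℝ×ℝ×ℝ => wm3 p q.1 q.2.1 q.2.2 * Psi A u q.1 q.2.1 q.2.2 :=
    (wm3_meas p).mul (Psi_meas hA.meas hu.meas)
  have hswap := lintegral3_swap (volume.restrict (Ioi 0)) (volume.restrict (Ioi 0)) volume
    (f := fun x y z => wm3 p x y z * Psi A u x y z) hWm
  have key : ∀ z : ℝ, (Ioo (0:ℝ) p).indicator
      (fun z => ∫ y in Ioi (0:ℝ), ∫ x in Ioo p (p + z), A x y z * u x * u y) z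
      = ∫ y in Ioi (0:ℝ), ∫ x in Ioi (0:ℝ), (wm3 p x y z * Psi A u x y z).toReal := by
    intro z
    by_cases hz : z ∈ Ioo (0:ℝ) p
    · rw [Set.indicator_of_mem hz]
      rw [mem_Ioo] at hz
      obtain ⟨hz1, hz2⟩ := hz
      symm
      apply integral_congr_ae
      apply Filter.Eventually.of_forall
      intro y
      beta_reduce
      have ex : ∀ x : ℝ, (wm3 p x y z * Psi A u x y z).toReal
          = (Ioo p (p + z)).indicator (fun x => A x y z * u x * u y) x := by
        intro x
        unfold wm3 Psi
        rw [toReal_χ_mul_ofReal _ (hB x y z), toReal_χ]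
        by_cases hx : x ∈ Ioo p (p + z)
        · rw [mem_Ioo] at hx
          rw [if_pos ⟨⟨hz1, hz2⟩, hx.1, hx.2⟩,
            Set.indicator_of_mem (by rw [mem_Ioo]; exact hx)]
          ring
        · rw [Set.indicator_of_notMem hx]
          rw [mem_Ioo] at hx
          rw [if_neg (fun hc => hx ⟨hc.2.1, hc.2.2⟩)]
          ring
      rw [integral_congr_ae (Filter.Eventually.of_forall ex),
        setIntegral_indicator measurableSet_Ioo]
      congr 1
      rw [inter_eq_self_of_subset_right]
      intro x hx
      rw [mem_Ioo] at hx
      exact lt_trans hp hx.1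
    · rw [Set.indicator_of_notMem hz]
      rw [mem_Ioo] at hz
      push_neg at hz
      symm
      have ey : ∀ y : ℝ, (∫ x in Ioi (0:ℝ), (wm3 p x y z * Psi A u x y z).toReal) = 0 := by
        intro y
        have ex : ∀ x : ℝ, (wm3 p x y z * Psi A u x y z).toReal = 0 := by
          intro x
          unfold wm3 Psi
          rw [toReal_χ_mul_ofReal _ (hB x y z), toReal_χ,
            if_neg (fun hc => absurd (hz hc.1.1) (not_le.2 hc.1.2))]
          ring
        rw [integral_congr_ae (Filter.Eventually.of_forall ex)]
        exact integral_zero _ _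
      rw [integral_congr_ae (Filter.Eventually.of_forall ey)]
      exact integral_zero _ _
  have hfin : (∫⁻ z, ∫⁻ y in Ioi (0:ℝ), ∫⁻ x in Ioi (0:ℝ),
      wm3 p x y z * Psi A u x y z) ≠ ∞ := by
    rw [← hswap]
    exact NN_fin hA hu (wm3_le p)
  calc (∫ z in Ioo (0:ℝ) p, ∫ y in Ioi (0:ℝ), ∫ x in Ioo p (p + z), A x y z * u x * u y)
      = ∫ z, (Ioo (0:ℝ) p).indicator
          (fun z => ∫ y in Ioi (0:ℝ), ∫ x in Ioo p (p + z), A x y z * u x * u y) z :=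
        (integral_indicator measurableSet_Ioo).symm
    _ = ∫ z, ∫ y in Ioi (0:ℝ), ∫ x in Ioi (0:ℝ), (wm3 p x y z * Psi A u x y z).toReal :=
        integral_congr_ae (Filter.Eventually.of_forall key)
    _ = (∫⁻ z, ∫⁻ y in Ioi (0:ℝ), ∫⁻ x in Ioi (0:ℝ), wm3 p x y z * Psi A u x y z).toReal := by
        exact conv3 volume (volume.restrict (Ioi 0)) (volume.restrict (Ioi 0))
          (f := fun z y x => wm3 p x y z * Psi A u x y z)
          (meas_perm (g := fun x y z => wm3 p x y z * Psi A u x y z) hWm)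
          (fun z y x => ENNReal.mul_ne_top (χ_ne_top _) (Psi_ne_top A u x y z)) hfin
    _ = (NN A u (wm3 p)).toReal := by rw [← hswap]; rfl

lemma T4_repr {A : ℝ → ℝ → ℝ → ℝ} {φ : ℝ → ℝ} {c : ℝ} (hA : Hyps A φ c)
    {u : ℝ → ℝ} (hu : Good u) {p : ℝ} (hp : 0 < p) :
    (∫ z in Ioi p, ∫ y in Ioi (0:ℝ), ∫ x in Ioi (p + z), A x y z * u x * u y)
    = (NN A u (wm4 p)).toReal := by
  classical
  have hB : ∀ x y z : ℝ, 0 ≤ A x y z * u x * u y :=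
    fun x y z => mul_nonneg (mul_nonneg (hA.nonneg x y z) (hu.nn x)) (hu.nn y)
  have hWm : Measurable fun q : ℝ×ℝ×ℝ => wm4 p q.1 q.2.1 q.2.2 * Psi A u q.1 q.2.1 q.2.2 :=
    (wm4_meas p).mul (Psi_meas hA.meas hu.meas)
  have hswap := lintegral3_swap (volume.restrict (Ioi 0)) (volume.restrict (Ioi 0)) volume
    (f := fun x y z => wm4 p x y z * Psi A u x y z) hWm
  have key : ∀ z : ℝ, (Ioi p).indicator
      (fun z => ∫ y in Ioi (0:ℝ), ∫ x in Ioi (p + z), A x y z * u x * u y) z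
      = ∫ y in Ioi (0:ℝ), ∫ x in Ioi (0:ℝ), (wm4 p x y z * Psi A u x y z).toReal := by
    intro z
    by_cases hz : z ∈ Ioi p
    · rw [Set.indicator_of_mem hz]
      rw [mem_Ioi] at hz
      symm
      apply integral_congr_ae
      apply Filter.Eventually.of_forall
      intro y
      beta_reduce
      have ex : ∀ x : ℝ, (wm4 p x y z * Psi A u x y z).toReal
          = (Ioi (p + z)).indicator (fun x => A x y z * u x * u y) x := by
        intro x
        unfold wm4 Psi
        rw [toReal_χ_mul_ofReal _ (hB x y z), toReal_χ]
        by_cases hx : p + z < x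
        · rw [if_pos ⟨hz, hx⟩, Set.indicator_of_mem (by exact hx : x ∈ Ioi (p + z))]
          ring
        · rw [if_neg (fun hc => hx hc.2), Set.indicator_of_notMem (by simpa using hx)]
          ring
      rw [integral_congr_ae (Filter.Eventually.of_forall ex),
        setIntegral_indicator measurableSet_Ioi]
      congr 1
      rw [Ioi_inter_Ioi, sup_eq_right.2 (by linarith : (0:ℝ) ≤ p + z)]
    · rw [Set.indicator_of_notMem hz]
      rw [mem_Ioi] at hz
      symm
      have ey : ∀ y : ℝ, (∫ x in Ioi (0:ℝ), (wm4 p x y z * Psi A u x y z).toReal) = 0 := by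
        intro y
        have ex : ∀ x : ℝ, (wm4 p x y z * Psi A u x y z).toReal = 0 := by
          intro x
          unfold wm4 Psi
          rw [toReal_χ_mul_ofReal _ (hB x y z), toReal_χ, if_neg (fun hc => hz hc.1)]
          ring
        rw [integral_congr_ae (Filter.Eventually.of_forall ex)]
        exact integral_zero _ _
      rw [integral_congr_ae (Filter.Eventually.of_forall ey)]
      exact integral_zero _ _
  have hfin : (∫⁻ z, ∫⁻ y in Ioi (0:ℝ), ∫⁻ x in Ioi (0:ℝ),
      wm4 p x y z * Psi A u x y z) ≠ ∞ := by
    rw [← hswap]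
    exact NN_fin hA hu (wm4_le hp)
  calc (∫ z in Ioi p, ∫ y in Ioi (0:ℝ), ∫ x in Ioi (p + z), A x y z * u x * u y)
      = ∫ z, (Ioi p).indicator
          (fun z => ∫ y in Ioi (0:ℝ), ∫ x in Ioi (p + z), A x y z * u x * u y) z :=
        (integral_indicator measurableSet_Ioi).symm
    _ = ∫ z, ∫ y in Ioi (0:ℝ), ∫ x in Ioi (0:ℝ), (wm4 p x y z * Psi A u x y z).toReal :=
        integral_congr_ae (Filter.Eventually.of_forall key)
    _ = (∫⁻ z, ∫⁻ y in Ioi (0:ℝ), ∫⁻ x in Ioi (0:ℝ), wm4 p x y z * Psi A u x y z).toReal := by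
        exact conv3 volume (volume.restrict (Ioi 0)) (volume.restrict (Ioi 0))
          (f := fun z y x => wm4 p x y z * Psi A u x y z)
          (meas_perm (g := fun x y z => wm4 p x y z * Psi A u x y z) hWm)
          (fun z y x => ENNReal.mul_ne_top (χ_ne_top _) (Psi_ne_top A u x y z)) hfin
    _ = (NN A u (wm4 p)).toReal := by rw [← hswap]; rfl

lemma core_identity {A : ℝ → ℝ → ℝ → ℝ} {φ : ℝ → ℝ} {c : ℝ} (hA : Hyps A φ c)
    {u : ℝ → ℝ} (hu : Good u) {p : ℝ} (hp : 0 < p) :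
    (∫ x in Ioi (0:ℝ), ∫ y in Ioi (0:ℝ), ∫ z in Ioc (0:ℝ) x,
        (omg p (y + z) + omg p (x - z) - omg p x - omg p y) * (A x y z * u x * u y))
    = (∫ z in Ioo (0:ℝ) p, ∫ y in Ioo (p - z) p, ∫ x in Ioi z, A x y z * u x * u y)
      - (∫ z in Ioi p, ∫ y in Ioi p, ∫ x in Ioi z, A x y z * u x * u y)
      - (∫ z in Ioo (0:ℝ) p, ∫ y in Ioi (0:ℝ), ∫ x in Ioo p (p + z), A x y z * u x * u y)
      + (∫ z in Ioi p, ∫ y in Ioi (0:ℝ), ∫ x in Ioi (p + z), A x y z * u x * u y) := by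
  rw [Q_repr hA hu hp, T1_repr hA hu hp, T2_repr hA hu hp, T3_repr hA hu hp, T4_repr hA hu hp]
  exact core_nn hA hu hp

lemma good_version {v : ℝ → ℝ} (hnn : ∀ x, 0 ≤ v x)
    (hint : IntegrableOn (fun x => (1 + x) * v x) (Ioi 0)) :
    ∃ u : ℝ → ℝ, Good u ∧ u =ᵐ[volume.restrict (Ioi (0:ℝ))] v := by
  have asm := hint.aestronglyMeasurable
  have hae : (fun x : ℝ => max (asm.mk _ x / (1 + x)) 0) =ᵐ[volume.restrict (Ioi (0:ℝ))] v := by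
    filter_upwards [asm.ae_eq_mk, ae_restrict_mem measurableSet_Ioi] with x hx hmem
    simp only [mem_Ioi] at hmem
    have h1 : (1:ℝ) + x ≠ 0 := by positivity
    rw [← hx, mul_div_cancel_left₀ _ h1, max_eq_left (hnn x)]
  refine ⟨_, ⟨?_, fun x => le_max_right _ _, hint.congr ?_⟩, hae⟩
  · exact (asm.stronglyMeasurable_mk.measurable.div
      (measurable_const.add measurable_id)).max measurable_const
  · filter_upwards [hae] with x hx
    rw [hx]

lemma setIntegral_congr_sub {v v' : ℝ → ℝ}
    (hvv : v =ᵐ[volume.restrict (Ioi (0:ℝ))] v')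
    {S : Set ℝ} (hSsub : S ⊆ Ioi 0) (F : ℝ → ℝ → ℝ) :
    ∫ x in S, F x (v x) = ∫ x in S, F x (v' x) := by
  apply integral_congr_ae
  filter_upwards [ae_restrict_of_ae_restrict_of_subset hSsub hvv] with x hx
  rw [hx]

lemma transfer_T1 {A : ℝ → ℝ → ℝ → ℝ} {v v' : ℝ → ℝ}
    (hvv : v =ᵐ[volume.restrict (Ioi (0:ℝ))] v') {p : ℝ} (hp : 0 < p) :
    (∫ z in Ioo (0:ℝ) p, ∫ y in Ioo (p - z) p, ∫ x in Ioi z, A x y z * v x * v y)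
    = ∫ z in Ioo (0:ℝ) p, ∫ y in Ioo (p - z) p, ∫ x in Ioi z, A x y z * v' x * v' y := by
  apply integral_congr_ae
  filter_upwards [ae_restrict_mem measurableSet_Ioo] with z hz
  rw [mem_Ioo] at hz
  have hy : Ioo (p - z) p ⊆ Ioi (0:ℝ) := fun y hy => lt_trans (by linarith [hz.2] : (0:ℝ) < p - z) hy.1
  calc (∫ y in Ioo (p - z) p, ∫ x in Ioi z, A x y z * v x * v y)
      = ∫ y in Ioo (p - z) p, ∫ x in Ioi z, A x y z * v' x * v y := by
        apply integral_congr_ae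
        apply Filter.Eventually.of_forall
        intro y
        exact setIntegral_congr_sub hvv (fun x hx => lt_trans hz.1 hx)
          (fun x t => A x y z * t * v y)
    _ = ∫ y in Ioo (p - z) p, ∫ x in Ioi z, A x y z * v' x * v' y :=
        setIntegral_congr_sub hvv hy (fun y t => ∫ x in Ioi z, A x y z * v' x * t)

lemma transfer_T2 {A : ℝ → ℝ → ℝ → ℝ} {v v' : ℝ → ℝ}
    (hvv : v =ᵐ[volume.restrict (Ioi (0:ℝ))] v') {p : ℝ} (hp : 0 < p) :
    (∫ z in Ioi p, ∫ y in Ioi p, ∫ x in Ioi z, A x y z * v x * v y)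
    = ∫ z in Ioi p, ∫ y in Ioi p, ∫ x in Ioi z, A x y z * v' x * v' y := by
  apply integral_congr_ae
  filter_upwards [ae_restrict_mem measurableSet_Ioi] with z hz
  rw [mem_Ioi] at hz
  calc (∫ y in Ioi p, ∫ x in Ioi z, A x y z * v x * v y)
      = ∫ y in Ioi p, ∫ x in Ioi z, A x y z * v' x * v y := by
        apply integral_congr_ae
        apply Filter.Eventually.of_forall
        intro y
        exact setIntegral_congr_sub hvv (fun x hx => lt_trans (lt_trans hp hz) hx)
          (fun x t => A x y z * t * v y)
    _ = ∫ y in Ioi p, ∫ x in Ioi z, A x y z * v' x * v' y :=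
        setIntegral_congr_sub hvv (fun y hy => lt_trans hp hy)
          (fun y t => ∫ x in Ioi z, A x y z * v' x * t)

lemma transfer_T3 {A : ℝ → ℝ → ℝ → ℝ} {v v' : ℝ → ℝ}
    (hvv : v =ᵐ[volume.restrict (Ioi (0:ℝ))] v') {p : ℝ} (hp : 0 < p) :
    (∫ z in Ioo (0:ℝ) p, ∫ y in Ioi (0:ℝ), ∫ x in Ioo p (p + z), A x y z * v x * v y)
    = ∫ z in Ioo (0:ℝ) p, ∫ y in Ioi (0:ℝ), ∫ x in Ioo p (p + z), A x y z * v' x * v' y := by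
  apply integral_congr_ae
  filter_upwards [ae_restrict_mem measurableSet_Ioo] with z hz
  calc (∫ y in Ioi (0:ℝ), ∫ x in Ioo p (p + z), A x y z * v x * v y)
      = ∫ y in Ioi (0:ℝ), ∫ x in Ioo p (p + z), A x y z * v' x * v y := by
        apply integral_congr_ae
        apply Filter.Eventually.of_forall
        intro y
        exact setIntegral_congr_sub hvv (fun x hx => lt_trans hp hx.1)
          (fun x t => A x y z * t * v y)
    _ = ∫ y in Ioi (0:ℝ), ∫ x in Ioo p (p + z), A x y z * v' x * v' y :=
        setIntegral_congr_sub hvv (fun y hy => hy)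
          (fun y t => ∫ x in Ioo p (p + z), A x y z * v' x * t)

lemma transfer_T4 {A : ℝ → ℝ → ℝ → ℝ} {v v' : ℝ → ℝ}
    (hvv : v =ᵐ[volume.restrict (Ioi (0:ℝ))] v') {p : ℝ} (hp : 0 < p) :
    (∫ z in Ioi p, ∫ y in Ioi (0:ℝ), ∫ x in Ioi (p + z), A x y z * v x * v y)
    = ∫ z in Ioi p, ∫ y in Ioi (0:ℝ), ∫ x in Ioi (p + z), A x y z * v' x * v' y := by
  apply integral_congr_ae
  filter_upwards [ae_restrict_mem measurableSet_Ioi] with z hz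
  rw [mem_Ioi] at hz
  calc (∫ y in Ioi (0:ℝ), ∫ x in Ioi (p + z), A x y z * v x * v y)
      = ∫ y in Ioi (0:ℝ), ∫ x in Ioi (p + z), A x y z * v' x * v y := by
        apply integral_congr_ae
        apply Filter.Eventually.of_forall
        intro y
        exact setIntegral_congr_sub hvv (fun x hx => by
          rw [mem_Ioi] at hx ⊢; linarith) (fun x t => A x y z * t * v y)
    _ = ∫ y in Ioi (0:ℝ), ∫ x in Ioi (p + z), A x y z * v' x * v' y :=
        setIntegral_congr_sub hvv (fun y hy => hy)
          (fun y t => ∫ x in Ioi (p + z), A x y z * v' x * t)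

lemma transfer_Q {A : ℝ → ℝ → ℝ → ℝ} {v v' : ℝ → ℝ}
    (hvv : v =ᵐ[volume.restrict (Ioi (0:ℝ))] v') (W : ℝ → ℝ → ℝ → ℝ) :
    (∫ x in Ioi (0:ℝ), ∫ y in Ioi (0:ℝ), ∫ z in Ioc (0:ℝ) x, W x y z * (A x y z * v x * v y))
    = ∫ x in Ioi (0:ℝ), ∫ y in Ioi (0:ℝ), ∫ z in Ioc (0:ℝ) x,
        W x y z * (A x y z * v' x * v' y) := by
  calc (∫ x in Ioi (0:ℝ), ∫ y in Ioi (0:ℝ), ∫ z in Ioc (0:ℝ) x, W x y z * (A x y z * v x * v y))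
      = ∫ x in Ioi (0:ℝ), ∫ y in Ioi (0:ℝ), ∫ z in Ioc (0:ℝ) x,
          W x y z * (A x y z * v' x * v y) :=
        setIntegral_congr_sub hvv (fun x hx => hx)
          (fun x t => ∫ y in Ioi (0:ℝ), ∫ z in Ioc (0:ℝ) x, W x y z * (A x y z * t * v y))
    _ = ∫ x in Ioi (0:ℝ), ∫ y in Ioi (0:ℝ), ∫ z in Ioc (0:ℝ) x,
          W x y z * (A x y z * v' x * v' y) := by
        apply integral_congr_ae
        apply Filter.Eventually.of_forall
        intro x
        exact setIntegral_congr_sub hvv (fun y hy => hy)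
          (fun y t => ∫ z in Ioc (0:ℝ) x, W x y z * (A x y z * v' x * t))

section MClass
variable {A : ℝ → ℝ → ℝ → ℝ} {ζin : ℝ → ℝ} {ζ : ℝ → ℝ → ℝ}

lemma asm_zeta (hζ : IsWeakSolution A ζin ζ) {s : ℝ} (hs : 0 ≤ s) :
    AEStronglyMeasurable (ζ s) (volume.restrict (Ioi 0)) :=
  asm_of_weight (hζ.mem s hs).aestronglyMeasurable

lemma integrable_ind_zeta (hζ : IsWeakSolution A ζin ζ) {s : ℝ} (hs : 0 ≤ s)
    {S : Set ℝ} (hS : MeasurableSet S) :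
    IntegrableOn (fun x => S.indicator (fun _ => (1:ℝ)) x * ζ s x) (Ioi 0) := by
  apply (hζ.mem s hs).mono'
  · exact ((measurable_const.indicator hS).aestronglyMeasurable).mul (asm_zeta hζ hs)
  · filter_upwards [ae_restrict_mem measurableSet_Ioi] with x hx
    simp only [mem_Ioi] at hx
    have h0 := hζ.nonneg s hs x
    rw [Real.norm_eq_abs]
    by_cases hmem : x ∈ S
    · rw [Set.indicator_of_mem hmem, one_mul, abs_of_nonneg h0]
      nlinarith
    · rw [Set.indicator_of_notMem hmem, zero_mul, abs_zero]
      nlinarith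

lemma lambda_aemeas (hζ : IsWeakSolution A ζin ζ) {t : ℝ} (ht : 0 ≤ t)
    (U : ℝ → ℝ → ℝ) (hUg : ∀ s, 0 ≤ s → Good (U s))
    (hUae : ∀ s, 0 ≤ s → U s =ᵐ[volume.restrict (Ioi (0:ℝ))] ζ s)
    (K : ℝ × ℝ → ℝ≥0∞) (hK : Measurable K) :
    AEMeasurable (fun s => ∫⁻ x in Ioi (0:ℝ), ∫⁻ y in Ioi (0:ℝ),
      K (x, y) * ENNReal.ofReal (U s x) * ENNReal.ofReal (U s y))
      (volume.restrict (Icc 0 t)) := by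
  set μt := volume.restrict (Icc (0:ℝ) t) with hμt
  have hsae : ∀ᵐ s ∂μt, s ∈ Icc (0:ℝ) t := self_mem_ae_restrict measurableSet_Icc
  set ν : ℝ → Measure ℝ := fun s => (volume.restrict (Ioi 0)).withDensity
      (fun x => ENNReal.ofReal (U s x)) with hν
  have hfinν : ∀ s, 0 ≤ s → ν s univ ≠ ∞ := by
    intro s hs
    rw [hν]
    simp only
    rw [withDensity_apply _ MeasurableSet.univ, Measure.restrict_univ]
    have hb : ∀ᵐ x ∂(volume.restrict (Ioi (0:ℝ))),
        ENNReal.ofReal (U s x) ≤ ENNReal.ofReal ((1 + x) * U s x) := by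
      filter_upwards [ae_restrict_mem measurableSet_Ioi] with x hx
      simp only [mem_Ioi] at hx
      apply ENNReal.ofReal_le_ofReal
      nlinarith [(hUg s hs).nn x]
    exact (lt_of_le_of_lt (lintegral_mono_ae hb)
      (lt_top_iff_ne_top.2 (CI_ne_top (hUg s hs)))).ne
  have hνS : ∀ S : Set ℝ, MeasurableSet S → AEMeasurable (fun s => ν s S) μt := by
    intro S hS
    have hval : ∀ s, 0 ≤ s → ν s S
        = ENNReal.ofReal (∫ x in Ioi (0:ℝ), S.indicator (fun _ => (1:ℝ)) x * ζ s x) := by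
      intro s hs
      rw [hν]
      simp only
      rw [withDensity_apply _ hS]
      rw [ofReal_integral_eq_lintegral_ofReal (integrable_ind_zeta hζ hs hS) ?nn]
      case nn =>
        filter_upwards [] with x
        by_cases hmem : x ∈ S
        · simp [Set.indicator_of_mem hmem, hζ.nonneg s hs x]
        · simp [Set.indicator_of_notMem hmem]
      conv_lhs => rw [← lintegral_indicator hS]
      apply lintegral_congr_ae
      filter_upwards [hUae s hs] with x hx
      by_cases hmem : x ∈ S
      · simp [Set.indicator_of_mem hmem, hx]
      · simp [Set.indicator_of_notMem hmem]
    have hcont := hζ.weakCont (S.indicator (fun _ => 1)) (measurable_const.indicator hS)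
      ⟨1, fun x => by by_cases h : x ∈ S <;> simp [h]⟩
    have ham : AEMeasurable
        (fun s => ∫ x in Ioi (0:ℝ), S.indicator (fun _ => (1:ℝ)) x * ζ s x) μt := by
      have h1 : AEMeasurable _ (volume.restrict (Ici (0:ℝ))) :=
        hcont.aemeasurable measurableSet_Ici
      exact h1.mono_measure (Measure.restrict_mono Icc_subset_Ici_self le_rfl)
    refine ham.ennreal_ofReal.congr ?_
    filter_upwards [hsae] with s hs
    exact (hval s hs.1).symm
  have hfinprod : ∀ s, 0 ≤ s → ((ν s).prod (ν s)) univ ≠ ∞ := by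
    intro s hs
    haveI : IsFiniteMeasure (ν s) := ⟨lt_top_iff_ne_top.2 (hfinν s hs)⟩
    rw [← univ_prod_univ, Measure.prod_prod]
    exact ENNReal.mul_ne_top (hfinν s hs) (hfinν s hs)
  have htotal : AEMeasurable (fun s => ((ν s).prod (ν s)) univ) μt := by
    refine ((hνS univ MeasurableSet.univ).mul (hνS univ MeasurableSet.univ)).congr ?_
    filter_upwards [hsae] with s hs
    haveI : IsFiniteMeasure (ν s) := ⟨lt_top_iff_ne_top.2 (hfinν s hs.1)⟩
    rw [← univ_prod_univ, Measure.prod_prod]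
    rfl
  have hprodE : ∀ E : Set (ℝ × ℝ), MeasurableSet E →
      AEMeasurable (fun s => ((ν s).prod (ν s)) E) μt := by
    refine MeasurableSpace.induction_on_inter generateFrom_prod.symm isPiSystem_prod ?_ ?_ ?_ ?_
    · simp only [measure_empty]
      exact aemeasurable_const
    · rintro E ⟨S, hS, T, hT, rfl⟩
      refine ((hνS S hS).mul (hνS T hT)).congr ?_
      filter_upwards [hsae] with s hs
      haveI : IsFiniteMeasure (ν s) := ⟨lt_top_iff_ne_top.2 (hfinν s hs.1)⟩
      exact (Measure.prod_prod S T).symm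
    · intro E hEm hEP
      refine (htotal.sub hEP).congr ?_
      filter_upwards [hsae] with s hs
      rw [measure_compl hEm
        (ne_top_of_le_ne_top (hfinprod s hs.1) (measure_mono (subset_univ E)))]
      rfl
    · intro f hdisj hfm hfP
      refine (AEMeasurable.ennreal_tsum hfP).congr ?_
      filter_upwards [hsae] with s _
      exact (measure_iUnion hdisj hfm).symm
  have hlint : ∀ K' : ℝ × ℝ → ℝ≥0∞, Measurable K' →
      AEMeasurable (fun s => ∫⁻ q, K' q ∂((ν s).prod (ν s))) μt := by
    intro K' hK'
    refine Measurable.ennreal_induction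
      (motive := fun g => AEMeasurable (fun s => ∫⁻ q, g q ∂((ν s).prod (ν s))) μt)
      ?_ ?_ ?_ hK'
    · intro cc E hE
      simp_rw [lintegral_indicator_const hE]
      exact (hprodE E hE).const_mul cc
    · intro f g _ hf _ hPf hPg
      simp_rw [Pi.add_apply, lintegral_add_left hf]
      exact hPf.add hPg
    · intro f hf hmono hPf
      simp_rw [lintegral_iSup hf hmono]
      exact AEMeasurable.iSup hPf
  refine (hlint K hK).congr ?_
  filter_upwards [hsae] with s hs
  haveI : IsFiniteMeasure (ν s) := ⟨lt_top_iff_ne_top.2 (hfinν s hs.1)⟩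
  rw [lintegral_prod K hK.aemeasurable]
  have hd : Measurable fun x => ENNReal.ofReal (U s x) :=
    ENNReal.measurable_ofReal.comp (hUg s hs.1).meas
  have hx : ∀ x, (∫⁻ y, K (x, y) ∂(ν s))
      = ∫⁻ y in Ioi (0:ℝ), K (x, y) * ENNReal.ofReal (U s y) := by
    intro x
    rw [hν]
    simp only
    have hg : Measurable fun y => K (x, y) :=
      hK.comp (measurable_const.prodMk measurable_id)
    rw [lintegral_withDensity_eq_lintegral_mul _ hd hg]
    apply lintegral_congr
    intro y
    simp only [Pi.mul_apply]
    ring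
  simp_rw [hx]
  rw [hν]
  simp only
  have hg2 : Measurable fun x => ∫⁻ y in Ioi (0:ℝ), K (x, y) * ENNReal.ofReal (U s y) :=
    Measurable.lintegral_prod_right'
      (f := fun q : ℝ × ℝ => K q * ENNReal.ofReal (U s q.2))
      (hK.mul (hd.comp measurable_snd))
  rw [lintegral_withDensity_eq_lintegral_mul _ hd hg2]
  apply lintegral_congr
  intro x
  simp only [Pi.mul_apply]
  calc ENNReal.ofReal (U s x) * ∫⁻ y in Ioi (0:ℝ), K (x, y) * ENNReal.ofReal (U s y)
      = ∫⁻ y in Ioi (0:ℝ), ENNReal.ofReal (U s x) * (K (x, y) * ENNReal.ofReal (U s y)) :=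
        (lintegral_const_mul' _ _ ENNReal.ofReal_ne_top).symm
    _ = ∫⁻ y in Ioi (0:ℝ), K (x, y) * ENNReal.ofReal (U s x) * ENNReal.ofReal (U s y) := by
        apply lintegral_congr
        intro y
        ring

end MClass

lemma NN_eq_Lambda {A : ℝ → ℝ → ℝ → ℝ} (hA0 : ∀ x y z, 0 ≤ A x y z)
    {u : ℝ → ℝ} (hu : Good u) {w : ℝ → ℝ → ℝ → ℝ≥0∞}
    (hwm : Measurable fun q : ℝ×ℝ×ℝ => w q.1 q.2.1 q.2.2) :
    NN A u w = ∫⁻ x in Ioi (0:ℝ), ∫⁻ y in Ioi (0:ℝ),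
      (∫⁻ z, w x y z * ENNReal.ofReal (A x y z))
        * ENNReal.ofReal (u x) * ENNReal.ofReal (u y) := by
  unfold NN
  apply lintegral_congr
  intro x
  apply lintegral_congr
  intro y
  have hpt : ∀ z, w x y z * Psi A u x y z
      = (w x y z * ENNReal.ofReal (A x y z))
        * (ENNReal.ofReal (u x) * ENNReal.ofReal (u y)) := by
    intro z
    unfold Psi
    rw [ENNReal.ofReal_mul (mul_nonneg (hA0 x y z) (hu.nn x)), ENNReal.ofReal_mul (hA0 x y z)]
    ring
  rw [lintegral_congr hpt, lintegral_mul_const' _ _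
    (ENNReal.mul_ne_top ENNReal.ofReal_ne_top ENNReal.ofReal_ne_top)]
  ring

def Kw (A : ℝ → ℝ → ℝ → ℝ) (w : ℝ → ℝ → ℝ → ℝ≥0∞) : ℝ × ℝ → ℝ≥0∞ :=
  fun q => ∫⁻ z, w q.1 q.2 z * ENNReal.ofReal (A q.1 q.2 z)

lemma Kw_meas {A : ℝ → ℝ → ℝ → ℝ}
    (hAm : Measurable fun q : ℝ×ℝ×ℝ => A q.1 q.2.1 q.2.2)
    {w : ℝ → ℝ → ℝ → ℝ≥0∞}
    (hwm : Measurable fun q : ℝ×ℝ×ℝ => w q.1 q.2.1 q.2.2) :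
    Measurable (Kw A w) := by
  have m3 : Measurable fun r : (ℝ×ℝ)×ℝ => ((r.1.1, r.1.2, r.2) : ℝ×ℝ×ℝ) :=
    (measurable_fst.comp measurable_fst).prodMk
      ((measurable_snd.comp measurable_fst).prodMk measurable_snd)
  exact Measurable.lintegral_prod_right'
    (f := fun r : (ℝ×ℝ)×ℝ => w r.1.1 r.1.2 r.2 * ENNReal.ofReal (A r.1.1 r.1.2 r.2))
    ((hwm.comp m3).mul (ENNReal.measurable_ofReal.comp (hAm.comp m3)))

lemma NN_eq_Kw {A : ℝ → ℝ → ℝ → ℝ} (hA0 : ∀ x y z, 0 ≤ A x y z)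
    {u : ℝ → ℝ} (hu : Good u) {w : ℝ → ℝ → ℝ → ℝ≥0∞}
    (hwm : Measurable fun q : ℝ×ℝ×ℝ => w q.1 q.2.1 q.2.2) :
    NN A u w = ∫⁻ x in Ioi (0:ℝ), ∫⁻ y in Ioi (0:ℝ),
      Kw A w (x, y) * ENNReal.ofReal (u x) * ENNReal.ofReal (u y) :=
  NN_eq_Lambda hA0 hu hwm

section Tail
variable {A : ℝ → ℝ → ℝ → ℝ} {ζin : ℝ → ℝ} {ζ : ℝ → ℝ → ℝ}

lemma tail_zero (hζ : IsWeakSolution A ζin ζ)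
    (hζin_nonneg : ∀ x, 0 ≤ ζin x)
    (hζin_int : IntegrableOn (fun x => (1 + x) * ζin x) (Ioi 0))
    {t : ℝ} (ht : 0 ≤ t) :
    Tendsto (fun p : ℝ => p * ∫ x in Ioi p, (ζ t x - ζin x)) atTop (nhds 0) := by
  have hζint : IntegrableOn (ζ t) (Ioi 0) :=
    integrableOn_of_weight (hζ.nonneg t ht) (hζ.mem t ht)
  have hinint : IntegrableOn ζin (Ioi 0) := integrableOn_of_weight hζin_nonneg hζin_int
  have hxζ : IntegrableOn (fun x => x * ζ t x) (Ioi 0) := by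
    have h := (hζ.mem t ht).sub hζint
    apply h.congr
    apply Filter.Eventually.of_forall
    intro x
    simp only [Pi.sub_apply]
    ring
  have hxin : IntegrableOn (fun x => x * ζin x) (Ioi 0) := by
    have h := hζin_int.sub hinint
    apply h.congr
    apply Filter.Eventually.of_forall
    intro x
    simp only [Pi.sub_apply]
    ring
  set g : ℝ → ℝ := fun x => x * ζ t x + x * ζin x with hg
  have hgint : IntegrableOn g (Ioi 0) := hxζ.add hxin
  have hg0 : ∀ᵐ x ∂(volume.restrict (Ioi (0:ℝ))), 0 ≤ g x := by
    filter_upwards [ae_restrict_mem measurableSet_Ioi] with x hx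
    simp only [mem_Ioi] at hx
    have := hζ.nonneg t ht x
    have := hζin_nonneg x
    rw [hg]
    positivity
  -- difference integrable on tails
  have hdiff : IntegrableOn (fun x => ζ t x - ζin x) (Ioi 0) := hζint.sub hinint
  -- tail integral of g tends to 0
  have htail : Tendsto (fun p : ℝ => ∫ x in Ioi p, g x) atTop (nhds 0) := by
    have hdom : Tendsto (fun p : ℝ => ∫ x in Ioi (0:ℝ), (Ioi p).indicator g x) atTop
        (nhds (∫ x in Ioi (0:ℝ), (0:ℝ))) := by
      apply tendsto_integral_filter_of_dominated_convergence (fun x => |g x|)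
      · apply Filter.Eventually.of_forall
        intro p
        exact (hgint.aestronglyMeasurable.indicator measurableSet_Ioi)
      · apply Filter.Eventually.of_forall
        intro p
        apply Filter.Eventually.of_forall
        intro x
        rw [Real.norm_eq_abs]
        by_cases h : x ∈ Ioi p
        · rw [Set.indicator_of_mem h]
        · rw [Set.indicator_of_notMem h, abs_zero]
          exact abs_nonneg _
      · exact hgint.abs
      · apply Filter.Eventually.of_forall
        intro x
        apply Filter.Tendsto.congr' _ tendsto_const_nhds
        filter_upwards [Filter.eventually_gt_atTop x] with p hp
        rw [Set.indicator_of_notMem (by simp only [mem_Ioi]; linarith)]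
    rw [integral_zero] at hdom
    apply hdom.congr'
    filter_upwards [Filter.eventually_gt_atTop (0:ℝ)] with p hp
    rw [setIntegral_indicator measurableSet_Ioi, Ioi_inter_Ioi, sup_eq_right.2 hp.le]
  -- squeeze
  apply squeeze_zero_norm' _ htail
  filter_upwards [Filter.eventually_gt_atTop (0:ℝ)] with p hp
  rw [Real.norm_eq_abs, abs_mul, abs_of_nonneg hp.le]
  have hsub : Ioi p ⊆ Ioi (0:ℝ) := fun x hx => lt_trans hp hx
  have hdiffp : IntegrableOn (fun x => ζ t x - ζin x) (Ioi p) := hdiff.mono_set hsub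
  have hgp : IntegrableOn g (Ioi p) := hgint.mono_set hsub
  calc p * |∫ x in Ioi p, (ζ t x - ζin x)|
      ≤ p * ∫ x in Ioi p, |ζ t x - ζin x| := by
        apply mul_le_mul_of_nonneg_left _ hp.le
        have hno := norm_integral_le_integral_norm (μ := volume.restrict (Ioi p))
          (fun x => ζ t x - ζin x)
        simpa [Real.norm_eq_abs] using hno
    _ = ∫ x in Ioi p, p * |ζ t x - ζin x| := (integral_const_mul p _).symm
    _ ≤ ∫ x in Ioi p, g x := by
        apply integral_mono_ae (hdiffp.abs.const_mul p) hgp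
        filter_upwards [ae_restrict_mem measurableSet_Ioi] with x hx
        simp only [mem_Ioi] at hx
        have h1 := hζ.nonneg t ht x
        have h2 := hζin_nonneg x
        have h3 : |ζ t x - ζin x| ≤ ζ t x + ζin x := by
          rw [abs_le]
          constructor <;> linarith
        have h4 : p * |ζ t x - ζin x| ≤ x * (ζ t x + ζin x) := by
          calc p * |ζ t x - ζin x| ≤ x * |ζ t x - ζin x| :=
                mul_le_mul_of_nonneg_right hx.le (abs_nonneg _)
            _ ≤ x * (ζ t x + ζin x) :=
                mul_le_mul_of_nonneg_left h3 (by linarith)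
        rw [hg]
        calc p * |ζ t x - ζin x| ≤ x * (ζ t x + ζin x) := h4
          _ = x * ζ t x + x * ζin x := by ring

end Tail

section Main
variable {A : ℝ → ℝ → ℝ → ℝ} {φ ζin : ℝ → ℝ} {c : ℝ} {ζ : ℝ → ℝ → ℝ}

theorem main_identity (hA : Hyps A φ c) (hζ : IsWeakSolution A ζin ζ)
    {p : ℝ} (hp : 0 < p) {t : ℝ} (ht : 0 ≤ t) :
    ∫ x in Ioi p, (ζ t x - ζin x) =
      (∫ s in (0:ℝ)..t, ∫ z in Ioo (0:ℝ) p, ∫ y in Ioo (p - z) p, ∫ x in Ioi z,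
          kernelB A ζ s x y z)
      - (∫ s in (0:ℝ)..t, ∫ z in Ioi p, ∫ y in Ioi p, ∫ x in Ioi z,
          kernelB A ζ s x y z)
      - (∫ s in (0:ℝ)..t, ∫ z in Ioo (0:ℝ) p, ∫ y in Ioi (0:ℝ), ∫ x in Ioo p (p + z),
          kernelB A ζ s x y z)
      + (∫ s in (0:ℝ)..t, ∫ z in Ioi p, ∫ y in Ioi (0:ℝ), ∫ x in Ioi (p + z),
          kernelB A ζ s x y z) := by
  classical
  have hch : ∀ s : ℝ, 0 ≤ s → ∃ u, Good u ∧ u =ᵐ[volume.restrict (Ioi (0:ℝ))] ζ s :=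
    fun s hs => good_version (hζ.nonneg s hs) (hζ.mem s hs)
  set U : ℝ → ℝ → ℝ := fun s => if hs : 0 ≤ s then (hch s hs).choose else fun _ => 0 with hUdef
  have hUg : ∀ s, 0 ≤ s → Good (U s) := by
    intro s hs
    simp only [hUdef, dif_pos hs]
    exact (hch s hs).choose_spec.1
  have hUae : ∀ s, 0 ≤ s → U s =ᵐ[volume.restrict (Ioi (0:ℝ))] ζ s := by
    intro s hs
    simp only [hUdef, dif_pos hs]
    exact (hch s hs).choose_spec.2
  set G1 : ℝ → ℝ := fun s => ∫ z in Ioo (0:ℝ) p, ∫ y in Ioo (p - z) p, ∫ x in Ioi z,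
      kernelB A ζ s x y z with hG1
  set G2 : ℝ → ℝ := fun s => ∫ z in Ioi p, ∫ y in Ioi p, ∫ x in Ioi z,
      kernelB A ζ s x y z with hG2
  set G3 : ℝ → ℝ := fun s => ∫ z in Ioo (0:ℝ) p, ∫ y in Ioi (0:ℝ), ∫ x in Ioo p (p + z),
      kernelB A ζ s x y z with hG3
  set G4 : ℝ → ℝ := fun s => ∫ z in Ioi p, ∫ y in Ioi (0:ℝ), ∫ x in Ioi (p + z),
      kernelB A ζ s x y z with hG4
  have hrep1 : ∀ s, 0 ≤ s → G1 s = (NN A (U s) (wm1 p)).toReal := by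
    intro s hs
    simp only [hG1, kernelB]
    rw [transfer_T1 (hUae s hs).symm hp]
    exact T1_repr hA (hUg s hs) hp
  have hrep2 : ∀ s, 0 ≤ s → G2 s = (NN A (U s) (wm2 p)).toReal := by
    intro s hs
    simp only [hG2, kernelB]
    rw [transfer_T2 (hUae s hs).symm hp]
    exact T2_repr hA (hUg s hs) hp
  have hrep3 : ∀ s, 0 ≤ s → G3 s = (NN A (U s) (wm3 p)).toReal := by
    intro s hs
    simp only [hG3, kernelB]
    rw [transfer_T3 (hUae s hs).symm hp]
    exact T3_repr hA (hUg s hs) hp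
  have hrep4 : ∀ s, 0 ≤ s → G4 s = (NN A (U s) (wm4 p)).toReal := by
    intro s hs
    simp only [hG4, kernelB]
    rw [transfer_T4 (hUae s hs).symm hp]
    exact T4_repr hA (hUg s hs) hp
  obtain ⟨C, hC⟩ := hζ.bdd (t + 1) (by linarith)
  have hCI : ∀ s, 0 ≤ s → s ≤ t → CI (U s) ≤ ENNReal.ofReal C := by
    intro s hs hst
    unfold CI
    have h1 : (∫⁻ x in Ioi (0:ℝ), ENNReal.ofReal ((1 + x) * U s x))
        = ∫⁻ x in Ioi (0:ℝ), ENNReal.ofReal ((1 + x) * ζ s x) := by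
      apply lintegral_congr_ae
      filter_upwards [hUae s hs] with x hx
      rw [hx]
    rw [h1, ← ofReal_integral_eq_lintegral_ofReal (hζ.mem s hs) ?pos]
    · exact ENNReal.ofReal_le_ofReal (hC s ⟨hs, by linarith⟩)
    case pos =>
      filter_upwards [ae_restrict_mem measurableSet_Ioi] with x hx
      simp only [mem_Ioi] at hx
      simp only [Pi.zero_apply]
      nlinarith [hζ.nonneg s hs x]
  set Rb : ℝ≥0∞ := ENNReal.ofReal c * (ENNReal.ofReal C * Cphi φ) * ENNReal.ofReal C with hRb
  have hRbne : Rb ≠ ∞ := by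
    rw [hRb]
    exact ENNReal.mul_ne_top (ENNReal.mul_ne_top ENNReal.ofReal_ne_top
      (ENNReal.mul_ne_top ENNReal.ofReal_ne_top (Cphi_ne_top hA))) ENNReal.ofReal_ne_top
  have hbound : ∀ s, 0 ≤ s → s ≤ t → ∀ w : ℝ → ℝ → ℝ → ℝ≥0∞,
      (∀ x y z, w x y z ≤ χ (0 < z)) → NN A (U s) w ≤ Rb := by
    intro s hs hst w hw
    refine le_trans (le_trans (NN_mono hw) (NN_le_master hA (hUg s hs))) ?_
    unfold master
    rw [hRb]
    exact mul_le_mul' (mul_le_mul' le_rfl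
      (mul_le_mul' (hCI s hs hst) le_rfl)) (hCI s hs hst)
  have hII : ∀ (w : ℝ → ℝ → ℝ → ℝ≥0∞),
      (Measurable fun q : ℝ×ℝ×ℝ => w q.1 q.2.1 q.2.2) →
      (∀ x y z, w x y z ≤ χ (0 < z)) →
      ∀ G : ℝ → ℝ, (∀ s, 0 ≤ s → G s = (NN A (U s) w).toReal) →
      IntervalIntegrable G volume 0 t := by
    intro w hwm hwle G hGrep
    rw [intervalIntegrable_iff, uIoc_of_le ht]
    have hlam := lambda_aemeas hζ ht U hUg hUae (Kw A w) (Kw_meas hA.meas hwm)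
    have haem : AEMeasurable G (volume.restrict (Ioc 0 t)) := by
      have h1 : AEMeasurable (fun s => (∫⁻ x in Ioi (0:ℝ), ∫⁻ y in Ioi (0:ℝ),
          Kw A w (x, y) * ENNReal.ofReal (U s x) * ENNReal.ofReal (U s y)).toReal)
          (volume.restrict (Icc 0 t)) :=
        ENNReal.measurable_toReal.comp_aemeasurable hlam
      have h2 := h1.mono_measure (Measure.restrict_mono Ioc_subset_Icc_self le_rfl)
      apply h2.congr
      filter_upwards [ae_restrict_mem measurableSet_Ioc] with s hs
      rw [hGrep s hs.1.le, NN_eq_Kw hA.nonneg (hUg s hs.1.le) hwm]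
    apply Integrable.mono' (g := fun _ => Rb.toReal)
    · exact integrableOn_const measure_Ioc_lt_top.ne
    · exact haem.aestronglyMeasurable
    · filter_upwards [ae_restrict_mem measurableSet_Ioc] with s hs
      rw [Real.norm_eq_abs, hGrep s hs.1.le, abs_of_nonneg ENNReal.toReal_nonneg]
      exact ENNReal.toReal_mono hRbne (hbound s hs.1.le hs.2 w hwle)
  have hI1 : IntervalIntegrable G1 volume 0 t := hII (wm1 p) (wm1_meas p) (wm1_le p) G1 hrep1
  have hI2 : IntervalIntegrable G2 volume 0 t := hII (wm2 p) (wm2_meas p) (wm2_le hp) G2 hrep2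
  have hI3 : IntervalIntegrable G3 volume 0 t := hII (wm3 p) (wm3_meas p) (wm3_le p) G3 hrep3
  have hI4 : IntervalIntegrable G4 volume 0 t := hII (wm4 p) (wm4_meas p) (wm4_le hp) G4 hrep4
  have hper : ∀ s ∈ uIcc (0:ℝ) t,
      (∫ x in Ioi (0:ℝ), ∫ y in Ioi (0:ℝ), ∫ z in Ioc (0:ℝ) x,
        (omg p (y + z) + omg p (x - z) - omg p x - omg p y) * kernelB A ζ s x y z)
      = G1 s - G2 s - G3 s + G4 s := by
    intro s hs
    rw [uIcc_of_le ht] at hs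
    have hs0 : 0 ≤ s := hs.1
    have e0 : (∫ x in Ioi (0:ℝ), ∫ y in Ioi (0:ℝ), ∫ z in Ioc (0:ℝ) x,
          (omg p (y + z) + omg p (x - z) - omg p x - omg p y)
            * (A x y z * ζ s x * ζ s y))
        = ∫ x in Ioi (0:ℝ), ∫ y in Ioi (0:ℝ), ∫ z in Ioc (0:ℝ) x,
          (omg p (y + z) + omg p (x - z) - omg p x - omg p y)
            * (A x y z * U s x * U s y) :=
      transfer_Q (hUae s hs0).symm
        (fun x y z => omg p (y + z) + omg p (x - z) - omg p x - omg p y)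
    simp only [kernelB]
    rw [e0, core_identity hA (hUg s hs0) hp, hrep1 s hs0, hrep2 s hs0, hrep3 s hs0,
      hrep4 s hs0, T1_repr hA (hUg s hs0) hp, T2_repr hA (hUg s hs0) hp,
      T3_repr hA (hUg s hs0) hp, T4_repr hA (hUg s hs0) hp]
  have hform := hζ.weakForm (omg p) (omg_meas p) (omg_bdd p) t ht
  have hLHS : (∫ x in Ioi (0:ℝ), omg p x * (ζ t x - ζin x))
      = ∫ x in Ioi p, (ζ t x - ζin x) := by
    have hpt : ∀ x : ℝ, omg p x * (ζ t x - ζin x)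
        = (Ioi p).indicator (fun x => ζ t x - ζin x) x := by
      intro x
      unfold omg
      by_cases h : x ∈ Ioi p <;> simp [h]
    rw [integral_congr_ae (Filter.Eventually.of_forall hpt),
      setIntegral_indicator measurableSet_Ioi]
    congr 1
    rw [Ioi_inter_Ioi, sup_eq_right.2 hp.le]
  rw [← hLHS, hform]
  have hcongr : weakRHS A ζ (omg p) t = ∫ s in (0:ℝ)..t, (G1 s - G2 s - G3 s + G4 s) := by
    unfold weakRHS
    exact intervalIntegral.integral_congr hper
  rw [hcongr]
  have h12 : IntervalIntegrable (fun s => G1 s - G2 s) volume 0 t := hI1.sub hI2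
  have h123 : IntervalIntegrable (fun s => G1 s - G2 s - G3 s) volume 0 t := h12.sub hI3
  rw [intervalIntegral.integral_add h123 hI4, intervalIntegral.integral_sub h12 hI3,
    intervalIntegral.integral_sub hI1 hI2]

end Main

end CGEDG

end

/-- **Tail identity and vanishing tail for weak solutions (sum-type kernels).**
For every `p > 0` and `t ≥ 0`, `∫_p^∞ [ζ(t,x) − ζin(x)] dx` equals the stated
combination of four quadruple integrals of `ℬ(x,y;z,ζ(s)) = 𝒜(x,y;z) ζ(s,x) ζ(s,y)`,
and moreover `p ∫_p^∞ [ζ(t,x) − ζin(x)] dx → 0` as `p → ∞`. -/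
theorem weak_solution_tail_identity
    (A : ℝ → ℝ → ℝ → ℝ) (φ ζin : ℝ → ℝ) (c : ℝ) (hc : 0 ≤ c)
    (hA_meas : Measurable (fun p : ℝ × ℝ × ℝ => A p.1 p.2.1 p.2.2))
    (hA_nonneg : ∀ x y z, 0 ≤ A x y z)
    (hphys : ∀ x y z, x < z → A x y z = 0)
    (hsum₁ : ∀ x y z, 0 < x → 0 < y → 0 < z → x + y < 1 → A x y z ≤ c * φ z)
    (hsum₂ : ∀ x y z, 0 < x → 0 < y → 0 < z → 1 < x + y → A x y z ≤ c * (x + y) * φ z)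
    (hφ_nonneg : ∀ x, 0 ≤ φ x)
    (hφ_int : IntegrableOn (fun x => (1 + x) * φ x) (Ioi 0))
    (hζin_nonneg : ∀ x, 0 ≤ ζin x)
    (hζin_int : IntegrableOn (fun x => (1 + x) * ζin x) (Ioi 0))
    (ζ : ℝ → ℝ → ℝ) (hζ : IsWeakSolution A ζin ζ) :
    (∀ p : ℝ, 0 < p → ∀ t : ℝ, 0 ≤ t →
      ∫ x in Ioi p, (ζ t x - ζin x) =
        (∫ s in (0:ℝ)..t, ∫ z in Ioo (0:ℝ) p, ∫ y in Ioo (p - z) p, ∫ x in Ioi z,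
            kernelB A ζ s x y z)
        - (∫ s in (0:ℝ)..t, ∫ z in Ioi p, ∫ y in Ioi p, ∫ x in Ioi z,
            kernelB A ζ s x y z)
        - (∫ s in (0:ℝ)..t, ∫ z in Ioo (0:ℝ) p, ∫ y in Ioi (0:ℝ), ∫ x in Ioo p (p + z),
            kernelB A ζ s x y z)
        + (∫ s in (0:ℝ)..t, ∫ z in Ioi p, ∫ y in Ioi (0:ℝ), ∫ x in Ioi (p + z),
            kernelB A ζ s x y z)) ∧
    (∀ t : ℝ, 0 ≤ t →
      Tendsto (fun p : ℝ => p * ∫ x in Ioi p, (ζ t x - ζin x)) atTop (nhds 0)) := by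
  have hA : CGEDG.Hyps A φ c := ⟨hc, hA_meas, hA_nonneg, hsum₁, hsum₂, hφ_nonneg, hφ_int⟩
  constructor
  · intro p hp t ht
    exact CGEDG.main_identity hA hζ hp ht
  · intro t ht
    exact CGEDG.tail_zero hζ hζin_nonneg hζin_int ht
end
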